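/- arXiv:2311.12622 — 6 statements merged into one kernel-verified Lean document; each statement's English description precedes it below -/
import Mathlib

section
/- For any interval [α, β] ⊆ [0, 1], the number of natural numbers n in [N/2, N] with fractional part of √n lying in [α, β] equals (β − α)·N/2 + O(√N), with implied constant absolute. -/
open scoped Classical


lemma fejer_block (α β : ℝ) (h0 : 0 ≤ α) (hab : α ≤ β) (h1 : β ≤ 1) (k : ℕ) (hk : 1 ≤ k) :
    |(((Finset.Ico (k^2) ((k+1)^2)).filter fun n : ℕ =>
        Int.fract (Real.sqrt n) ∈ Set.Icc α β).card : ℝ)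
      - (((k:ℝ)+β)^2 - ((k:ℝ)+α)^2)| ≤ 2 := by
  set L : ℝ := ((k:ℝ)+α)^2 with hL
  set U : ℝ := ((k:ℝ)+β)^2 with hU
  have hk0 : (0:ℝ) ≤ (k:ℝ) := Nat.cast_nonneg k
  have hkα : (0:ℝ) ≤ (k:ℝ) + α := by linarith
  have hkβ : (0:ℝ) ≤ (k:ℝ) + β := by linarith
  have hL0 : 0 ≤ L := by positivity
  have hU0 : 0 ≤ U := by positivity
  have hLU : L ≤ U := by
    apply pow_le_pow_left₀ hkα; linarith
  have hUk1 : U ≤ ((k:ℝ)+1)^2 := by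
    apply pow_le_pow_left₀ hkβ; linarith
  have hcongr : ∀ n ∈ Finset.Ico (k^2) ((k+1)^2),
      (Int.fract (Real.sqrt n) ∈ Set.Icc α β ↔ (L ≤ (n:ℝ) ∧ (n:ℝ) ≤ U)) := by
    intro n hn
    rw [Finset.mem_Ico] at hn
    have hn1 : ((k:ℝ))^2 ≤ (n:ℝ) := by exact_mod_cast hn.1
    have hn2 : (n:ℝ) < ((k:ℝ)+1)^2 := by exact_mod_cast hn.2
    have hs1 : (k:ℝ) ≤ Real.sqrt n := (Real.le_sqrt hk0 (Nat.cast_nonneg n)).2 hn1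
    have hs2 : Real.sqrt n < (k:ℝ) + 1 := (Real.sqrt_lt' (by linarith)).2 hn2
    have hfl : ⌊Real.sqrt n⌋ = (k:ℤ) := by
      rw [Int.floor_eq_iff]; constructor <;> push_cast <;> [exact hs1; exact hs2]
    have hfr : Int.fract (Real.sqrt n) = Real.sqrt n - (k:ℝ) := by
      rw [Int.fract, hfl]; push_cast; ring
    rw [Set.mem_Icc, hfr]
    constructor
    · rintro ⟨ha, hb⟩
      constructor
      · have : (k:ℝ) + α ≤ Real.sqrt n := by linarith
        have := (Real.le_sqrt hkα (Nat.cast_nonneg n)).1 this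
        linarith [this]
      · have hsb : Real.sqrt n ≤ (k:ℝ) + β := by linarith
        have := (Real.sqrt_le_left hkβ).1 hsb
        linarith [this]
    · rintro ⟨ha, hb⟩
      have h1' : (k:ℝ) + α ≤ Real.sqrt n := (Real.le_sqrt hkα (Nat.cast_nonneg n)).2 ha
      have h2' : Real.sqrt n ≤ (k:ℝ) + β := (Real.sqrt_le_left hkβ).2 hb
      exact ⟨by linarith, by linarith⟩
  rw [Finset.filter_congr hcongr]
  set c : ℕ := ⌈L⌉₊ with hc
  set d : ℕ := min ⌊U⌋₊ ((k+1)^2 - 1) with hd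
  have hset : (Finset.Ico (k^2) ((k+1)^2)).filter (fun n : ℕ => L ≤ (n:ℝ) ∧ (n:ℝ) ≤ U)
      = Finset.Icc c d := by
    ext n
    simp only [Finset.mem_filter, Finset.mem_Ico, Finset.mem_Icc]
    constructor
    · rintro ⟨⟨hn1, hn2⟩, hln, hnu⟩
      refine ⟨Nat.ceil_le.2 hln, le_min (Nat.le_floor hnu) (Nat.le_pred_of_lt hn2)⟩
    · rintro ⟨hcn, hnd⟩
      have hln : L ≤ (n:ℝ) := le_trans (Nat.le_ceil L) (by exact_mod_cast hcn)
      have hnfl : n ≤ ⌊U⌋₊ := le_trans hnd (min_le_left _ _)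
      have hnu : (n:ℝ) ≤ U := le_trans (by exact_mod_cast hnfl) (Nat.floor_le hU0)
      have hn2 : n < (k+1)^2 := by
        have hle := le_trans hnd (min_le_right _ _)
        have hp : 0 < (k+1)^2 := Nat.one_le_pow 2 (k+1) (by omega)
        exact lt_of_le_of_lt hle (Nat.sub_lt hp one_pos)
      have hn1 : k^2 ≤ n := by
        have hkr : ((k:ℝ))^2 ≤ (n:ℝ) := by nlinarith
        exact_mod_cast hkr
      exact ⟨⟨hn1, hn2⟩, hln, hnu⟩
  rw [hset, Nat.card_Icc]
  have hUL0 : 0 ≤ U - L := by linarith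
  rcases le_or_gt c d with hcd | hdc
  · have hcard : ((d + 1 - c : ℕ) : ℝ) = (d:ℝ) + 1 - c := by
      have : c ≤ d + 1 := by omega
      push_cast [Nat.cast_sub this]; ring
    rw [hcard]
    have hcL : L ≤ (c:ℝ) := Nat.le_ceil L
    have hcL1 : (c:ℝ) < L + 1 := Nat.ceil_lt_add_one hL0
    have hdU : (d:ℝ) ≤ U := by
      have h1' : (d:ℕ) ≤ ⌊U⌋₊ := min_le_left _ _
      exact le_trans (by exact_mod_cast h1') (Nat.floor_le hU0)
    have hdU1 : U - 1 ≤ (d:ℝ) := by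
      rcases min_cases (⌊U⌋₊) ((k+1)^2 - 1) with ⟨heq, _⟩ | ⟨heq, hle⟩
      · rw [hd, heq]; have := Nat.lt_floor_add_one U; linarith
      · rw [hd, heq]
        have hpos : 1 ≤ (k+1)^2 := Nat.one_le_pow 2 (k+1) (by omega)
        have : (((k+1)^2 - 1 : ℕ) : ℝ) = ((k:ℝ)+1)^2 - 1 := by
          push_cast [Nat.cast_sub hpos]; ring
        rw [this]; linarith
    rw [abs_le]; constructor <;> linarith
  · rw [Nat.sub_eq_zero_of_le (by omega : d + 1 ≤ c)]
    have hUL2 : U - L ≤ 2 := by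
      by_contra hcon
      push_neg at hcon
      have hcle : (c:ℝ) ≤ U := by
        have := Nat.ceil_lt_add_one hL0; linarith
      have h1' : c ≤ ⌊U⌋₊ := Nat.le_floor hcle
      have h2' : c ≤ (k+1)^2 - 1 := by
        have hcr : (c:ℝ) ≤ ((k:ℝ)+1)^2 - 1 := by
          have := Nat.ceil_lt_add_one hL0; linarith
        have : (c:ℝ) ≤ (((k+1)^2 - 1 : ℕ) : ℝ) := by
          have hpos : 1 ≤ (k+1)^2 := Nat.one_le_pow 2 (k+1) (by omega)
          rw [Nat.cast_sub hpos]; push_cast; push_cast at hcr; linarith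
        exact_mod_cast this
      have : c ≤ d := le_min h1' h2'
      omega
    rw [abs_le]; norm_num; constructor <;> linarith

lemma fejer_sumf (α β : ℝ) (n : ℕ) :
    ∑ k ∈ Finset.range n, (((k:ℝ)+β)^2 - ((k:ℝ)+α)^2)
      = (β-α)*((n:ℝ)^2 + (n:ℝ)*(α+β-1)) := by
  induction n with
  | zero => simp
  | succ n ih => rw [Finset.sum_range_succ, ih]; push_cast; ring

lemma fejer_union (a m : ℕ) :
    Finset.Ico (a^2) (m^2)
      = (Finset.Ico a m).biUnion (fun k => Finset.Ico (k^2) ((k+1)^2)) := by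
  ext n
  simp only [Finset.mem_Ico, Finset.mem_biUnion]
  constructor
  · rintro ⟨h1, h2⟩
    refine ⟨Nat.sqrt n, ⟨Nat.le_sqrt'.2 h1, Nat.sqrt_lt'.2 h2⟩, Nat.sqrt_le' n, Nat.lt_succ_sqrt' n⟩
  · rintro ⟨k, ⟨hk1, hk2⟩, hn1, hn2⟩
    exact ⟨le_trans (Nat.pow_le_pow_left hk1 2) hn1,
      lt_of_lt_of_le hn2 (Nat.pow_le_pow_left hk2 2)⟩

lemma fejer_disj (a m : ℕ) : ∀ x ∈ Finset.Ico a m, ∀ y ∈ Finset.Ico a m, x ≠ y →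
    Disjoint (Finset.Ico (x^2) ((x+1)^2)) (Finset.Ico (y^2) ((y+1)^2)) := by
  intro x _ y _ hxy
  rw [Finset.disjoint_left]
  intro n hx hy
  rw [Finset.mem_Ico] at hx hy
  have h1 : x ≤ Nat.sqrt n := Nat.le_sqrt'.2 hx.1
  have h2 : Nat.sqrt n < x + 1 := Nat.sqrt_lt'.2 hx.2
  have h3 : y ≤ Nat.sqrt n := Nat.le_sqrt'.2 hy.1
  have h4 : Nat.sqrt n < y + 1 := Nat.sqrt_lt'.2 hy.2
  omega

set_option maxHeartbeats 2000000 in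
/-- Fejér's counting bound: for any `[α,β] ⊆ [0,1]`, the number of `n ∈ [N/2, N]` with
fractional part of `√n` in `[α,β]` equals `(β−α)·N/2 + O(√N)`, absolute implied constant. -/
theorem stmt3 : ∃ c : ℝ, 0 < c ∧ ∀ (N : ℕ) (α β : ℝ), 0 ≤ α → α ≤ β → β ≤ 1 →
    |(((Finset.Icc 1 N).filter fun n : ℕ =>
        (N : ℝ) / 2 ≤ n ∧ Int.fract (Real.sqrt n) ∈ Set.Icc α β).card : ℝ)
      - (β - α) * N / 2| ≤ c * Real.sqrt N := by
  refine ⟨100, by norm_num, ?_⟩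
  intro N α β h0 hab h1
  set x := Real.sqrt N with hxdef
  have hx0 : 0 ≤ x := Real.sqrt_nonneg _
  have hx2 : x^2 = (N:ℝ) := Real.sq_sqrt (Nat.cast_nonneg N)
  set A := (Finset.Icc 1 N).filter (fun n : ℕ =>
        (N : ℝ) / 2 ≤ n ∧ Int.fract (Real.sqrt n) ∈ Set.Icc α β) with hA
  have hN0 : (0:ℝ) ≤ (N:ℝ) := Nat.cast_nonneg N
  by_cases hbig : x ≤ 100
  · have hcard : (A.card : ℝ) ≤ (N:ℝ) := by
      have h2 : A.card ≤ N := by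
        refine le_trans (Finset.card_filter_le _ _) ?_
        rw [Nat.card_Icc]; omega
      exact_mod_cast h2
    have hC0 : (0:ℝ) ≤ (A.card : ℝ) := Nat.cast_nonneg _
    rw [abs_le]
    constructor <;> nlinarith
  · push_neg at hbig
    set m := Nat.sqrt N with hmdef
    set a := Nat.sqrt (N/2) + 1 with hadef
    -- basic facts
    have hm1 : (m:ℝ)^2 ≤ (N:ℝ) := by exact_mod_cast Nat.sqrt_le' N
    have hm2n : N < (m+1)^2 := by
      have := Nat.lt_succ_sqrt' N; rwa [Nat.succ_eq_add_one] at this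
    have hm2 : (N:ℝ) < ((m:ℝ)+1)^2 := by exact_mod_cast hm2n
    have haNn : N/2 < a^2 := by
      have := Nat.lt_succ_sqrt' (N/2); rwa [Nat.succ_eq_add_one] at this
    have h2a : N < 2 * a^2 :=
      calc N < 2 * (N/2 + 1) := by omega
        _ ≤ 2 * a^2 := Nat.mul_le_mul_left 2 haNn
    have h2aR : (N:ℝ) < 2*(a:ℝ)^2 := by exact_mod_cast h2a
    have ha1 : 1 ≤ a := by omega
    have haR1 : (1:ℝ) ≤ (a:ℝ) := by exact_mod_cast ha1
    have ha2R : ((a:ℝ)-1)^2 ≤ (N:ℝ)/2 := by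
      have h6 : (Nat.sqrt (N/2))^2 ≤ N/2 := Nat.sqrt_le' (N/2)
      have h7 : ((Nat.sqrt (N/2) : ℕ):ℝ)^2 ≤ ((N/2 : ℕ):ℝ) := by exact_mod_cast h6
      have h8 : ((N/2 : ℕ):ℝ) ≤ (N:ℝ)/2 := by
        rw [le_div_iff₀ (by norm_num : (0:ℝ) < 2)]
        exact_mod_cast Nat.div_mul_le_self N 2
      have h9 : ((a:ℝ)-1) = ((Nat.sqrt (N/2) : ℕ):ℝ) := by rw [hadef]; push_cast; ring
      rw [h9]; linarith
    have hmx : (m:ℝ) ≤ x := by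
      rw [show (m:ℝ) = Real.sqrt ((m:ℝ)^2) from (Real.sqrt_sq (Nat.cast_nonneg m)).symm, hxdef]
      exact Real.sqrt_le_sqrt hm1
    have hxm : x < (m:ℝ)+1 := by
      rw [hxdef]
      exact (Real.sqrt_lt' (by positivity)).2 hm2
    have hNbig : (10000:ℝ) < (N:ℝ) := by nlinarith
    have hNbign : 10000 < N := by exact_mod_cast hNbig
    have ham : a ≤ m := by
      by_contra hcon
      push_neg at hcon
      have h5 : m ≤ Nat.sqrt (N/2) := by omega
      have h6 : m^2 ≤ N/2 := Nat.le_sqrt'.1 h5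
      have h6' : m^2 * 2 ≤ N := (Nat.le_div_iff_mul_le (by norm_num)).1 h6
      have h7 : N < m^2 + 2*m + 1 := by
        calc N < (m+1)^2 := hm2n
          _ = m^2 + 2*m + 1 := by ring
      have h9 : 2499 ≤ m := by
        generalize m^2 = B at h6' h7
        omega
      have h10 : 2499 * m ≤ m^2 := by nlinarith
      generalize m^2 = B at h6' h7 h10
      omega
    have hamR : (a:ℝ) ≤ (m:ℝ) := by exact_mod_cast ham
    have hAx : (a:ℝ) ≤ x + 1 := by
      have h9 : (0:ℝ) ≤ (a:ℝ) - 1 := by linarith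
      have h10 : ((a:ℝ)-1) = Real.sqrt (((a:ℝ)-1)^2) := (Real.sqrt_sq h9).symm
      have h11 : Real.sqrt (((a:ℝ)-1)^2) ≤ Real.sqrt ((N:ℝ)/2) := Real.sqrt_le_sqrt ha2R
      have h12 : Real.sqrt ((N:ℝ)/2) ≤ Real.sqrt (N:ℝ) := Real.sqrt_le_sqrt (by linarith)
      have h13 := le_trans h11 h12
      rw [← h10] at h13
      rw [hxdef]
      linarith
    have hDhigh : (m:ℝ)^2 - (a:ℝ)^2 ≤ x^2/2 := by linarith [hm1, h2aR, hx2]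
    have hm2' : (x-1)^2 ≤ (m:ℝ)^2 := by nlinarith [hxm, hmx, hbig, hx0]
    have hDlow : x^2/2 - 4*x - 3 ≤ (m:ℝ)^2 - (a:ℝ)^2 := by nlinarith [hm2', ha2R, hAx, hx2, hbig]
    -- split
    have hsplit := Finset.card_filter_add_card_filter_not
      (s := A) (p := fun n : ℕ => a^2 ≤ n ∧ n < m^2)
    have hQ : A.filter (fun n : ℕ => a^2 ≤ n ∧ n < m^2)
        = (Finset.Ico (a^2) (m^2)).filter
            (fun n : ℕ => Int.fract (Real.sqrt n) ∈ Set.Icc α β) := by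
      ext n
      simp only [hA, Finset.mem_filter, Finset.mem_Icc, Finset.mem_Ico]
      constructor
      · rintro ⟨⟨⟨_, _⟩, _, hf⟩, hq1, hq2⟩; exact ⟨⟨hq1, hq2⟩, hf⟩
      · rintro ⟨⟨hq1, hq2⟩, hf⟩
        have hn1 : 1 ≤ n := le_trans (Nat.one_le_pow 2 a (by omega)) hq1
        have hnN : n ≤ N := le_trans (le_of_lt hq2) (Nat.sqrt_le' N)
        have hhalf : (N:ℝ)/2 ≤ (n:ℝ) := by
          have hcast : (a:ℝ)^2 ≤ (n:ℝ) := by exact_mod_cast hq1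
          linarith
        exact ⟨⟨⟨hn1, hnN⟩, hhalf, hf⟩, hq1, hq2⟩
    have hbdry : (A.filter (fun n : ℕ => ¬(a^2 ≤ n ∧ n < m^2))).card ≤ 2*a + 2*m + 1 := by
      have hsub : A.filter (fun n : ℕ => ¬(a^2 ≤ n ∧ n < m^2))
          ⊆ Finset.Ico ((a-1)^2) (a^2) ∪ Finset.Icc (m^2) N := by
        intro n hn
        simp only [hA, Finset.mem_filter, Finset.mem_Icc] at hn
        obtain ⟨⟨⟨hn1, hnN⟩, hhalf, _⟩, hq⟩ := hn
        rw [Finset.mem_union, Finset.mem_Ico, Finset.mem_Icc]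
        push_neg at hq
        by_cases hc : a^2 ≤ n
        · exact Or.inr ⟨hq hc, hnN⟩
        · push_neg at hc
          left
          refine ⟨?_, hc⟩
          have hr : ((a-1:ℕ):ℝ)^2 ≤ (n:ℝ) := by
            have h9 : ((a-1:ℕ):ℝ) = (a:ℝ)-1 := by
              rw [Nat.cast_sub ha1]; push_cast; ring
            rw [h9]; linarith
          exact_mod_cast hr
      refine le_trans (Finset.card_le_card hsub) ?_
      refine le_trans (Finset.card_union_le _ _) ?_
      rw [Nat.card_Ico, Nat.card_Icc]
      have e1 : a^2 - (a-1)^2 ≤ 2*a := by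
        obtain ⟨b, hb⟩ : ∃ b, a = b+1 := ⟨a-1, by omega⟩
        rw [hb]
        simp only [Nat.add_sub_cancel]
        have hh : (b+1)^2 = b^2+2*b+1 := by ring
        rw [hh]
        generalize b^2 = B
        omega
      have e2 : N + 1 - m^2 ≤ 2*m + 1 := by
        have h7 : N < m^2 + 2*m+1 := by
          calc N < (m+1)^2 := hm2n
            _ = m^2+2*m+1 := by ring
        generalize m^2 = B at h7 ⊢
        omega
      exact le_trans (Nat.add_le_add e1 e2) (by omega)
    have hmain : ((Finset.Ico (a^2) (m^2)).filter
          (fun n : ℕ => Int.fract (Real.sqrt n) ∈ Set.Icc α β)).card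
        = ∑ k ∈ Finset.Ico a m, ((Finset.Ico (k^2) ((k+1)^2)).filter
            (fun n : ℕ => Int.fract (Real.sqrt n) ∈ Set.Icc α β)).card := by
      rw [fejer_union a m, Finset.filter_biUnion]
      exact Finset.card_biUnion (fun u hu v hv huv =>
        Finset.disjoint_filter_filter (fejer_disj a m u hu v hv huv))
    -- real quantities
    set S1 : ℝ := ∑ k ∈ Finset.Ico a m, (((Finset.Ico (k^2) ((k+1)^2)).filter
        (fun n : ℕ => Int.fract (Real.sqrt n) ∈ Set.Icc α β)).card : ℝ) with hS1
    set T : ℝ := ∑ k ∈ Finset.Ico a m, (((k:ℝ)+β)^2 - ((k:ℝ)+α)^2) with hT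
    set E : ℝ := ((A.filter (fun n : ℕ => ¬(a^2 ≤ n ∧ n < m^2))).card : ℝ) with hE
    have hCeq : (A.card : ℝ) = S1 + E := by
      rw [← hsplit, hQ, hmain]
      push_cast
      ring
    have hE0 : 0 ≤ E := Nat.cast_nonneg _
    have hE2 : E ≤ 2*(a:ℝ) + 2*(m:ℝ) + 1 := by
      rw [hE]; exact_mod_cast hbdry
    have hsum1 : |S1 - T| ≤ 2 * ((m:ℝ) - (a:ℝ)) := by
      rw [hS1, hT, ← Finset.sum_sub_distrib]
      refine le_trans (Finset.abs_sum_le_sum_abs _ _) ?_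
      have hterm : ∀ k ∈ Finset.Ico a m,
          |(((Finset.Ico (k^2) ((k+1)^2)).filter
              (fun n : ℕ => Int.fract (Real.sqrt n) ∈ Set.Icc α β)).card : ℝ)
            - (((k:ℝ)+β)^2 - ((k:ℝ)+α)^2)| ≤ 2 := by
        intro k hk
        rw [Finset.mem_Ico] at hk
        exact fejer_block α β h0 hab h1 k (by omega)
      refine le_trans (Finset.sum_le_sum hterm) ?_
      rw [Finset.sum_const, Nat.card_Ico, nsmul_eq_mul]
      rw [Nat.cast_sub ham]
      ring_nf
      linarith
    have hsum2 : T = (β-α)*(((m:ℝ)^2 - (a:ℝ)^2) + ((m:ℝ)-(a:ℝ))*(α+β-1)) := by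
      rw [hT, Finset.sum_Ico_eq_sub _ ham, fejer_sumf, fejer_sumf]
      ring
    -- bounds
    have hv : |((m:ℝ)-(a:ℝ))*(α+β-1)| ≤ x := by
      rw [abs_mul]
      have h1' : |(m:ℝ)-(a:ℝ)| ≤ x := by rw [abs_of_nonneg (by linarith)]; linarith
      have h2' : |α+β-1| ≤ 1 := by rw [abs_le]; constructor <;> linarith
      calc |(m:ℝ)-(a:ℝ)| * |α+β-1| ≤ x * 1 :=
        mul_le_mul h1' h2' (abs_nonneg _) hx0
        _ = x := by ring
    have hD : |(m:ℝ)^2 - (a:ℝ)^2 - x^2/2| ≤ 4*x + 3 := by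
      rw [abs_le]; constructor <;> linarith
    have hTb : |T - (β-α)*x^2/2| ≤ 5*x + 3 := by
      have hexp : T - (β-α)*x^2/2
          = (β-α)*((m:ℝ)^2 - (a:ℝ)^2 - x^2/2) + (β-α)*(((m:ℝ)-(a:ℝ))*(α+β-1)) := by
        rw [hsum2]; ring
      rw [hexp]
      refine le_trans (abs_add_le _ _) ?_
      have hba : |β - α| ≤ 1 := by rw [abs_le]; constructor <;> linarith
      have t1 : |(β-α)*((m:ℝ)^2 - (a:ℝ)^2 - x^2/2)| ≤ 4*x + 3 := by
        rw [abs_mul]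
        calc |β-α| * |(m:ℝ)^2 - (a:ℝ)^2 - x^2/2| ≤ 1 * (4*x+3) :=
          mul_le_mul hba hD (abs_nonneg _) (by norm_num)
          _ = 4*x+3 := by ring
      have t2 : |(β-α)*(((m:ℝ)-(a:ℝ))*(α+β-1))| ≤ x := by
        rw [abs_mul]
        calc |β-α| * |((m:ℝ)-(a:ℝ))*(α+β-1)| ≤ 1 * x :=
          mul_le_mul hba hv (abs_nonneg _) (by norm_num)
          _ = x := by ring
      linarith
    -- final
    obtain ⟨p1, p2⟩ := abs_le.1 hsum1
    obtain ⟨q1, q2⟩ := abs_le.1 hTb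
    rw [hCeq, ← hx2]
    rw [abs_le]
    constructor <;> linarith [p1, p2, q1, q2, hE0, hE2, hmx, hAx, haR1, hbig, hamR]
end

section
/- The sequence (a√n + γ)_{n≥1} is equidistributed modulo 1 for every real a ≠ 0 and every real γ. -/
open scoped Classical

open Filter Finset
open scoped Topology


lemma tendsto_sqrt_nat : Tendsto (fun N : ℕ => Real.sqrt N) atTop atTop := by
  apply tendsto_atTop_atTop.mpr
  intro b
  refine ⟨⌈b⌉₊^2, fun n hn => ?_⟩
  calc b ≤ (⌈b⌉₊ : ℝ) := Nat.le_ceil b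
  _ = Real.sqrt (((⌈b⌉₊:ℝ))^2) := (Real.sqrt_sq (by positivity)).symm
  _ ≤ Real.sqrt n := Real.sqrt_le_sqrt (by exact_mod_cast hn)

lemma tendsto_sqrt_div : Tendsto (fun N : ℕ => Real.sqrt N / N) atTop (𝓝 0) := by
  have h1 : Tendsto (fun N : ℕ => (Real.sqrt N)⁻¹) atTop (𝓝 0) :=
    tendsto_sqrt_nat.inv_tendsto_atTop
  refine h1.congr' ?_
  filter_upwards [eventually_ge_atTop 1] with N hN
  have hN0 : (0:ℝ) < N := by exact_mod_cast Nat.lt_of_lt_of_le Nat.zero_lt_one hN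
  have hs : Real.sqrt N * Real.sqrt N = N := Real.mul_self_sqrt hN0.le
  have hs0 : (0:ℝ) < Real.sqrt N := Real.sqrt_pos.mpr hN0
  field_simp
  rw [sq]; exact hs.symm

lemma tendsto_inv_nat : Tendsto (fun N : ℕ => ((N:ℝ))⁻¹) atTop (𝓝 0) :=
  (tendsto_natCast_atTop_atTop (R := ℝ)).inv_tendsto_atTop

lemma sum_linear (c : ℝ) (K : ℕ) :
    ∑ k ∈ Finset.range K, (2*(k:ℝ)+c) = (K:ℝ)^2 + (c-1)*K := by
  induction K with
  | zero => simp
  | succ n ih => rw [Finset.sum_range_succ, ih]; push_cast; ring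

lemma card_Icc_nat_le (x y : ℝ) (hx : 0 ≤ x) (hy : 0 ≤ y) (hxy : x ≤ y) :
    ((Finset.Icc ⌈x⌉₊ ⌊y⌋₊).card : ℝ) ≤ y - x + 1 := by
  rw [Nat.card_Icc]
  have h1 : (⌊y⌋₊ : ℝ) ≤ y := Nat.floor_le hy
  have h2 : x ≤ (⌈x⌉₊ : ℝ) := Nat.le_ceil x
  rcases le_or_gt (⌈x⌉₊) (⌊y⌋₊ + 1) with h | h
  · have hc : ((⌊y⌋₊ + 1 - ⌈x⌉₊ : ℕ) : ℝ) = (⌊y⌋₊ : ℝ) + 1 - ⌈x⌉₊ := by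
      push_cast [Nat.cast_sub h]; ring
    rw [hc]; linarith
  · have hc : ⌊y⌋₊ + 1 - ⌈x⌉₊ = 0 := by omega
    rw [hc]; push_cast; linarith

lemma le_card_Icc_nat (x y : ℝ) (hx : 0 ≤ x) (hxy : x ≤ y) :
    y - x - 1 ≤ ((Finset.Icc ⌈x⌉₊ ⌊y⌋₊).card : ℝ) := by
  rw [Nat.card_Icc]
  have hy : 0 ≤ y := le_trans hx hxy
  have h1 : y - 1 < (⌊y⌋₊ : ℝ) := Nat.sub_one_lt_floor y
  have h2 : (⌈x⌉₊ : ℝ) < x + 1 := Nat.ceil_lt_add_one hx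
  have h4 : y < (⌊y⌋₊ : ℝ) + 1 := Nat.lt_floor_add_one y
  rcases le_or_gt (⌈x⌉₊) (⌊y⌋₊ + 1) with h | h
  · have hc : ((⌊y⌋₊ + 1 - ⌈x⌉₊ : ℕ) : ℝ) = (⌊y⌋₊ : ℝ) + 1 - ⌈x⌉₊ := by
      push_cast [Nat.cast_sub h]; ring
    rw [hc]; linarith
  · exfalso
    have h3 : (⌊y⌋₊:ℝ) + 2 ≤ (⌈x⌉₊ : ℝ) := by exact_mod_cast h
    linarith

lemma card_intpoints_le (b c : ℝ) (hb : 0 < b) (N : ℕ) :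
    (((Finset.Icc 1 N).filter fun n : ℕ => ∃ m : ℤ, b * Real.sqrt n + c = (m:ℝ)).card : ℝ)
      ≤ b * Real.sqrt N + 1 := by
  classical
  set S := (Finset.Icc 1 N).filter fun n : ℕ => ∃ m : ℤ, b * Real.sqrt n + c = (m:ℝ) with hS
  have hcard : S.card ≤ (Finset.Icc ⌈b + c⌉ ⌊b * Real.sqrt N + c⌋).card := by
    refine Finset.card_le_card_of_injOn (fun n => ⌊b * Real.sqrt n + c⌋) ?_ ?_
    · intro n hn
      rw [hS, Finset.mem_coe, Finset.mem_filter, Finset.mem_Icc] at hn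
      obtain ⟨⟨hn1, hnN⟩, m, hm⟩ := hn
      rw [Finset.mem_coe, Finset.mem_Icc]
      constructor
      · apply Int.ceil_le.mpr
        show (b + c : ℝ) ≤ (⌊b * Real.sqrt n + c⌋ : ℝ)
        rw [hm, Int.floor_intCast, ← hm]
        have : (1:ℝ) ≤ Real.sqrt n := by
          rw [show (1:ℝ) = Real.sqrt 1 by simp]
          exact Real.sqrt_le_sqrt (by exact_mod_cast hn1)
        nlinarith
      · show ⌊b * Real.sqrt n + c⌋ ≤ ⌊b * Real.sqrt N + c⌋
        apply Int.floor_le_floor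
        have : Real.sqrt n ≤ Real.sqrt N := Real.sqrt_le_sqrt (by exact_mod_cast hnN)
        nlinarith
    · intro n hn n' hn' hnn
      have hn2 := Finset.mem_coe.mp hn
      have hn2' := Finset.mem_coe.mp hn'
      rw [hS, Finset.mem_filter] at hn2 hn2'
      obtain ⟨hn0, m, hm⟩ := hn2
      obtain ⟨hn0', m', hm'⟩ := hn2'
      have hnn2 : ⌊b * Real.sqrt n + c⌋ = ⌊b * Real.sqrt n' + c⌋ := hnn
      rw [hm, hm', Int.floor_intCast, Int.floor_intCast] at hnn2
      have heq : b * Real.sqrt n = b * Real.sqrt n' := by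
        rw [hnn2] at hm
        linarith [hm, hm']
      have hsq : Real.sqrt n = Real.sqrt n' := mul_left_cancel₀ hb.ne' heq
      have h1 : ((n:ℝ)) = n' := by
        have := congrArg (fun x => x^2) hsq
        simpa [Real.sq_sqrt, Nat.cast_nonneg] using this
      exact_mod_cast h1
  calc (S.card : ℝ) ≤ ((Finset.Icc ⌈b + c⌉ ⌊b * Real.sqrt N + c⌋).card : ℝ) := by
        exact_mod_cast hcard
  _ ≤ b * Real.sqrt N + 1 := by
      rw [Int.card_Icc]
      rcases le_or_gt (⌈b + c⌉) (⌊b * Real.sqrt N + c⌋ + 1) with h | h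
      · have h0 : (0:ℤ) ≤ ⌊b * Real.sqrt N + c⌋ + 1 - ⌈b + c⌉ := by omega
        have hc : (((⌊b * Real.sqrt N + c⌋ + 1 - ⌈b + c⌉ : ℤ).toNat : ℕ) : ℝ)
            = ((⌊b * Real.sqrt N + c⌋:ℝ) + 1 - ⌈b + c⌉) := by
          rw [show ((((⌊b * Real.sqrt N + c⌋ + 1 - ⌈b + c⌉ : ℤ).toNat : ℕ)) : ℝ)
              = ((((⌊b * Real.sqrt N + c⌋ + 1 - ⌈b + c⌉ : ℤ).toNat : ℤ)) : ℝ) by push_cast; ring,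
            Int.toNat_of_nonneg h0]
          push_cast; ring
        rw [hc]
        have h1 : (⌊b * Real.sqrt N + c⌋ : ℝ) ≤ b * Real.sqrt N + c := Int.floor_le _
        have h2 : (b + c : ℝ) ≤ ⌈b + c⌉ := Int.le_ceil _
        linarith
      · have hc : (⌊b * Real.sqrt N + c⌋ + 1 - ⌈b + c⌉ : ℤ).toNat = 0 := by omega
        rw [hc]
        have : (0:ℝ) ≤ b * Real.sqrt N := by positivity
        push_cast; linarith

noncomputable section EquiAux

variable (a γ α β : ℝ)

/-- block predicate -/
def PPred (n k : ℕ) : Prop :=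
  (k:ℝ) + α ≤ a * Real.sqrt n + γ ∧ a * Real.sqrt n + γ ≤ (k:ℝ) + β

lemma Tsum (ha : 0 < a) (hγ0 : γ < 1) (hα : 0 ≤ α) (hδ : β - α < 1) (N : ℕ) :
    ((Finset.Icc 1 N).filter fun n : ℕ => ∃ k : ℕ, PPred a γ α β n k).card
      = ∑ k ∈ Finset.range (⌊a * Real.sqrt N⌋₊ + 2),
        ((Finset.Icc 1 N).filter fun n : ℕ => PPred a γ α β n k).card := by
  classical
  have key : ∀ j k n : ℕ, j < k → PPred a γ α β n j → PPred a γ α β n k → False := by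
    intro j k n hjk ⟨_, h2⟩ ⟨h3, _⟩
    have h4 : (j:ℝ) + 1 ≤ k := by exact_mod_cast hjk
    linarith
  have hset : ((Finset.Icc 1 N).filter fun n : ℕ => ∃ k : ℕ, PPred a γ α β n k)
      = (Finset.range (⌊a * Real.sqrt N⌋₊ + 2)).biUnion
        (fun k => (Finset.Icc 1 N).filter fun n : ℕ => PPred a γ α β n k) := by
    ext n
    simp only [Finset.mem_biUnion, Finset.mem_filter, Finset.mem_range]
    constructor
    · rintro ⟨hmem, k, hk⟩
      refine ⟨k, ?_, hmem, hk⟩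
      rw [Finset.mem_Icc] at hmem
      have hsn : Real.sqrt n ≤ Real.sqrt N := Real.sqrt_le_sqrt (by exact_mod_cast hmem.2)
      have h1 : (k:ℝ) ≤ a * Real.sqrt n + γ := by linarith [hk.1]
      have h2 : a * Real.sqrt N < (⌊a * Real.sqrt N⌋₊ : ℝ) + 1 := Nat.lt_floor_add_one _
      have h3 : (k:ℝ) < (⌊a * Real.sqrt N⌋₊ : ℝ) + 2 := by
        nlinarith [mul_le_mul_of_nonneg_left hsn ha.le]
      exact_mod_cast h3
    · rintro ⟨k, _, hmem, hk⟩
      exact ⟨hmem, k, hk⟩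
  rw [hset, Finset.card_biUnion]
  intro k hk j hj hkj
  rw [Function.onFun, Finset.disjoint_left]
  intro n hn hn'
  rw [Finset.mem_filter] at hn hn'
  rcases lt_or_gt_of_ne hkj with h | h
  · exact key k j n h hn.2 hn'.2
  · exact key j k n h hn'.2 hn.2

lemma ck_ub (ha : 0 < a) (hγ0 : 0 ≤ γ) (hγ1 : γ < 1) (hα : 0 ≤ α) (hαβ : α ≤ β)
    (hβ : β ≤ 1) (N k : ℕ) :
    (((Finset.Icc 1 N).filter fun n : ℕ => PPred a γ α β n k).card : ℝ)
      ≤ (β - α)/a^2 * (2*(k:ℝ) + (α + β - 2*γ)) + 1 + (if k = 0 then a⁻¹^2 else 0) := by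
  classical
  set w : ℝ := ((k:ℝ) + α - γ)/a with hw
  set z : ℝ := ((k:ℝ) + β - γ)/a with hz
  have hwz : w ≤ z := by
    rw [hw, hz]; apply (div_le_div_iff_of_pos_right ha).mpr; linarith
  set W : ℝ := max w 0 with hW
  set Z : ℝ := max z 0 with hZ
  have hWZ : W ≤ Z := max_le_max hwz le_rfl
  have hW0 : 0 ≤ W := le_max_right _ _
  have hZ0 : 0 ≤ Z := le_max_right _ _
  have hsub : ((Finset.Icc 1 N).filter fun n : ℕ => PPred a γ α β n k)
      ⊆ Finset.Icc ⌈W^2⌉₊ ⌊Z^2⌋₊ := by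
    intro n hn
    rw [Finset.mem_filter] at hn
    obtain ⟨hmem, h1, h2⟩ := hn
    have hzn : Real.sqrt n ≤ z := by
      rw [hz, le_div_iff₀ ha, mul_comm]; linarith
    have hwn : w ≤ Real.sqrt n := by
      rw [hw, div_le_iff₀ ha, mul_comm]; linarith
    have hZn : Real.sqrt n ≤ Z := hzn.trans (le_max_left _ _)
    have hWn : W ≤ Real.sqrt n := max_le hwn (Real.sqrt_nonneg _)
    have hnsq : ((n:ℝ)) = (Real.sqrt n)^2 := (Real.sq_sqrt (Nat.cast_nonneg n)).symm
    rw [Finset.mem_Icc]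
    constructor
    · apply Nat.ceil_le.mpr
      rw [hnsq]
      exact pow_le_pow_left₀ hW0 hWn 2
    · apply Nat.le_floor
      rw [hnsq]
      exact pow_le_pow_left₀ (Real.sqrt_nonneg _) hZn 2
  have hcard : (((Finset.Icc 1 N).filter fun n : ℕ => PPred a γ α β n k).card : ℝ)
      ≤ Z^2 - W^2 + 1 := by
    calc (((Finset.Icc 1 N).filter fun n : ℕ => PPred a γ α β n k).card : ℝ)
        ≤ ((Finset.Icc ⌈W^2⌉₊ ⌊Z^2⌋₊).card : ℝ) := by
          exact_mod_cast Finset.card_le_card hsub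
    _ ≤ Z^2 - W^2 + 1 := card_Icc_nat_le _ _ (by positivity) (by positivity)
          (pow_le_pow_left₀ hW0 hWZ 2)
  have hzw : z^2 - w^2 = (β - α)/a^2 * (2*(k:ℝ) + (α + β - 2*γ)) := by
    rw [hw, hz]; field_simp; ring
  refine hcard.trans ?_
  rcases Nat.eq_zero_or_pos k with hk0 | hk1
  · subst hk0
    rw [if_pos rfl]
    have hwbound : w^2 ≤ a⁻¹^2 := by
      rw [hw]
      rw [div_pow, inv_pow, inv_eq_one_div]
      apply (div_le_div_iff_of_pos_right (by positivity)).mpr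
      push_cast
      nlinarith
    rcases le_or_gt 0 w with hw0 | hw0
    · have hWw : W = w := max_eq_left hw0
      have hZz : Z = z := max_eq_left (hw0.trans hwz)
      rw [hWw, hZz, hzw]; nlinarith [sq_nonneg a⁻¹, hwbound]
    · have hWw : W = 0 := max_eq_right hw0.le
      rcases le_or_gt 0 z with hz0 | hz0
      · have hZz : Z = z := max_eq_left hz0
        rw [hWw, hZz]
        nlinarith [hzw, hwbound]
      · have hZz : Z = 0 := max_eq_right hz0.le
        rw [hWw, hZz]
        nlinarith [hzw, hwbound, sq_nonneg z]
  · have hw0 : 0 < w := by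
      rw [hw]
      apply div_pos ?_ ha
      have : (1:ℝ) ≤ (k:ℝ) := by exact_mod_cast hk1
      linarith
    have hWw : W = w := max_eq_left hw0.le
    have hZz : Z = z := max_eq_left (hw0.le.trans hwz)
    have : ¬ (k = 0) := Nat.pos_iff_ne_zero.mp hk1
    rw [if_neg this]
    rw [hWw, hZz, hzw]; linarith

lemma ck_lb (ha : 0 < a) (hγ0 : 0 ≤ γ) (hγ1 : γ < 1) (hα : 0 ≤ α) (hαβ : α ≤ β)
    (hβ : β ≤ 1) (N k : ℕ) (hk1 : a + 1 ≤ (k:ℝ)) (hk2 : (k:ℝ) + 1 ≤ a * Real.sqrt N) :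
    (β - α)/a^2 * (2*(k:ℝ) + (α + β - 2*γ)) - 1
      ≤ (((Finset.Icc 1 N).filter fun n : ℕ => PPred a γ α β n k).card : ℝ) := by
  classical
  set w : ℝ := ((k:ℝ) + α - γ)/a with hw
  set z : ℝ := ((k:ℝ) + β - γ)/a with hz
  have hwz : w ≤ z := by
    rw [hw, hz]; apply (div_le_div_iff_of_pos_right ha).mpr; linarith
  have hw1 : (1:ℝ) ≤ w := by
    rw [hw, le_div_iff₀ ha]; linarith
  have hzN : z ≤ Real.sqrt N := by
    rw [hz, div_le_iff₀ ha, mul_comm]; linarith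
  have hz0 : 0 ≤ z := by linarith
  have haw : a * w = (k:ℝ) + α - γ := by rw [hw]; field_simp
  have haz : a * z = (k:ℝ) + β - γ := by rw [hz]; field_simp
  have hsub : Finset.Icc ⌈w^2⌉₊ ⌊z^2⌋₊
      ⊆ ((Finset.Icc 1 N).filter fun n : ℕ => PPred a γ α β n k) := by
    intro n hn
    rw [Finset.mem_Icc] at hn
    have hwn : w^2 ≤ (n:ℝ) := by exact_mod_cast Nat.ceil_le.mp hn.1
    have hzn : (n:ℝ) ≤ z^2 := by
      have := hn.2
      rwa [Nat.le_floor_iff (by positivity)] at this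
    have hsq1 : w ≤ Real.sqrt n := by
      calc w = Real.sqrt (w^2) := (Real.sqrt_sq (by linarith)).symm
      _ ≤ Real.sqrt n := Real.sqrt_le_sqrt hwn
    have hsq2 : Real.sqrt n ≤ z := by
      calc Real.sqrt n ≤ Real.sqrt (z^2) := Real.sqrt_le_sqrt hzn
      _ = z := Real.sqrt_sq hz0
    rw [Finset.mem_filter, Finset.mem_Icc]
    refine ⟨⟨?_, ?_⟩, ?_, ?_⟩
    · have : (1:ℝ) ≤ (n:ℝ) := by nlinarith
      exact_mod_cast this
    · have hN2 : z^2 ≤ (N:ℝ) := by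
        have : (Real.sqrt N)^2 = (N:ℝ) := Real.sq_sqrt (Nat.cast_nonneg N)
        nlinarith [Real.sqrt_nonneg N]
      have : (n:ℝ) ≤ (N:ℝ) := le_trans hzn hN2
      exact_mod_cast this
    · have := mul_le_mul_of_nonneg_left hsq1 ha.le
      rw [haw] at this
      linarith
    · have := mul_le_mul_of_nonneg_left hsq2 ha.le
      rw [haz] at this
      linarith
  have hzw : z^2 - w^2 = (β - α)/a^2 * (2*(k:ℝ) + (α + β - 2*γ)) := by
    rw [hw, hz]; field_simp; ring
  calc (β - α)/a^2 * (2*(k:ℝ) + (α + β - 2*γ)) - 1 = z^2 - w^2 - 1 := by rw [hzw]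
  _ ≤ ((Finset.Icc ⌈w^2⌉₊ ⌊z^2⌋₊).card : ℝ) :=
      le_card_Icc_nat _ _ (by positivity) (by nlinarith)
  _ ≤ (((Finset.Icc 1 N).filter fun n : ℕ => PPred a γ α β n k).card : ℝ) := by
      exact_mod_cast Finset.card_le_card hsub

lemma badcard (ha : 0 < a) (N : ℕ) :
    ((Finset.range (⌊a * Real.sqrt N⌋₊ + 2)).filter
      (fun k : ℕ => ¬(a + 1 ≤ (k:ℝ) ∧ (k:ℝ) + 1 ≤ a * Real.sqrt N))).card ≤ ⌊a⌋₊ + 4 := by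
  classical
  set K := ⌊a * Real.sqrt N⌋₊ + 2 with hK
  have hsub : (Finset.range K).filter
      (fun k : ℕ => ¬(a + 1 ≤ (k:ℝ) ∧ (k:ℝ) + 1 ≤ a * Real.sqrt N))
      ⊆ Finset.range (⌊a⌋₊ + 2) ∪ Finset.Ico (K - 2) K := by
    intro k hk
    rw [Finset.mem_filter, Finset.mem_range] at hk
    obtain ⟨hkK, hbad⟩ := hk
    rw [Finset.mem_union, Finset.mem_range, Finset.mem_Ico]
    rcases not_and_or.mp hbad with h | h
    · left
      push_neg at h
      have h2 : a < (⌊a⌋₊ : ℝ) + 1 := Nat.lt_floor_add_one a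
      have : (k:ℝ) < (⌊a⌋₊ : ℝ) + 2 := by linarith
      exact_mod_cast this
    · right
      push_neg at h
      have hKle : (K:ℝ) ≤ a * Real.sqrt N + 2 := by
        rw [hK]
        push_cast
        have : (⌊a * Real.sqrt N⌋₊ : ℝ) ≤ a * Real.sqrt N := Nat.floor_le (by positivity)
        linarith
      have : (K:ℝ) < (k:ℝ) + 3 := by linarith
      have h3 : K < k + 3 := by exact_mod_cast this
      exact ⟨by omega, hkK⟩
  calc ((Finset.range K).filter _).card
      ≤ (Finset.range (⌊a⌋₊ + 2) ∪ Finset.Ico (K - 2) K).card := Finset.card_le_card hsub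
  _ ≤ (Finset.range (⌊a⌋₊ + 2)).card + (Finset.Ico (K - 2) K).card := Finset.card_union_le _ _
  _ ≤ ⌊a⌋₊ + 4 := by
      rw [Finset.card_range, Nat.card_Ico]
      omega

lemma mydiv_le {x y : ℝ} (c : ℝ) (h : x ≤ y) (hc : 0 ≤ c) : x / c ≤ y / c := by
  rcases eq_or_lt_of_le hc with h0 | h0
  · simp [← h0]
  · exact (div_le_div_iff_of_pos_right h0).mpr h

lemma hexp_lim (a : ℝ) (t : ℝ) :
    Tendsto (fun N : ℕ => (a * Real.sqrt N + t)^2 / N) atTop (𝓝 (a^2)) := by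
  have h := ((tendsto_sqrt_div.const_mul (2*a*t)).add (tendsto_inv_nat.const_mul (t^2))).const_add (a^2)
  have h2 : (a:ℝ)^2 + (2*a*t*0 + t^2*0) = a^2 := by ring
  rw [h2] at h
  refine h.congr' ?_
  filter_upwards [eventually_ge_atTop 1] with N hN
  have hN0 : (0:ℝ) < N := by exact_mod_cast Nat.lt_of_lt_of_le Nat.zero_lt_one hN
  have hs : Real.sqrt N * Real.sqrt N = (N:ℝ) := Real.mul_self_sqrt hN0.le
  field_simp
  ring_nf
  nlinarith [hs, sq_nonneg (Real.sqrt N)]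

lemma intpoints_lim (b c : ℝ) (hb : 0 < b) :
    Tendsto (fun N : ℕ => (((Finset.Icc 1 N).filter fun n : ℕ =>
      ∃ m : ℤ, b * Real.sqrt n + c = (m:ℝ)).card : ℝ)/N) atTop (𝓝 0) := by
  have hup : Tendsto (fun N : ℕ => b * (Real.sqrt N / N) + ((N:ℝ))⁻¹) atTop (𝓝 0) := by
    have := (tendsto_sqrt_div.const_mul b).add tendsto_inv_nat
    simpa using this
  apply tendsto_of_tendsto_of_tendsto_of_le_of_le' tendsto_const_nhds hup
  · filter_upwards with N
    positivity
  · filter_upwards [eventually_ge_atTop 1] with N hN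
    have hN0 : (0:ℝ) < N := by exact_mod_cast Nat.lt_of_lt_of_le Nat.zero_lt_one hN
    calc (((Finset.Icc 1 N).filter fun n : ℕ =>
          ∃ m : ℤ, b * Real.sqrt n + c = (m:ℝ)).card : ℝ)/N
        ≤ (b * Real.sqrt N + 1)/N := mydiv_le _ (card_intpoints_le b c hb N) hN0.le
    _ = b * (Real.sqrt N / N) + ((N:ℝ))⁻¹ := by ring

lemma pos_case (a γ α β : ℝ) (ha : 0 < a) (hγ0 : 0 ≤ γ) (hγ1 : γ < 1)
    (hα : 0 ≤ α) (hαβ : α ≤ β) (hβ : β ≤ 1) (hδ : β - α < 1) :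
    Tendsto (fun N : ℕ =>
        (((Finset.Icc 1 N).filter fun n : ℕ =>
          Int.fract (a * Real.sqrt n + γ) ∈ Set.Icc α β).card : ℝ) / N)
      atTop (𝓝 (β - α)) := by
  classical
  set δ := β - α with hδdef
  set c₀ := α + β - 2*γ with hc₀
  set Kn : ℕ → ℕ := fun N => ⌊a * Real.sqrt N⌋₊ + 2 with hKn
  set ck : ℕ → ℕ → ℕ := fun N k => ((Finset.Icc 1 N).filter fun n : ℕ => PPred a γ α β n k).card
    with hck
  set T : ℕ → ℕ := fun N => ((Finset.Icc 1 N).filter fun n : ℕ => ∃ k : ℕ, PPred a γ α β n k).card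
    with hT
  set B : ℕ → ℕ := fun N =>
    ((Finset.Icc 1 N).filter fun n : ℕ => ∃ m : ℤ, a * Real.sqrt n + γ = (m:ℝ)).card with hB
  have ha2 : (0:ℝ) < a^2 := by positivity
  -- upper bound on T
  have hub : ∀ N : ℕ, (T N : ℝ) ≤ δ/a^2 * ((Kn N:ℝ)^2 + (c₀-1)*(Kn N)) + (Kn N) + a⁻¹^2 := by
    intro N
    have h1 : (T N : ℝ) = ∑ k ∈ Finset.range (Kn N), (ck N k : ℝ) := by
      rw [hT, hck]
      push_cast [Tsum a γ α β ha hγ1 hα hδ N]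
      norm_num
      rfl
    rw [h1]
    calc ∑ k ∈ Finset.range (Kn N), (ck N k : ℝ)
        ≤ ∑ k ∈ Finset.range (Kn N),
          (δ/a^2 * (2*(k:ℝ) + c₀) + 1 + (if k = 0 then a⁻¹^2 else 0)) :=
          Finset.sum_le_sum (fun k _ => ck_ub a γ α β ha hγ0 hγ1 hα hαβ hβ N k)
    _ = δ/a^2 * ((Kn N:ℝ)^2 + (c₀-1)*(Kn N)) + (Kn N) + a⁻¹^2 := by
        rw [Finset.sum_add_distrib, Finset.sum_add_distrib, ← Finset.mul_sum, sum_linear,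
          Finset.sum_const, Finset.card_range, Finset.sum_ite_eq' (Finset.range (Kn N)) 0]
        have h0 : (0:ℕ) ∈ Finset.range (Kn N) := by simp [hKn]
        rw [if_pos h0]
        push_cast
        ring
  -- lower bound on T
  have hlb : ∀ N : ℕ, δ/a^2 * ((Kn N:ℝ)^2 + (c₀-1)*(Kn N)) - (Kn N)
      - ((⌊a⌋₊:ℝ)+4) * ((2*(Kn N:ℝ)+2)/a^2) ≤ (T N : ℝ) := by
    intro N
    have h1 : (T N : ℝ) = ∑ k ∈ Finset.range (Kn N), (ck N k : ℝ) := by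
      rw [hT, hck]
      push_cast [Tsum a γ α β ha hγ1 hα hδ N]
      norm_num
      rfl
    rw [h1]
    have hperk : ∀ k ∈ Finset.range (Kn N),
        δ/a^2 * (2*(k:ℝ) + c₀) - 1
          - (if (a + 1 ≤ (k:ℝ) ∧ (k:ℝ) + 1 ≤ a * Real.sqrt N) then 0 else δ/a^2 * (2*(k:ℝ) + c₀))
        ≤ (ck N k : ℝ) := by
      intro k _
      by_cases hg : (a + 1 ≤ (k:ℝ) ∧ (k:ℝ) + 1 ≤ a * Real.sqrt N)
      · rw [if_pos hg]
        have := ck_lb a γ α β ha hγ0 hγ1 hα hαβ hβ N k hg.1 hg.2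
        rw [hck]
        linarith
      · rw [if_neg hg]
        have h2 : (0:ℝ) ≤ (ck N k : ℝ) := Nat.cast_nonneg _
        linarith
    have hsum := Finset.sum_le_sum hperk
    have hbadsum : ∑ k ∈ Finset.range (Kn N),
        (if (a + 1 ≤ (k:ℝ) ∧ (k:ℝ) + 1 ≤ a * Real.sqrt N) then (0:ℝ) else δ/a^2 * (2*(k:ℝ) + c₀))
        ≤ ((⌊a⌋₊:ℝ)+4) * ((2*(Kn N:ℝ)+2)/a^2) := by
      have heq : ∑ k ∈ Finset.range (Kn N),
          (if (a + 1 ≤ (k:ℝ) ∧ (k:ℝ) + 1 ≤ a * Real.sqrt N) then (0:ℝ) else δ/a^2 * (2*(k:ℝ) + c₀))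
          = ∑ k ∈ (Finset.range (Kn N)).filter
              (fun k : ℕ => ¬(a + 1 ≤ (k:ℝ) ∧ (k:ℝ) + 1 ≤ a * Real.sqrt N)),
            δ/a^2 * (2*(k:ℝ) + c₀) := by
        rw [Finset.sum_filter]
        apply Finset.sum_congr rfl
        intro k _
        by_cases h : (a + 1 ≤ (k:ℝ) ∧ (k:ℝ) + 1 ≤ a * Real.sqrt N) <;> simp [h]
      rw [heq]
      have hbound : ∀ k ∈ (Finset.range (Kn N)).filter
          (fun k : ℕ => ¬(a + 1 ≤ (k:ℝ) ∧ (k:ℝ) + 1 ≤ a * Real.sqrt N)),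
          δ/a^2 * (2*(k:ℝ) + c₀) ≤ (2*(Kn N:ℝ)+2)/a^2 := by
        intro k hk
        have hkK : k < Kn N := Finset.mem_range.mp (Finset.mem_of_mem_filter _ hk)
        have hkK' : (k:ℝ) ≤ (Kn N:ℝ) - 1 := by
          have : (k:ℝ) + 1 ≤ (Kn N:ℝ) := by exact_mod_cast hkK
          linarith
        have hc₀2 : c₀ ≤ 2 := by rw [hc₀]; linarith
        have hδ1 : δ ≤ 1 := by rw [hδdef]; linarith
        have hδ0 : 0 ≤ δ := by rw [hδdef]; linarith
        rcases le_or_gt 0 (2*(k:ℝ) + c₀) with hpos | hneg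
        · rw [div_mul_eq_mul_div, div_le_div_iff₀ ha2 ha2]
          have hstep : δ * (2*(k:ℝ)+c₀) ≤ 2*(Kn N:ℝ)+2 := by
            have h4 := mul_le_mul_of_nonneg_right hδ1 hpos
            rw [one_mul] at h4
            linarith
          nlinarith [mul_le_mul_of_nonneg_right hstep ha2.le]
        · have h2 : δ/a^2 * (2*(k:ℝ) + c₀) ≤ 0 :=
            mul_nonpos_of_nonneg_of_nonpos (by positivity) hneg.le
          have h3 : (0:ℝ) ≤ (2*(Kn N:ℝ)+2)/a^2 := by positivity
          linarith
      calc ∑ k ∈ (Finset.range (Kn N)).filter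
            (fun k : ℕ => ¬(a + 1 ≤ (k:ℝ) ∧ (k:ℝ) + 1 ≤ a * Real.sqrt N)),
            δ/a^2 * (2*(k:ℝ) + c₀)
          ≤ ((Finset.range (Kn N)).filter
            (fun k : ℕ => ¬(a + 1 ≤ (k:ℝ) ∧ (k:ℝ) + 1 ≤ a * Real.sqrt N))).card
              • ((2*(Kn N:ℝ)+2)/a^2) := Finset.sum_le_card_nsmul _ _ _ hbound
      _ ≤ ((⌊a⌋₊:ℝ)+4) * ((2*(Kn N:ℝ)+2)/a^2) := by
          rw [nsmul_eq_mul]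
          apply mul_le_mul_of_nonneg_right ?_ (by positivity)
          have := badcard a ha N
          exact_mod_cast Nat.cast_le.mpr this |>.trans (by push_cast; linarith)
    have hsplit : ∑ k ∈ Finset.range (Kn N),
        (δ/a^2 * (2*(k:ℝ) + c₀) - 1
          - (if (a + 1 ≤ (k:ℝ) ∧ (k:ℝ) + 1 ≤ a * Real.sqrt N) then (0:ℝ) else δ/a^2 * (2*(k:ℝ) + c₀)))
        = δ/a^2 * ((Kn N:ℝ)^2 + (c₀-1)*(Kn N)) - (Kn N)
          - ∑ k ∈ Finset.range (Kn N),
            (if (a + 1 ≤ (k:ℝ) ∧ (k:ℝ) + 1 ≤ a * Real.sqrt N) then (0:ℝ) else δ/a^2 * (2*(k:ℝ) + c₀)) := by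
      rw [Finset.sum_sub_distrib, Finset.sum_sub_distrib, ← Finset.mul_sum, sum_linear,
        Finset.sum_const, Finset.card_range]
      push_cast
      ring
    rw [hsplit] at hsum
    linarith
  -- bounds on Kn
  have hK1 : ∀ N : ℕ, a * Real.sqrt N + 1 ≤ (Kn N : ℝ) := by
    intro N
    rw [hKn]
    push_cast
    linarith [Nat.sub_one_lt_floor (a * Real.sqrt N)]
  have hK2 : ∀ N : ℕ, (Kn N : ℝ) ≤ a * Real.sqrt N + 2 := by
    intro N
    rw [hKn]
    push_cast
    have : (⌊a * Real.sqrt N⌋₊ : ℝ) ≤ a * Real.sqrt N := Nat.floor_le (by positivity)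
    linarith
  have hK0 : ∀ N : ℕ, (0:ℝ) ≤ (Kn N : ℝ) := fun N => Nat.cast_nonneg _
  -- limit K/N → 0
  have hKdivN : Tendsto (fun N : ℕ => (Kn N : ℝ)/N) atTop (𝓝 0) := by
    have hup : Tendsto (fun N : ℕ => a * (Real.sqrt N / N) + 2 * ((N:ℝ))⁻¹) atTop (𝓝 0) := by
      have := (tendsto_sqrt_div.const_mul a).add (tendsto_inv_nat.const_mul 2)
      simpa using this
    apply tendsto_of_tendsto_of_tendsto_of_le_of_le' tendsto_const_nhds hup
    · filter_upwards with N
      positivity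
    · filter_upwards [eventually_ge_atTop 1] with N hN
      have hN0 : (0:ℝ) < N := by exact_mod_cast Nat.lt_of_lt_of_le Nat.zero_lt_one hN
      calc (Kn N : ℝ)/N ≤ (a * Real.sqrt N + 2)/N := mydiv_le _ (hK2 N) hN0.le
      _ = a * (Real.sqrt N / N) + 2 * ((N:ℝ))⁻¹ := by ring
  -- limit K²/N → a²
  have hK2divN : Tendsto (fun N : ℕ => (Kn N : ℝ)^2/N) atTop (𝓝 (a^2)) := by
    apply tendsto_of_tendsto_of_tendsto_of_le_of_le' (hexp_lim a 1) (hexp_lim a 2)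
    · filter_upwards with N
      have hnum : (a * Real.sqrt N + 1)^2 ≤ (Kn N : ℝ)^2 :=
        pow_le_pow_left₀ (by positivity) (hK1 N) 2
      exact mydiv_le _ hnum (Nat.cast_nonneg N)
    · filter_upwards with N
      have hnum : (Kn N : ℝ)^2 ≤ (a * Real.sqrt N + 2)^2 :=
        pow_le_pow_left₀ (hK0 N) (hK2 N) 2
      exact mydiv_le _ hnum (Nat.cast_nonneg N)
  -- T/N → δ
  have hTlim : Tendsto (fun N : ℕ => (T N : ℝ)/N) atTop (𝓝 δ) := by
    have hUlim : Tendsto (fun N : ℕ =>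
        δ/a^2 * ((Kn N:ℝ)^2/N + (c₀-1)*((Kn N:ℝ)/N)) + (Kn N:ℝ)/N + a⁻¹^2 * ((N:ℝ))⁻¹)
        atTop (𝓝 δ) := by
      have h := (((hK2divN.add (hKdivN.const_mul (c₀-1))).const_mul (δ/a^2)).add hKdivN).add
        (tendsto_inv_nat.const_mul (a⁻¹^2))
      have hval : δ/a^2 * (a^2 + (c₀-1)*0) + 0 + a⁻¹^2 * 0 = δ := by
        simp only [mul_zero, add_zero, sub_zero, zero_add, zero_div]
        exact div_mul_cancel₀ δ ha2.ne'
      rw [hval] at h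
      exact h
    have hLlim : Tendsto (fun N : ℕ =>
        δ/a^2 * ((Kn N:ℝ)^2/N + (c₀-1)*((Kn N:ℝ)/N)) - (Kn N:ℝ)/N
          - ((⌊a⌋₊:ℝ)+4) * ((2*((Kn N:ℝ)/N)+2*((N:ℝ))⁻¹)/a^2)) atTop (𝓝 δ) := by
      have h := (((hK2divN.add (hKdivN.const_mul (c₀-1))).const_mul (δ/a^2)).sub hKdivN).sub
        ((((hKdivN.const_mul 2).add (tendsto_inv_nat.const_mul 2)).div_const (a^2)).const_mul
          ((⌊a⌋₊:ℝ)+4))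
      have hval : δ/a^2 * (a^2 + (c₀-1)*0) - 0 - ((⌊a⌋₊:ℝ)+4) * ((2*0+2*0)/a^2) = δ := by
        simp only [mul_zero, add_zero, sub_zero, zero_add, zero_div]
        exact div_mul_cancel₀ δ ha2.ne'
      rw [hval] at h
      refine h.congr ?_
      intro N
      ring
    apply tendsto_of_tendsto_of_tendsto_of_le_of_le' hLlim hUlim
    · filter_upwards [eventually_ge_atTop 1] with N hN
      have hN0 : (0:ℝ) < N := by exact_mod_cast Nat.lt_of_lt_of_le Nat.zero_lt_one hN
      have h2 := mydiv_le (N:ℝ) (hlb N) hN0.le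
      have h3 : δ/a^2 * ((Kn N:ℝ)^2/N + (c₀-1)*((Kn N:ℝ)/N)) - (Kn N:ℝ)/N
          - ((⌊a⌋₊:ℝ)+4) * ((2*((Kn N:ℝ)/N)+2*((N:ℝ))⁻¹)/a^2)
          = (δ/a^2 * ((Kn N:ℝ)^2 + (c₀-1)*(Kn N)) - (Kn N)
            - ((⌊a⌋₊:ℝ)+4) * ((2*(Kn N:ℝ)+2)/a^2))/N := by
        ring
      rw [h3]
      exact h2
    · filter_upwards [eventually_ge_atTop 1] with N hN
      have hN0 : (0:ℝ) < N := by exact_mod_cast Nat.lt_of_lt_of_le Nat.zero_lt_one hN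
      have h2 := mydiv_le (N:ℝ) (hub N) hN0.le
      have h3 : δ/a^2 * ((Kn N:ℝ)^2/N + (c₀-1)*((Kn N:ℝ)/N)) + (Kn N:ℝ)/N + a⁻¹^2 * ((N:ℝ))⁻¹
          = (δ/a^2 * ((Kn N:ℝ)^2 + (c₀-1)*(Kn N)) + (Kn N) + a⁻¹^2)/N := by
        ring
      rw [h3]
      exact h2
  -- B/N → 0
  have hBlim : Tendsto (fun N : ℕ => (B N : ℝ)/N) atTop (𝓝 0) := by
    have hup : Tendsto (fun N : ℕ => a * (Real.sqrt N / N) + ((N:ℝ))⁻¹) atTop (𝓝 0) := by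
      have := (tendsto_sqrt_div.const_mul a).add tendsto_inv_nat
      simpa using this
    apply tendsto_of_tendsto_of_tendsto_of_le_of_le' tendsto_const_nhds hup
    · filter_upwards with N
      positivity
    · filter_upwards [eventually_ge_atTop 1] with N hN
      have hN0 : (0:ℝ) < N := by exact_mod_cast Nat.lt_of_lt_of_le Nat.zero_lt_one hN
      calc (B N : ℝ)/N ≤ (a * Real.sqrt N + 1)/N :=
            mydiv_le _ (card_intpoints_le a γ ha N) hN0.le
      _ = a * (Real.sqrt N / N) + ((N:ℝ))⁻¹ := by ring
  -- bridge: fract condition vs ∃k condition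
  have hsub1 : ∀ N : ℕ, ((Finset.Icc 1 N).filter fun n : ℕ =>
      Int.fract (a * Real.sqrt n + γ) ∈ Set.Icc α β)
      ⊆ (Finset.Icc 1 N).filter fun n : ℕ => ∃ k : ℕ, PPred a γ α β n k := by
    intro N n hn
    rw [Finset.mem_filter] at hn ⊢
    obtain ⟨hmem, hf⟩ := hn
    refine ⟨hmem, ?_⟩
    rw [Set.mem_Icc] at hf
    set x := a * Real.sqrt n + γ with hx
    have hx0 : 0 ≤ x := by
      have : 0 ≤ a * Real.sqrt n := mul_nonneg ha.le (Real.sqrt_nonneg _)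
      rw [hx]; linarith
    have hfl : (0:ℤ) ≤ ⌊x⌋ := Int.floor_nonneg.mpr hx0
    have hcast : (((⌊x⌋).toNat : ℕ) : ℝ) = ((⌊x⌋ : ℤ) : ℝ) := by
      exact_mod_cast Int.toNat_of_nonneg hfl
    have hfr := Int.floor_add_fract x
    refine ⟨(⌊x⌋).toNat, ?_, ?_⟩
    · rw [hcast]; linarith [hf.1]
    · rw [hcast]; linarith [hf.2]
  have hsub2 : ∀ N : ℕ, ((Finset.Icc 1 N).filter fun n : ℕ => ∃ k : ℕ, PPred a γ α β n k)
      ⊆ ((Finset.Icc 1 N).filter fun n : ℕ =>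
          Int.fract (a * Real.sqrt n + γ) ∈ Set.Icc α β)
        ∪ ((Finset.Icc 1 N).filter fun n : ℕ => ∃ m : ℤ, a * Real.sqrt n + γ = (m:ℝ)) := by
    intro N n hn
    rw [Finset.mem_filter] at hn
    obtain ⟨hmem, k, h1, h2⟩ := hn
    rw [Finset.mem_union, Finset.mem_filter, Finset.mem_filter]
    set x := a * Real.sqrt n + γ with hx
    by_cases hlt : x < (k:ℝ) + 1
    · left
      refine ⟨hmem, ?_⟩
      rw [Set.mem_Icc]
      have hfl : ⌊x⌋ = (k:ℤ) := by
        apply Int.floor_eq_iff.mpr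
        constructor
        · push_cast; linarith
        · push_cast; linarith
      have hfr := Int.floor_add_fract x
      rw [hfl] at hfr
      push_cast at hfr
      constructor <;> linarith
    · right
      refine ⟨hmem, (k:ℤ) + 1, ?_⟩
      push_neg at hlt
      have : x ≤ (k:ℝ) + 1 := by linarith
      push_cast
      linarith
  -- conclude
  have hCle : ∀ N : ℕ, (((Finset.Icc 1 N).filter fun n : ℕ =>
      Int.fract (a * Real.sqrt n + γ) ∈ Set.Icc α β).card : ℝ) ≤ (T N : ℝ) := by
    intro N
    exact_mod_cast Finset.card_le_card (hsub1 N)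
  have hTle : ∀ N : ℕ, (T N : ℝ) ≤ (((Finset.Icc 1 N).filter fun n : ℕ =>
      Int.fract (a * Real.sqrt n + γ) ∈ Set.Icc α β).card : ℝ) + (B N : ℝ) := by
    intro N
    have h := Finset.card_le_card (hsub2 N)
    have h2 := Finset.card_union_le ((Finset.Icc 1 N).filter fun n : ℕ =>
      Int.fract (a * Real.sqrt n + γ) ∈ Set.Icc α β)
      ((Finset.Icc 1 N).filter fun n : ℕ => ∃ m : ℤ, a * Real.sqrt n + γ = (m:ℝ))
    have h3 := le_trans h h2
    exact_mod_cast h3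
  have hlow : Tendsto (fun N : ℕ => (T N : ℝ)/N - (B N : ℝ)/N) atTop (𝓝 δ) := by
    have := hTlim.sub hBlim
    simpa using this
  apply tendsto_of_tendsto_of_tendsto_of_le_of_le' hlow hTlim
  · filter_upwards [eventually_ge_atTop 1] with N hN
    have hN0 : (0:ℝ) < N := by exact_mod_cast Nat.lt_of_lt_of_le Nat.zero_lt_one hN
    have h2 := mydiv_le (N:ℝ) (show (T N : ℝ) - (B N : ℝ) ≤
      (((Finset.Icc 1 N).filter fun n : ℕ =>
        Int.fract (a * Real.sqrt n + γ) ∈ Set.Icc α β).card : ℝ) from by linarith [hTle N]) hN0.le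
    calc (T N : ℝ)/N - (B N : ℝ)/N = ((T N : ℝ) - (B N : ℝ))/N := by ring
    _ ≤ _ := h2
  · filter_upwards [eventually_ge_atTop 1] with N hN
    have hN0 : (0:ℝ) < N := by exact_mod_cast Nat.lt_of_lt_of_le Nat.zero_lt_one hN
    exact mydiv_le _ (hCle N) hN0.le

end EquiAux

/-- The sequence `(a√n + γ)` is equidistributed modulo 1 for every real `a ≠ 0` and `γ`. -/
theorem stmt5 (a γ : ℝ) (ha : a ≠ 0) :
    ∀ α β : ℝ, 0 ≤ α → α ≤ β → β ≤ 1 →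
      Filter.Tendsto (fun N : ℕ =>
          (((Finset.Icc 1 N).filter fun n : ℕ =>
            Int.fract (a * Real.sqrt n + γ) ∈ Set.Icc α β).card : ℝ) / N)
        Filter.atTop (nhds (β - α)) := by
  intro α β hα hαβ hβ
  classical
  rcases lt_or_ge (β - α) 1 with hδ | hδ'
  · -- main case : β - α < 1
    rcases ha.lt_or_gt with haneg | hapos
    · -- a < 0
      set b := -a with hb
      have hb0 : 0 < b := by rw [hb]; linarith
      set γ₁ := Int.fract (-γ) with hγ₁
      have hpos := pos_case b γ₁ (1-β) (1-α) hb0 (Int.fract_nonneg _) (Int.fract_lt_one _)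
        (by linarith) (by linarith) (by linarith) (by linarith)
      rw [show (1-α) - (1-β) = β - α by ring] at hpos
      have hBlim := intpoints_lim b (-γ) hb0
      -- fract identity for the b-side
      have hfrb : ∀ n : ℕ, Int.fract (b * Real.sqrt n + γ₁) = Int.fract (b * Real.sqrt n + -γ) := by
        intro n
        have h1 : b * Real.sqrt n + -γ = (b * Real.sqrt n + γ₁) + ((⌊-γ⌋ : ℤ) : ℝ) := by
          rw [hγ₁, Int.fract]; push_cast; ring
        rw [h1, Int.fract_add_intCast]
      have himpA : ∀ n : ℕ, Int.fract (a * Real.sqrt n + γ) ∈ Set.Icc α β →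
          (Int.fract (b * Real.sqrt n + γ₁) ∈ Set.Icc (1-β) (1-α)) ∨
          (∃ m : ℤ, b * Real.sqrt n + -γ = (m:ℝ)) := by
        intro n hA
        rw [Set.mem_Icc] at hA
        set y := b * Real.sqrt n + -γ with hy
        have hxy : a * Real.sqrt n + γ = -y := by rw [hy, hb]; ring
        by_cases hy0 : Int.fract y = 0
        · right
          refine ⟨⌊y⌋, ?_⟩
          have := Int.floor_add_fract y
          rw [hy0] at this
          linarith
        · left
          have hfx : Int.fract (a * Real.sqrt n + γ) = 1 - Int.fract y := by
            rw [hxy, Int.fract_neg hy0]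
          rw [hfx] at hA
          rw [hfrb n, Set.mem_Icc, ← hy]
          constructor <;> linarith
      have himpB : ∀ n : ℕ, Int.fract (b * Real.sqrt n + γ₁) ∈ Set.Icc (1-β) (1-α) →
          (Int.fract (a * Real.sqrt n + γ) ∈ Set.Icc α β) ∨
          (∃ m : ℤ, b * Real.sqrt n + -γ = (m:ℝ)) := by
        intro n hB
        rw [hfrb n, Set.mem_Icc] at hB
        set y := b * Real.sqrt n + -γ with hy
        have hxy : a * Real.sqrt n + γ = -y := by rw [hy, hb]; ring
        by_cases hy0 : Int.fract y = 0
        · right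
          refine ⟨⌊y⌋, ?_⟩
          have := Int.floor_add_fract y
          rw [hy0] at this
          linarith
        · left
          have hfx : Int.fract (a * Real.sqrt n + γ) = 1 - Int.fract y := by
            rw [hxy, Int.fract_neg hy0]
          rw [hfx, Set.mem_Icc]
          constructor <;> linarith
      set CA : ℕ → ℕ := fun N => ((Finset.Icc 1 N).filter fun n : ℕ =>
        Int.fract (a * Real.sqrt n + γ) ∈ Set.Icc α β).card with hCA
      set CB : ℕ → ℕ := fun N => ((Finset.Icc 1 N).filter fun n : ℕ =>
        Int.fract (b * Real.sqrt n + γ₁) ∈ Set.Icc (1-β) (1-α)).card with hCB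
      set Bd : ℕ → ℕ := fun N => ((Finset.Icc 1 N).filter fun n : ℕ =>
        ∃ m : ℤ, b * Real.sqrt n + -γ = (m:ℝ)).card with hBd
      have hCle : ∀ N : ℕ, (CA N : ℝ) ≤ (CB N : ℝ) + (Bd N : ℝ) := by
        intro N
        have hsub : ((Finset.Icc 1 N).filter fun n : ℕ =>
            Int.fract (a * Real.sqrt n + γ) ∈ Set.Icc α β)
            ⊆ ((Finset.Icc 1 N).filter fun n : ℕ =>
                Int.fract (b * Real.sqrt n + γ₁) ∈ Set.Icc (1-β) (1-α))
              ∪ ((Finset.Icc 1 N).filter fun n : ℕ => ∃ m : ℤ, b * Real.sqrt n + -γ = (m:ℝ)) := by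
          intro n hn
          rw [Finset.mem_filter] at hn
          rw [Finset.mem_union, Finset.mem_filter, Finset.mem_filter]
          rcases himpA n hn.2 with h | h
          · exact Or.inl ⟨hn.1, h⟩
          · exact Or.inr ⟨hn.1, h⟩
        have := (Finset.card_le_card hsub).trans (Finset.card_union_le _ _)
        exact_mod_cast this
      have hCge : ∀ N : ℕ, (CB N : ℝ) ≤ (CA N : ℝ) + (Bd N : ℝ) := by
        intro N
        have hsub : ((Finset.Icc 1 N).filter fun n : ℕ =>
            Int.fract (b * Real.sqrt n + γ₁) ∈ Set.Icc (1-β) (1-α))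
            ⊆ ((Finset.Icc 1 N).filter fun n : ℕ =>
                Int.fract (a * Real.sqrt n + γ) ∈ Set.Icc α β)
              ∪ ((Finset.Icc 1 N).filter fun n : ℕ => ∃ m : ℤ, b * Real.sqrt n + -γ = (m:ℝ)) := by
          intro n hn
          rw [Finset.mem_filter] at hn
          rw [Finset.mem_union, Finset.mem_filter, Finset.mem_filter]
          rcases himpB n hn.2 with h | h
          · exact Or.inl ⟨hn.1, h⟩
          · exact Or.inr ⟨hn.1, h⟩
        have := (Finset.card_le_card hsub).trans (Finset.card_union_le _ _)
        exact_mod_cast this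
      have hlow : Tendsto (fun N : ℕ => (CB N : ℝ)/N - (Bd N : ℝ)/N) atTop (𝓝 (β - α)) := by
        have h := hpos.sub hBlim
        rw [sub_zero] at h
        exact h
      have hupp : Tendsto (fun N : ℕ => (CB N : ℝ)/N + (Bd N : ℝ)/N) atTop (𝓝 (β - α)) := by
        have h := hpos.add hBlim
        rw [add_zero] at h
        exact h
      apply tendsto_of_tendsto_of_tendsto_of_le_of_le' hlow hupp
      · filter_upwards [eventually_ge_atTop 1] with N hN
        have hN0 : (0:ℝ) < N := by exact_mod_cast Nat.lt_of_lt_of_le Nat.zero_lt_one hN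
        have h2 := mydiv_le (N:ℝ) (show (CB N : ℝ) - (Bd N : ℝ) ≤ (CA N : ℝ) from by
          linarith [hCge N]) hN0.le
        calc (CB N : ℝ)/N - (Bd N : ℝ)/N = ((CB N : ℝ) - (Bd N : ℝ))/N := by ring
        _ ≤ (CA N : ℝ)/N := h2
      · filter_upwards [eventually_ge_atTop 1] with N hN
        have hN0 : (0:ℝ) < N := by exact_mod_cast Nat.lt_of_lt_of_le Nat.zero_lt_one hN
        have h2 := mydiv_le (N:ℝ) (hCle N) hN0.le
        calc (CA N : ℝ)/N ≤ ((CB N : ℝ) + (Bd N : ℝ))/N := h2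
        _ = (CB N : ℝ)/N + (Bd N : ℝ)/N := by ring
    · -- a > 0
      set γ₁ := Int.fract γ with hγ₁
      have hpos := pos_case a γ₁ α β hapos (Int.fract_nonneg _) (Int.fract_lt_one _)
        hα hαβ hβ hδ
      refine hpos.congr ?_
      intro N
      have heq : ((Finset.Icc 1 N).filter fun n : ℕ =>
          Int.fract (a * Real.sqrt n + γ₁) ∈ Set.Icc α β)
          = ((Finset.Icc 1 N).filter fun n : ℕ =>
          Int.fract (a * Real.sqrt n + γ) ∈ Set.Icc α β) := by
        apply Finset.filter_congr
        intro n _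
        have h1 : a * Real.sqrt n + γ = (a * Real.sqrt n + γ₁) + ((⌊γ⌋ : ℤ) : ℝ) := by
          rw [hγ₁, Int.fract]; push_cast; ring
        rw [h1, Int.fract_add_intCast]
      rw [heq]
  · -- trivial case : α = 0 and β = 1
    have hα0 : α = 0 := by linarith
    have hβ1 : β = 1 := by linarith
    subst hα0; subst hβ1
    have hall : ∀ N : ℕ, ((Finset.Icc 1 N).filter fun n : ℕ =>
        Int.fract (a * Real.sqrt n + γ) ∈ Set.Icc (0:ℝ) 1) = Finset.Icc 1 N := by
      intro N
      apply Finset.filter_true_of_mem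
      intro n _
      rw [Set.mem_Icc]
      exact ⟨Int.fract_nonneg _, (Int.fract_lt_one _).le⟩
    have : Tendsto (fun _ : ℕ => (1:ℝ)) atTop (𝓝 ((1:ℝ) - 0)) := by
      norm_num
    refine this.congr' ?_
    filter_upwards [eventually_ge_atTop 1] with N hN
    have hN0 : (0:ℝ) < N := by exact_mod_cast Nat.lt_of_lt_of_le Nat.zero_lt_one hN
    rw [hall N, Nat.card_Icc]
    field_simp
    simp
end

section
/- Let a > 0, γ ∈ ℝ. There is a constant c = c(a, γ) > 0 such that for all N ≥ 1 and every interval [α, β] ⊆ [0, 1], |#{n ∈ [N/2, N] : ((a√n + γ)) ∈ [α, β]} − (β − α)·N/2| ≤ c·√N. -/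
open scoped Classical

lemma count_bounds (M N : ℕ) (x y : ℝ) (h0 : 0 ≤ x) (hxy : x ≤ y)
    (hMx : (M:ℝ) ≤ x) (hyN : y ≤ (N:ℝ)) :
    y - x - 1 ≤ (((Finset.Icc M N).filter fun n : ℕ => x ≤ (n:ℝ) ∧ (n:ℝ) ≤ y).card : ℝ) ∧
    (((Finset.Icc M N).filter fun n : ℕ => x ≤ (n:ℝ) ∧ (n:ℝ) ≤ y).card : ℝ) ≤ y - x + 1 := by
  have h0y : 0 ≤ y := le_trans h0 hxy
  have hset : ((Finset.Icc M N).filter fun n : ℕ => x ≤ (n:ℝ) ∧ (n:ℝ) ≤ y)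
      = Finset.Icc ⌈x⌉₊ ⌊y⌋₊ := by
    ext n
    simp only [Finset.mem_filter, Finset.mem_Icc, Nat.ceil_le, Nat.le_floor_iff h0y]
    constructor
    · rintro ⟨⟨h1, h2⟩, h3, h4⟩; exact ⟨h3, h4⟩
    · rintro ⟨h3, h4⟩
      refine ⟨⟨?_, ?_⟩, h3, h4⟩
      · exact_mod_cast le_trans hMx h3
      · exact_mod_cast le_trans h4 hyN
  rw [hset, Nat.card_Icc]
  have hcx : x ≤ (⌈x⌉₊ : ℝ) := Nat.le_ceil x
  have hcx2 : (⌈x⌉₊ : ℝ) < x + 1 := Nat.ceil_lt_add_one h0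
  have hfy : (⌊y⌋₊ : ℝ) ≤ y := Nat.floor_le h0y
  have hfy2 : y < (⌊y⌋₊ : ℝ) + 1 := Nat.lt_floor_add_one y
  by_cases h : ⌈x⌉₊ ≤ ⌊y⌋₊
  · have hc : ((⌊y⌋₊ + 1 - ⌈x⌉₊ : ℕ) : ℝ) = (⌊y⌋₊ : ℝ) + 1 - (⌈x⌉₊ : ℝ) := by
      have h' : ⌈x⌉₊ ≤ ⌊y⌋₊ + 1 := by omega
      push_cast [h']; ring
    rw [hc]
    constructor <;> linarith
  · push_neg at h
    have hcard : ⌊y⌋₊ + 1 - ⌈x⌉₊ = 0 := by omega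
    rw [hcard]
    have h2 : (⌊y⌋₊ : ℝ) + 1 ≤ (⌈x⌉₊ : ℝ) := by exact_mod_cast h
    constructor
    · push_cast; linarith
    · push_cast; linarith

lemma tele_aux (g : ℤ → ℝ) (k0 : ℤ) (m : ℕ) :
    ∑ k ∈ Finset.Icc k0 (k0 - 1 + m), (g (k+1) - g k) = g (k0 + m) - g k0 := by
  induction m with
  | zero => rw [Finset.Icc_eq_empty (by omega)]; simp
  | succ m ih =>
    have hins : Finset.Icc k0 (k0 - 1 + (m+1:ℕ)) = insert (k0 + m) (Finset.Icc k0 (k0 - 1 + m)) := by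
      ext n; simp only [Finset.mem_Icc, Finset.mem_insert]; push_cast; omega
    rw [hins, Finset.sum_insert (by simp), ih]
    push_cast; ring_nf

lemma tele (g : ℤ → ℝ) (k0 k1 : ℤ) (h : k0 - 1 ≤ k1) :
    ∑ k ∈ Finset.Icc k0 k1, (g (k+1) - g k) = g (k1+1) - g k0 := by
  have h1 : k0 - 1 + ((k1 - k0 + 1).toNat : ℤ) = k1 := by omega
  have h2 : k1 + 1 = k0 + ((k1 - k0 + 1).toNat : ℤ) := by omega
  have h3 := tele_aux g k0 (k1 - k0 + 1).toNat
  rw [h1] at h3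
  rw [h2, h3]

lemma sq_window_bound (a s t x : ℝ) (ha : 0 < a) (hs1 : 1 ≤ s) (ht1 : 1 ≤ t) (hst : s ≤ t)
    (hl : s - 1/a ≤ x) (hr : x ≤ s + 1/a) : |x^2 - s^2| ≤ 2*t/a + 1/a^2 := by
  have ha0 : (0:ℝ) ≤ 1/a := by positivity
  have h1 : |x - s| ≤ 1/a := abs_le.mpr ⟨by linarith, by linarith⟩
  have h2 : |x + s| ≤ 2*t + 1/a := abs_le.mpr ⟨by linarith, by linarith⟩
  calc |x^2 - s^2| = |x - s| * |x + s| := by rw [← abs_mul]; ring_nf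
    _ ≤ (1/a) * (2*t + 1/a) := mul_le_mul h1 h2 (abs_nonneg _) ha0
    _ = 2*t/a + 1/a^2 := by ring

lemma chain5 (A D L V W E r1 r2 r3 r4 r5 : ℝ)
    (h1 : |A - D| ≤ r1) (h2 : |D - L| ≤ r2) (h3 : |L - V| ≤ r3)
    (h4 : |V - W| ≤ r4) (h5 : |W - E| ≤ r5) :
    |A - E| ≤ r1+r2+r3+r4+r5 := by
  have t1 := abs_sub_le A D E
  have t2 := abs_sub_le D L E
  have t3 := abs_sub_le L V E
  have t4 := abs_sub_le V W E
  linarith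

lemma final_bound_pq (a t Kc p q : ℝ) (ha : 0 < a) (hp : p = 1/a) (hq : q = 1/a^2)
    (ht1 : 1 ≤ t) (hKc0 : 0 ≤ Kc) (hKc : Kc ≤ a*t+2) :
    Kc + Kc + (2*(2*t*p+q)) + Kc*q + (2*(2*t*p+q)+1)
      ≤ ((a+2)*(2+q)+8*p+4*q+1)*t := by
  have hP : (0:ℝ) ≤ 2 + q := by rw [hq]; positivity
  have h1 : Kc*(2+q) ≤ (a*t+2)*(2+q) := mul_le_mul_of_nonneg_right hKc hP
  have h2 : (a*t+2)*(2+q) ≤ (a+2)*(2+q)*t := by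
    have h3 := mul_nonneg hP (show (0:ℝ) ≤ 2*t-2 by linarith)
    nlinarith [h3]
  have h4 : 4*q ≤ 4*q*t := by
    have h5 := mul_nonneg (show (0:ℝ) ≤ 4*q by rw [hq]; positivity)
      (show (0:ℝ) ≤ t-1 by linarith)
    nlinarith [h5]
  nlinarith [h1, h2, h4, ht1]

lemma final_bound (a t Kc : ℝ) (ha : 0 < a) (ht1 : 1 ≤ t) (hKc0 : 0 ≤ Kc)
    (hKc : Kc ≤ a*t+2) :
    Kc + Kc + (2*(2*t/a+1/a^2)) + Kc*(1/a^2) + (2*(2*t/a+1/a^2)+1)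
      ≤ ((a+2)*(2+1/a^2)+8/a+4/a^2+1)*t := by
  have h := final_bound_pq a t Kc (1/a) (1/a^2) ha rfl rfl ht1 hKc0 hKc
  calc Kc + Kc + (2*(2*t/a+1/a^2)) + Kc*(1/a^2) + (2*(2*t/a+1/a^2)+1)
      = Kc + Kc + (2*(2*t*(1/a)+1/a^2)) + Kc*(1/a^2) + (2*(2*t*(1/a)+1/a^2)+1) := by ring
    _ ≤ ((a+2)*(2+1/a^2)+8*(1/a)+4*(1/a^2)+1)*t := h
    _ = ((a+2)*(2+1/a^2)+8/a+4/a^2+1)*t := by ring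

set_option maxHeartbeats 4000000 in
/-- Quantitative Fejér: for `a > 0`, `γ ∈ ℝ` there is `c = c(a,γ) > 0` such that for all
`N ≥ 1` and intervals `[α,β] ⊆ [0,1]`,
`|#{n ∈ [N/2,N] : ((a√n+γ)) ∈ [α,β]} − (β−α)N/2| ≤ c√N`. -/
theorem stmt6 (a γ : ℝ) (ha : 0 < a) :
    ∃ c : ℝ, 0 < c ∧ ∀ N : ℕ, 1 ≤ N → ∀ α β : ℝ, 0 ≤ α → α ≤ β → β ≤ 1 →
      |(((Finset.Icc 1 N).filter fun n : ℕ =>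
          (N : ℝ) / 2 ≤ n ∧ Int.fract (a * Real.sqrt n + γ) ∈ Set.Icc α β).card : ℝ)
        - (β - α) * N / 2| ≤ c * Real.sqrt N := by
  refine ⟨(a+2)*(2+1/a^2) + 8/a + 4/a^2 + 1, by positivity, ?_⟩
  intro N hN α β hα hαβ hβ1
  -- basic setup
  set M : ℕ := (N+1)/2 with hMdef
  have hM1 : 1 ≤ M := by omega
  have hMN : M ≤ N := by omega
  have hMhalf : (N:ℝ)/2 ≤ (M:ℝ) ∧ (M:ℝ) ≤ (N:ℝ)/2 + 1/2 := by
    constructor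
    · have : N ≤ 2*M := by omega
      have : (N:ℝ) ≤ 2*M := by exact_mod_cast this
      linarith
    · have : 2*M ≤ N+1 := by omega
      have : (2*M:ℝ) ≤ (N:ℝ)+1 := by exact_mod_cast this
      linarith
  set s : ℝ := Real.sqrt M with hsdef
  set t : ℝ := Real.sqrt N with htdef
  have hs2 : s^2 = (M:ℝ) := Real.sq_sqrt (by positivity)
  have ht2 : t^2 = (N:ℝ) := Real.sq_sqrt (by positivity)
  have hs1 : 1 ≤ s := by
    rw [hsdef, show (1:ℝ) = Real.sqrt 1 by simp]
    exact Real.sqrt_le_sqrt (by exact_mod_cast hM1)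
  have ht1 : 1 ≤ t := by
    rw [htdef, show (1:ℝ) = Real.sqrt 1 by simp]
    exact Real.sqrt_le_sqrt (by exact_mod_cast hN)
  have hst : s ≤ t := Real.sqrt_le_sqrt (by exact_mod_cast hMN)
  -- sqrt facts for n in range
  have hsqrts : ∀ n : ℕ, M ≤ n → s ≤ Real.sqrt n := fun n hn =>
    Real.sqrt_le_sqrt (by exact_mod_cast hn)
  have hsqrtt : ∀ n : ℕ, n ≤ N → Real.sqrt n ≤ t := fun n hn =>
    Real.sqrt_le_sqrt (by exact_mod_cast hn)
  -- key definitions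
  set u : ℤ → ℝ := fun k => ((k:ℝ) + α - γ)/a with hudef
  set v : ℤ → ℝ := fun k => ((k:ℝ) + β - γ)/a with hvdef
  set k0 : ℤ := ⌈a*s+γ-β⌉ with hk0def
  set k1 : ℤ := ⌊a*t+γ-α⌋ with hk1def
  set K : Finset ℤ := Finset.Icc k0 k1 with hKdef
  have hk0 : a*s+γ-β ≤ (k0:ℝ) := Int.le_ceil _
  have hk0' : (k0:ℝ) < a*s+γ-β+1 := Int.ceil_lt_add_one _
  have hk1 : (k1:ℝ) ≤ a*t+γ-α := Int.floor_le _
  have hk1' : a*t+γ-α-1 < (k1:ℝ) := Int.sub_one_lt_floor _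
  have hK01 : k0 - 1 ≤ k1 := by
    have h1 : k0 ≤ ⌊a*s+γ-β⌋ + 1 := Int.ceil_le_floor_add_one _
    have h2 : ⌊a*s+γ-β⌋ ≤ k1 := Int.floor_le_floor
      (by have := mul_le_mul_of_nonneg_left hst ha.le; linarith)
    omega
  -- facts about u, v on K
  have hKfacts : ∀ k ∈ K, s ≤ v k ∧ u k ≤ t ∧ s - 1/a ≤ u k ∧ v k ≤ t + 1/a ∧ u k ≤ v k := by
    intro k hk
    rw [hKdef, Finset.mem_Icc] at hk
    have hklo : a*s+γ-β ≤ (k:ℝ) := le_trans hk0 (by exact_mod_cast hk.1)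
    have hkhi : (k:ℝ) ≤ a*t+γ-α := le_trans (by exact_mod_cast hk.2) hk1
    refine ⟨?_, ?_, ?_, ?_, ?_⟩
    · rw [hvdef]; rw [le_div_iff₀ ha]; linarith
    · rw [hudef]; rw [div_le_iff₀ ha]; linarith
    · rw [hudef]; rw [le_div_iff₀ ha]
      have : (s - 1/a)*a = a*s - 1 := by field_simp
      rw [this]; linarith
    · rw [hvdef]; rw [div_le_iff₀ ha]
      have : (t + 1/a)*a = a*t + 1 := by field_simp
      rw [this]; linarith
    · rw [hudef, hvdef]
      exact (div_le_div_iff_of_pos_right ha).mpr (by linarith)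
  -- the counted set
  set F : Finset ℕ := (Finset.Icc 1 N).filter (fun n : ℕ =>
      (N : ℝ) / 2 ≤ n ∧ Int.fract (a * Real.sqrt n + γ) ∈ Set.Icc α β) with hFdef
  have hFmem : ∀ n : ℕ, n ∈ F ↔ (M ≤ n ∧ n ≤ N ∧
      α ≤ Int.fract (a * Real.sqrt n + γ) ∧ Int.fract (a * Real.sqrt n + γ) ≤ β) := by
    intro n
    rw [hFdef, Finset.mem_filter, Finset.mem_Icc, Set.mem_Icc]
    constructor
    · rintro ⟨⟨h1, h2⟩, h3, h4, h5⟩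
      refine ⟨?_, h2, h4, h5⟩
      have : (N:ℝ) ≤ 2*n := by linarith
      have : N ≤ 2*n := by exact_mod_cast this
      omega
    · rintro ⟨h1, h2, h3, h4⟩
      have hn2 : 2*M ≤ 2*n := by omega
      have : (2*M:ℝ) ≤ 2*n := by exact_mod_cast hn2
      exact ⟨⟨by omega, h2⟩, by linarith [hMhalf.1], h3, h4⟩
  set S : ℤ → Finset ℕ := fun k => (Finset.Icc M N).filter
      (fun n : ℕ => u k ≤ Real.sqrt n ∧ Real.sqrt n ≤ v k) with hSdef
  set T : ℤ → Finset ℕ := fun k => (Finset.Icc M N).filter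
      (fun n : ℕ => u k ≤ Real.sqrt n ∧ Real.sqrt n < v k) with hTdef
  -- Step A : F.card ≤ ∑ S k
  have hFsub : F ⊆ K.biUnion S := by
    intro n hn
    rw [hFmem] at hn
    obtain ⟨hn1, hn2, hn3, hn4⟩ := hn
    set x : ℝ := a * Real.sqrt n + γ with hxdef
    have hfr : Int.fract x = x - (⌊x⌋:ℝ) := rfl
    have hxl : (⌊x⌋:ℝ) + α ≤ x := by rw [hfr] at hn3; linarith
    have hxu : x ≤ (⌊x⌋:ℝ) + β := by rw [hfr] at hn4; linarith
    have hsn : s ≤ Real.sqrt n := hsqrts n hn1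
    have htn : Real.sqrt n ≤ t := hsqrtt n hn2
    have has : a*s ≤ a*Real.sqrt n := mul_le_mul_of_nonneg_left hsn ha.le
    have hat : a*Real.sqrt n ≤ a*t := mul_le_mul_of_nonneg_left htn ha.le
    rw [Finset.mem_biUnion]
    refine ⟨⌊x⌋, ?_, ?_⟩
    · rw [hKdef, Finset.mem_Icc]
      constructor
      · rw [hk0def, Int.ceil_le]
        push_cast
        linarith
      · rw [hk1def, Int.le_floor]
        push_cast
        linarith
    · rw [hSdef]
      simp only [Finset.mem_filter, Finset.mem_Icc]
      refine ⟨⟨hn1, hn2⟩, ?_, ?_⟩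
      · simp only [hudef]
        rw [div_le_iff₀ ha]
        linarith
      · simp only [hvdef]
        rw [le_div_iff₀ ha]
        linarith
  have hstepA : (F.card : ℝ) ≤ ∑ k ∈ K, ((S k).card : ℝ) := by
    have h1 : F.card ≤ ∑ k ∈ K, (S k).card :=
      le_trans (Finset.card_le_card hFsub) Finset.card_biUnion_le
    exact_mod_cast h1
  -- Step B : ∑ S k ≤ F.card + K.card
  have hTF : ∀ k ∈ K, T k ⊆ F := by
    intro k hk n hn
    rw [hTdef, Finset.mem_filter, Finset.mem_Icc] at hn
    obtain ⟨⟨hn1, hn2⟩, hn3, hn4⟩ := hn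
    set x : ℝ := a * Real.sqrt n + γ with hxdef
    have hxl : (k:ℝ) + α ≤ x := by
      simp only [hudef] at hn3
      rw [div_le_iff₀ ha] at hn3
      rw [hxdef]; linarith
    have hxu : x < (k:ℝ) + β := by
      simp only [hvdef] at hn4
      rw [lt_div_iff₀ ha] at hn4
      rw [hxdef]; linarith
    have hfl : ⌊x⌋ = k := by
      rw [Int.floor_eq_iff]
      constructor <;> [linarith; linarith]
    rw [hFmem]
    have hfr : Int.fract x = x - (k:ℝ) := by rw [Int.fract, hfl]
    exact ⟨hn1, hn2, by rw [hfr]; linarith, by rw [hfr]; linarith⟩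
  have hTdisj : ∀ x ∈ K, ∀ y ∈ K, x ≠ y → Disjoint (T x) (T y) := by
    have key : ∀ x y : ℤ, x < y → Disjoint (T x) (T y) := by
      intro x y hxy
      rw [Finset.disjoint_left]
      intro n hnx hny
      rw [hTdef, Finset.mem_filter] at hnx hny
      have h1 : Real.sqrt n < v x := hnx.2.2
      have h2 : u y ≤ Real.sqrt n := hny.2.1
      simp only [hvdef] at h1; simp only [hudef] at h2
      rw [lt_div_iff₀ ha] at h1
      rw [div_le_iff₀ ha] at h2
      have : (y:ℝ) < (x:ℝ) + 1 := by linarith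
      have : y < x + 1 := by exact_mod_cast this
      omega
    intro x hx y hy hxy
    rcases lt_or_gt_of_ne hxy with h | h
    · exact key x y h
    · exact (key y x h).symm
  have hST : ∀ k ∈ K, ((S k).card : ℝ) ≤ ((T k).card : ℝ) + 1 := by
    intro k hk
    have hsub : T k ⊆ S k := by
      intro n hn
      simp only [hTdef, hSdef, Finset.mem_filter] at hn ⊢
      exact ⟨hn.1, hn.2.1, le_of_lt hn.2.2⟩
    have hsd : ((S k) \ (T k)).card ≤ 1 := by
      rw [Finset.card_le_one]
      intro n hn m hm
      rw [Finset.mem_sdiff] at hn hm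
      obtain ⟨hnS, hnT⟩ := hn
      obtain ⟨hmS, hmT⟩ := hm
      simp only [hSdef, hTdef, Finset.mem_filter] at hnS hnT hmS hmT
      have h1 : Real.sqrt n = v k := by
        by_contra hne
        exact hnT ⟨hnS.1, hnS.2.1, lt_of_le_of_ne hnS.2.2 hne⟩
      have h2 : Real.sqrt m = v k := by
        by_contra hne
        exact hmT ⟨hmS.1, hmS.2.1, lt_of_le_of_ne hmS.2.2 hne⟩
      have h3 : Real.sqrt n = Real.sqrt m := by rw [h1, h2]
      have hnm : (n:ℝ) = (m:ℝ) := by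
        have h4 := congrArg (fun z => z^2) h3
        simpa [Real.sq_sqrt (Nat.cast_nonneg n), Real.sq_sqrt (Nat.cast_nonneg m)] using h4
      exact_mod_cast hnm
    have := Finset.card_sdiff_add_card_eq_card hsub
    have hc : (S k).card ≤ (T k).card + 1 := by omega
    exact_mod_cast hc
  have hstepB : ∑ k ∈ K, ((S k).card : ℝ) ≤ (F.card : ℝ) + (K.card : ℝ) := by
    have h1 : ∑ k ∈ K, ((T k).card : ℝ) ≤ (F.card : ℝ) := by
      have he : ∑ k ∈ K, (T k).card = (K.biUnion T).card := (Finset.card_biUnion hTdisj).symm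
      have hsub : K.biUnion T ⊆ F := Finset.biUnion_subset.mpr hTF
      have := Finset.card_le_card hsub
      exact_mod_cast he ▸ this
    calc ∑ k ∈ K, ((S k).card : ℝ) ≤ ∑ k ∈ K, (((T k).card : ℝ) + 1) :=
          Finset.sum_le_sum hST
      _ = ∑ k ∈ K, ((T k).card : ℝ) + (K.card : ℝ) := by
          rw [Finset.sum_add_distrib, Finset.sum_const, nsmul_eq_mul, mul_one]
      _ ≤ (F.card : ℝ) + (K.card : ℝ) := by linarith
  -- Step C : per-k count vs length
  have hstepC : ∀ k ∈ K,
      |((S k).card : ℝ) - ((min t (v k))^2 - (max s (u k))^2)| ≤ 1 := by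
    intro k hk
    obtain ⟨hsv, hut, hul, hvu, huv⟩ := hKfacts k hk
    have hpq : max s (u k) ≤ min t (v k) := max_le (le_min hst hsv) (le_min hut huv)
    have hps : s ≤ max s (u k) := le_max_left _ _
    have hp0 : (0:ℝ) < max s (u k) := lt_of_lt_of_le (by linarith) hps
    have hq0 : (0:ℝ) < min t (v k) := lt_of_lt_of_le hp0 hpq
    have hSeq : S k = (Finset.Icc M N).filter
        (fun n : ℕ => (max s (u k))^2 ≤ (n:ℝ) ∧ (n:ℝ) ≤ (min t (v k))^2) := by
      simp only [hSdef]
      apply Finset.filter_congr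
      intro n hn
      rw [Finset.mem_Icc] at hn
      have hsn : s ≤ Real.sqrt n := hsqrts n hn.1
      have htn : Real.sqrt n ≤ t := hsqrtt n hn.2
      constructor
      · rintro ⟨h1, h2⟩
        constructor
        · have hle : max s (u k) ≤ Real.sqrt n := max_le hsn h1
          calc (max s (u k))^2 ≤ (Real.sqrt n)^2 := pow_le_pow_left₀ hp0.le hle 2
            _ = (n:ℝ) := Real.sq_sqrt (Nat.cast_nonneg n)
        · have h3 : Real.sqrt n ≤ min t (v k) := le_min htn h2
          calc (n:ℝ) = (Real.sqrt n)^2 := (Real.sq_sqrt (Nat.cast_nonneg n)).symm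
            _ ≤ (min t (v k))^2 := pow_le_pow_left₀ (Real.sqrt_nonneg _) h3 2
      · rintro ⟨h1, h2⟩
        constructor
        · have hle : max s (u k) ≤ Real.sqrt n := (Real.le_sqrt hp0.le (Nat.cast_nonneg n)).mpr h1
          exact le_trans (le_max_right _ _) hle
        · have hle : Real.sqrt n ≤ min t (v k) := by
            rw [show min t (v k) = Real.sqrt ((min t (v k))^2) from (Real.sqrt_sq hq0.le).symm]
            exact Real.sqrt_le_sqrt h2
          exact le_trans hle (min_le_right _ _)
    have hMle : (M:ℝ) ≤ (max s (u k))^2 := by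
      rw [← hs2]
      exact pow_le_pow_left₀ (by linarith) hps 2
    have hqle : (min t (v k))^2 ≤ (N:ℝ) := by
      rw [← ht2]
      exact pow_le_pow_left₀ hq0.le (min_le_left _ _) 2
    have hcb := count_bounds M N ((max s (u k))^2) ((min t (v k))^2)
      (by positivity) (pow_le_pow_left₀ hp0.le hpq 2) hMle hqle
    rw [hSeq, abs_le]
    exact ⟨by linarith [hcb.2], by linarith [hcb.1]⟩
  -- card of K
  have hKc : (K.card : ℝ) ≤ a*t + 2 := by
    have h0 : (0:ℤ) ≤ k1 + 1 - k0 := by omega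
    have hcard : K.card = (k1 + 1 - k0).toNat := Int.card_Icc k0 k1
    have hcast : ((K.card : ℤ) : ℝ) = ((k1:ℝ) + 1 - (k0:ℝ)) := by
      rw [hcard, Int.toNat_of_nonneg h0]; push_cast; ring
    have has0 : 0 ≤ a*s := mul_nonneg ha.le (by linarith)
    have : ((K.card : ℤ) : ℝ) ≤ a*t + 2 := by rw [hcast]; linarith
    exact_mod_cast this
  have hKc0 : (0:ℝ) ≤ (K.card : ℝ) := Nat.cast_nonneg _
  -- |D - L| ≤ K.card
  have hDL : |∑ k ∈ K, ((S k).card : ℝ)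
      - ∑ k ∈ K, ((min t (v k))^2 - (max s (u k))^2)| ≤ (K.card : ℝ) := by
    rw [← Finset.sum_sub_distrib]
    calc |∑ k ∈ K, (((S k).card : ℝ) - ((min t (v k))^2 - (max s (u k))^2))|
        ≤ ∑ k ∈ K, |((S k).card : ℝ) - ((min t (v k))^2 - (max s (u k))^2)| :=
          Finset.abs_sum_le_sum_abs _ _
      _ ≤ K.card • (1:ℝ) := Finset.sum_le_card_nsmul _ _ 1 hstepC
      _ = (K.card : ℝ) := by rw [nsmul_eq_mul, mul_one]
  -- boundary sums
  have hE2 : (0:ℝ) ≤ 2*t/a + 1/a^2 := by positivity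
  have hsum1 : ∑ k ∈ K, |(min t (v k))^2 - (v k)^2| ≤ 2*t/a + 1/a^2 := by
    rw [← Finset.sum_filter_add_sum_filter_not K (fun k => t < v k)]
    have hz : ∑ k ∈ K.filter (fun k => ¬ t < v k), |(min t (v k))^2 - (v k)^2| = 0 := by
      apply Finset.sum_eq_zero
      intro k hk
      rw [Finset.mem_filter] at hk
      rw [min_eq_right (not_lt.mp hk.2)]
      simp
    have hc1 : (K.filter (fun k => t < v k)).card ≤ 1 := by
      rw [Finset.card_le_one]
      intro k hk k' hk'
      rw [Finset.mem_filter] at hk hk'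
      have e1 : t*a < (k:ℝ) + β - γ := by
        have := hk.2
        simp only [hvdef] at this
        rwa [lt_div_iff₀ ha] at this
      have e1' : t*a < (k':ℝ) + β - γ := by
        have := hk'.2
        simp only [hvdef] at this
        rwa [lt_div_iff₀ ha] at this
      have e2 : (k:ℝ) ≤ a*t+γ-α := by
        have hh : k ≤ k1 := by
          have := hk.1
          rw [hKdef, Finset.mem_Icc] at this
          exact this.2
        exact le_trans (by exact_mod_cast hh) hk1
      have e2' : (k':ℝ) ≤ a*t+γ-α := by
        have hh : k' ≤ k1 := by
          have := hk'.1
          rw [hKdef, Finset.mem_Icc] at this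
          exact this.2
        exact le_trans (by exact_mod_cast hh) hk1
      have f1 : (k:ℝ) < (k':ℝ) + 1 := by linarith
      have f2 : (k':ℝ) < (k:ℝ) + 1 := by linarith
      have g1 : k < k' + 1 := by exact_mod_cast f1
      have g2 : k' < k + 1 := by exact_mod_cast f2
      omega
    have hb : ∀ k ∈ K.filter (fun k => t < v k),
        |(min t (v k))^2 - (v k)^2| ≤ 2*t/a + 1/a^2 := by
      intro k hk
      rw [Finset.mem_filter] at hk
      obtain ⟨hsv, hut, hul, hvu, huv⟩ := hKfacts k hk.1
      have hlt : t < v k := hk.2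
      rw [min_eq_left hlt.le]
      have ha0 : (0:ℝ) ≤ 1/a := by positivity
      have := sq_window_bound a t t (v k) ha ht1 ht1 le_rfl (by linarith) (by linarith)
      calc |t^2 - (v k)^2| = |(v k)^2 - t^2| := abs_sub_comm _ _
        _ ≤ 2*t/a + 1/a^2 := this
    calc ∑ k ∈ K.filter (fun k => t < v k), |(min t (v k))^2 - (v k)^2|
          + ∑ k ∈ K.filter (fun k => ¬ t < v k), |(min t (v k))^2 - (v k)^2|
        = ∑ k ∈ K.filter (fun k => t < v k), |(min t (v k))^2 - (v k)^2| := by rw [hz, add_zero]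
      _ ≤ (K.filter (fun k => t < v k)).card • (2*t/a + 1/a^2) :=
          Finset.sum_le_card_nsmul _ _ _ hb
      _ ≤ 1 • (2*t/a + 1/a^2) := nsmul_le_nsmul_left hE2 hc1
      _ = 2*t/a + 1/a^2 := one_nsmul _
  have hsum2 : ∑ k ∈ K, |(max s (u k))^2 - (u k)^2| ≤ 2*t/a + 1/a^2 := by
    rw [← Finset.sum_filter_add_sum_filter_not K (fun k => u k < s)]
    have hz : ∑ k ∈ K.filter (fun k => ¬ u k < s), |(max s (u k))^2 - (u k)^2| = 0 := by
      apply Finset.sum_eq_zero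
      intro k hk
      rw [Finset.mem_filter] at hk
      rw [max_eq_right (not_lt.mp hk.2)]
      simp
    have hc1 : (K.filter (fun k => u k < s)).card ≤ 1 := by
      rw [Finset.card_le_one]
      intro k hk k' hk'
      rw [Finset.mem_filter] at hk hk'
      have e1 : (k:ℝ) + α - γ < s*a := by
        have := hk.2
        simp only [hudef] at this
        rwa [div_lt_iff₀ ha] at this
      have e1' : (k':ℝ) + α - γ < s*a := by
        have := hk'.2
        simp only [hudef] at this
        rwa [div_lt_iff₀ ha] at this
      have e2 : a*s+γ-β ≤ (k:ℝ) := by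
        have hh : k0 ≤ k := by
          have := hk.1
          rw [hKdef, Finset.mem_Icc] at this
          exact this.1
        exact le_trans hk0 (by exact_mod_cast hh)
      have e2' : a*s+γ-β ≤ (k':ℝ) := by
        have hh : k0 ≤ k' := by
          have := hk'.1
          rw [hKdef, Finset.mem_Icc] at this
          exact this.1
        exact le_trans hk0 (by exact_mod_cast hh)
      have f1 : (k:ℝ) < (k':ℝ) + 1 := by linarith
      have f2 : (k':ℝ) < (k:ℝ) + 1 := by linarith
      have g1 : k < k' + 1 := by exact_mod_cast f1
      have g2 : k' < k + 1 := by exact_mod_cast f2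
      omega
    have hb : ∀ k ∈ K.filter (fun k => u k < s),
        |(max s (u k))^2 - (u k)^2| ≤ 2*t/a + 1/a^2 := by
      intro k hk
      rw [Finset.mem_filter] at hk
      obtain ⟨hsv, hut, hul, hvu, huv⟩ := hKfacts k hk.1
      have hlt : u k < s := hk.2
      rw [max_eq_left hlt.le]
      have ha0 : (0:ℝ) ≤ 1/a := by positivity
      have := sq_window_bound a s t (u k) ha hs1 ht1 hst hul (by linarith)
      calc |s^2 - (u k)^2| = |(u k)^2 - s^2| := abs_sub_comm _ _
        _ ≤ 2*t/a + 1/a^2 := this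
    calc ∑ k ∈ K.filter (fun k => u k < s), |(max s (u k))^2 - (u k)^2|
          + ∑ k ∈ K.filter (fun k => ¬ u k < s), |(max s (u k))^2 - (u k)^2|
        = ∑ k ∈ K.filter (fun k => u k < s), |(max s (u k))^2 - (u k)^2| := by rw [hz, add_zero]
      _ ≤ (K.filter (fun k => u k < s)).card • (2*t/a + 1/a^2) :=
          Finset.sum_le_card_nsmul _ _ _ hb
      _ ≤ 1 • (2*t/a + 1/a^2) := nsmul_le_nsmul_left hE2 hc1
      _ = 2*t/a + 1/a^2 := one_nsmul _
  -- telescoping identity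
  have hper : ∀ k ∈ K, (v k)^2 - (u k)^2
      = (β-α)*((u (k+1))^2 - (u k)^2) + (β-α)*(β-α-1)/a^2 := by
    intro k _
    simp only [hudef, hvdef]
    push_cast
    field_simp
    ring
  have htl : ∑ k ∈ K, ((u (k+1))^2 - (u k)^2) = (u (k1+1))^2 - (u k0)^2 := by
    have h := tele (fun k => (u k)^2) k0 k1 hK01
    rw [hKdef]
    exact h
  have hVeq : ∑ k ∈ K, ((v k)^2 - (u k)^2)
      = (β-α)*((u (k1+1))^2 - (u k0)^2) + (K.card : ℝ) * ((β-α)*(β-α-1)/a^2) := by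
    rw [Finset.sum_congr rfl hper, Finset.sum_add_distrib, ← Finset.mul_sum, htl,
      Finset.sum_const, nsmul_eq_mul]
  -- endpoint bounds
  have hu1b : u (k1+1) ≤ t + 1/a := by
    simp only [hudef]
    push_cast
    rw [div_le_iff₀ ha]
    have hexp : (t + 1/a)*a = t*a + 1 := by field_simp
    rw [hexp]; linarith
  have hu1a : t - 1/a ≤ u (k1+1) := by
    simp only [hudef]
    push_cast
    rw [le_div_iff₀ ha]
    have hexp : (t - 1/a)*a = t*a - 1 := by field_simp
    rw [hexp]; linarith
  have hu0a : s - 1/a ≤ u k0 := by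
    simp only [hudef]
    rw [le_div_iff₀ ha]
    have hexp : (s - 1/a)*a = s*a - 1 := by field_simp
    rw [hexp]; linarith
  have hu0b : u k0 ≤ s + 1/a := by
    simp only [hudef]
    rw [div_le_iff₀ ha]
    have hexp : (s + 1/a)*a = s*a + 1 := by field_simp
    rw [hexp]; linarith
  have hb1 : |(u (k1+1))^2 - t^2| ≤ 2*t/a + 1/a^2 :=
    sq_window_bound a t t (u (k1+1)) ha ht1 ht1 le_rfl hu1a hu1b
  have hb0 : |(u k0)^2 - s^2| ≤ 2*t/a + 1/a^2 :=
    sq_window_bound a s t (u k0) ha hs1 ht1 hst hu0a hu0b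
  have hts : |t^2 - s^2 - (N:ℝ)/2| ≤ 1 := by
    rw [hs2, ht2, abs_le]
    exact ⟨by linarith [hMhalf.2], by linarith [hMhalf.1]⟩
  have hTbound : |(u (k1+1))^2 - (u k0)^2 - (N:ℝ)/2| ≤ 2*(2*t/a + 1/a^2) + 1 := by
    have e : (u (k1+1))^2 - (u k0)^2 - (N:ℝ)/2
        = (((u (k1+1))^2 - t^2) - ((u k0)^2 - s^2)) + (t^2 - s^2 - (N:ℝ)/2) := by ring
    rw [e]
    calc |(((u (k1+1))^2 - t^2) - ((u k0)^2 - s^2)) + (t^2 - s^2 - (N:ℝ)/2)|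
        ≤ |((u (k1+1))^2 - t^2) - ((u k0)^2 - s^2)| + |t^2 - s^2 - (N:ℝ)/2| := abs_add_le _ _
      _ ≤ (|(u (k1+1))^2 - t^2| + |(u k0)^2 - s^2|) + |t^2 - s^2 - (N:ℝ)/2| := by
          have := abs_sub ((u (k1+1))^2 - t^2) ((u k0)^2 - s^2)
          linarith
      _ ≤ 2*(2*t/a + 1/a^2) + 1 := by linarith
  -- final assembly
  have habs1 : |(F.card:ℝ) - ∑ k ∈ K, ((S k).card : ℝ)| ≤ (K.card : ℝ) :=
    abs_le.mpr ⟨by linarith, by linarith⟩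
  have hLV : |∑ k ∈ K, ((min t (v k))^2 - (max s (u k))^2) - ∑ k ∈ K, ((v k)^2 - (u k)^2)|
      ≤ 2*(2*t/a + 1/a^2) := by
    rw [← Finset.sum_sub_distrib]
    calc |∑ k ∈ K, (((min t (v k))^2 - (max s (u k))^2) - ((v k)^2 - (u k)^2))|
        ≤ ∑ k ∈ K, |((min t (v k))^2 - (max s (u k))^2) - ((v k)^2 - (u k)^2)| :=
          Finset.abs_sum_le_sum_abs _ _
      _ ≤ ∑ k ∈ K, (|(min t (v k))^2 - (v k)^2| + |(max s (u k))^2 - (u k)^2|) := by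
          apply Finset.sum_le_sum
          intro k _
          have e : ((min t (v k))^2 - (max s (u k))^2) - ((v k)^2 - (u k)^2)
              = ((min t (v k))^2 - (v k)^2) - ((max s (u k))^2 - (u k)^2) := by ring
          rw [e]
          exact abs_sub _ _
      _ = ∑ k ∈ K, |(min t (v k))^2 - (v k)^2|
          + ∑ k ∈ K, |(max s (u k))^2 - (u k)^2| := Finset.sum_add_distrib
      _ ≤ 2*(2*t/a + 1/a^2) := by linarith
  have hd1 : |β-α| ≤ 1 := abs_le.mpr ⟨by linarith, by linarith⟩
  have hd2 : |β-α-1| ≤ 1 := abs_le.mpr ⟨by linarith, by linarith⟩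
  have hcst : |(β-α)*(β-α-1)/a^2| ≤ 1/a^2 := by
    rw [abs_div, abs_of_pos (show (0:ℝ) < a^2 by positivity), abs_mul]
    exact (div_le_div_iff_of_pos_right (show (0:ℝ) < a^2 by positivity)).mpr
      (mul_le_one₀ hd1 (abs_nonneg _) hd2)
  have hVW : |∑ k ∈ K, ((v k)^2 - (u k)^2) - (β-α)*((u (k1+1))^2 - (u k0)^2)|
      ≤ (K.card : ℝ) * (1/a^2) := by
    rw [hVeq, show (β-α)*((u (k1+1))^2 - (u k0)^2) + (K.card : ℝ) * ((β-α)*(β-α-1)/a^2)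
      - (β-α)*((u (k1+1))^2 - (u k0)^2) = (K.card : ℝ) * ((β-α)*(β-α-1)/a^2) from by ring,
      abs_mul, abs_of_nonneg hKc0]
    exact mul_le_mul_of_nonneg_left hcst hKc0
  have hWE : |(β-α)*((u (k1+1))^2 - (u k0)^2) - (β-α)*(N:ℝ)/2|
      ≤ 2*(2*t/a + 1/a^2) + 1 := by
    rw [show (β-α)*((u (k1+1))^2 - (u k0)^2) - (β-α)*(N:ℝ)/2
      = (β-α)*((u (k1+1))^2 - (u k0)^2 - (N:ℝ)/2) from by ring, abs_mul]
    calc |β-α| * |(u (k1+1))^2 - (u k0)^2 - (N:ℝ)/2|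
        ≤ 1 * (2*(2*t/a + 1/a^2) + 1) :=
          mul_le_mul hd1 hTbound (abs_nonneg _) zero_le_one
      _ = 2*(2*t/a + 1/a^2) + 1 := one_mul _
  exact le_trans
    (chain5 ((F.card:ℝ)) (∑ k ∈ K, ((S k).card : ℝ))
      (∑ k ∈ K, ((min t (v k))^2 - (max s (u k))^2))
      (∑ k ∈ K, ((v k)^2 - (u k)^2))
      ((β-α)*((u (k1+1))^2 - (u k0)^2))
      ((β-α)*(N:ℝ)/2)
      ((K.card:ℝ)) ((K.card:ℝ)) (2*(2*t/a+1/a^2)) ((K.card:ℝ)*(1/a^2))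
      (2*(2*t/a+1/a^2)+1)
      habs1 hDL hLV hVW hWE)
    (final_bound a t (K.card:ℝ) ha ht1 hKc0 hKc)
end

section
/- Fix g > 0 and δ ∈ (0, 1/4). The number of natural numbers n ∈ [N/2, N] with |cos(4g√n − π/4)| ≤ N^{−1/4+δ} is O(N^{3/4+δ}) as N → ∞. -/
open Real

lemma aux_cos (θ : ℝ) :
    |θ - ((round (θ/π - 1/2) : ℝ) + 1/2) * π| ≤ (π/2) * |Real.cos θ| := by
  have hpi := Real.pi_pos
  set k := round (θ/π - 1/2) with hk
  set r := θ - ((k:ℝ) + 1/2) * π with hr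
  have hrepr : r = (θ/π - 1/2 - (k:ℝ)) * π := by
    field_simp [hr]; ring
  have h1 : |r| ≤ π/2 := by
    rw [hrepr, abs_mul, abs_of_pos hpi]
    have := abs_sub_round (θ/π - 1/2)
    nlinarith
  have hθ : θ = (r + (k:ℝ) * π) + π/2 := by rw [hr]; ring
  have h2 : |Real.cos θ| = |Real.sin r| := by
    rw [hθ, Real.cos_add_pi_div_two, Real.sin_add_int_mul_pi, abs_neg, abs_mul]
    rcases Int.even_or_odd k with h | h
    · rw [h.neg_one_zpow]; simp
    · rw [Odd.neg_one_zpow h]; simp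
  have h3 : (2/π) * |r| ≤ |Real.sin r| := by
    rcases abs_cases r with ⟨he, hp⟩ | ⟨he, hp⟩
    · rw [he]
      exact (Real.mul_le_sin (by linarith) (he ▸ h1)).trans (le_abs_self _)
    · rw [he]
      have := Real.mul_le_sin (x := -r) (by linarith) (by rw [← he]; exact h1)
      rw [Real.sin_neg] at this
      exact this.trans (neg_le_abs _)
  rw [h2]
  calc |r| = (π/2) * ((2/π) * |r|) := by field_simp
    _ ≤ (π/2) * |Real.sin r| := by nlinarith

open scoped Classical
set_option maxHeartbeats 1000000

/-- For `g > 0`, `δ ∈ (0,1/4)`, the number of `n ∈ [N/2, N]` with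
`|cos(4g√n − π/4)| ≤ N^{−1/4+δ}` is `O(N^{3/4+δ})`. -/
theorem stmt7 (g δ : ℝ) (hg : 0 < g) (hδ : δ ∈ Set.Ioo (0 : ℝ) (1/4)) :
    ∃ C : ℝ, 0 < C ∧ ∀ N : ℕ, 1 ≤ N →
      (((Finset.Icc 1 N).filter fun n : ℕ =>
          (N : ℝ) / 2 ≤ n ∧
          |Real.cos (4 * g * Real.sqrt n - Real.pi / 4)| ≤ (N : ℝ) ^ (-(1/4 : ℝ) + δ)).card : ℝ)
        ≤ C * (N : ℝ) ^ ((3/4 : ℝ) + δ) := by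
  obtain ⟨hδ0, hδ1⟩ := hδ
  have hpi := Real.pi_pos
  refine ⟨(8*g/π + 7) * (π/(2*g) + 1), by positivity, ?_⟩
  intro N hN
  have hN0 : (0:ℝ) < N := by exact_mod_cast hN
  have hN1 : (1:ℝ) ≤ N := by exact_mod_cast hN
  have hsN1 : (1:ℝ) ≤ Real.sqrt N := Real.one_le_sqrt.mpr hN1
  set ε : ℝ := (N:ℝ) ^ (-(1/4:ℝ) + δ) with hε
  have hε0 : 0 < ε := Real.rpow_pos_of_pos hN0 _
  set X : ℝ := (N:ℝ) ^ ((1/4:ℝ) + δ) with hX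
  have hX1 : 1 ≤ X := Real.one_le_rpow hN1 (by linarith)
  have hεs : ε * Real.sqrt N = X := by
    rw [hε, hX, Real.sqrt_eq_rpow, ← Real.rpow_add hN0]
    congr 1; ring
  set S := (Finset.Icc 1 N).filter (fun n : ℕ =>
      (N:ℝ)/2 ≤ n ∧ |Real.cos (4*g*Real.sqrt n - π/4)| ≤ ε) with hS
  set f : ℕ → ℤ := fun n => round ((4*g*Real.sqrt n - π/4)/π - 1/2) with hf
  have hkey : ∀ n ∈ S, |4*g*Real.sqrt n - π/4 - ((f n : ℝ) + 1/2)*π| ≤ (π/2)*ε := by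
    intro n hn
    rw [hS, Finset.mem_filter] at hn
    refine (aux_cos _).trans ?_
    have := hn.2.2
    nlinarith
  -- bound on f n
  set K0 : ℤ := ⌈4*g*Real.sqrt N/π⌉ + 2 with hK0
  have hceil0 : (0:ℝ) ≤ 4*g*Real.sqrt N/π := by positivity
  have hK0nn : (2:ℤ) ≤ K0 := by
    have := Int.ceil_nonneg hceil0
    omega
  have hfK : ∀ n ∈ S, f n ∈ Finset.Icc (-K0) K0 := by
    intro n hn
    rw [hS, Finset.mem_filter, Finset.mem_Icc] at hn
    have hsn : Real.sqrt n ≤ Real.sqrt N := Real.sqrt_le_sqrt (by exact_mod_cast hn.1.2)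
    have hsn0 : (0:ℝ) ≤ Real.sqrt n := Real.sqrt_nonneg _
    set x : ℝ := (4*g*Real.sqrt n - π/4)/π - 1/2 with hx
    have h1 : |x - (f n : ℝ)| ≤ 1/2 := abs_sub_round x
    rw [abs_sub_le_iff] at h1
    have hxu : x ≤ 4*g*Real.sqrt N/π - 1/2 := by
      rw [hx]
      have : (4*g*Real.sqrt n - π/4)/π ≤ (4*g*Real.sqrt N)/π := by
        gcongr
        nlinarith
      linarith
    have hxl : -3/4 ≤ x := by
      rw [hx]
      have : (-(π/4))/π ≤ (4*g*Real.sqrt n - π/4)/π := by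
        gcongr
        nlinarith
      have h2 : (-(π/4))/π = -(1/4 : ℝ) := by field_simp
      linarith [h2 ▸ this]
    have hceil : 4*g*Real.sqrt N/π ≤ (⌈4*g*Real.sqrt N/π⌉ : ℝ) := Int.le_ceil _
    rw [Finset.mem_Icc]
    constructor
    · have : (-2 : ℝ) ≤ (f n : ℝ) := by linarith
      have h3 : (-2 : ℤ) ≤ f n := by exact_mod_cast this
      omega
    · have : (f n : ℝ) ≤ (K0 : ℝ) := by
        push_cast [hK0]
        linarith
      exact_mod_cast this
  -- fiber bound
  have hfib : ∀ k : ℤ, ((S.filter (fun n => f n = k)).card : ℝ) ≤ π/(2*g) * X + 1 := by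
    intro k
    set T := S.filter (fun n => f n = k) with hT
    rcases T.eq_empty_or_nonempty with h | h
    · rw [h]; simp; positivity
    set m := T.min' h with hm
    have hmT : m ∈ T := T.min'_mem h
    set L : ℝ := π/(2*g) * X with hL
    have hL0 : (0:ℝ) ≤ L := by positivity
    have hsub2 : T ⊆ Finset.Icc m (m + ⌊L⌋₊) := by
      intro n hn
      refine Finset.mem_Icc.2 ⟨T.min'_le n hn, ?_⟩
      have hmn : m ≤ n := T.min'_le n hn
      rw [hT, Finset.mem_filter] at hn hmT
      have hkn := hkey n hn.1
      have hkm := hkey m hmT.1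
      rw [hn.2] at hkn
      rw [hmT.2] at hkm
      have hnS := hn.1
      have hmS := hmT.1
      rw [hS, Finset.mem_filter, Finset.mem_Icc] at hnS hmS
      have hsn : Real.sqrt n ≤ Real.sqrt N := Real.sqrt_le_sqrt (by exact_mod_cast hnS.1.2)
      have hsm : Real.sqrt m ≤ Real.sqrt N := Real.sqrt_le_sqrt (by exact_mod_cast hmS.1.2)
      have hsn0 : (0:ℝ) ≤ Real.sqrt n := Real.sqrt_nonneg _
      have hsm0 : (0:ℝ) ≤ Real.sqrt m := Real.sqrt_nonneg _
      have hdiff : |4*g*(Real.sqrt n - Real.sqrt m)| ≤ π*ε := by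
        have h4 : 4*g*(Real.sqrt n - Real.sqrt m) =
            (4*g*Real.sqrt n - π/4 - ((k:ℝ)+1/2)*π) - (4*g*Real.sqrt m - π/4 - ((k:ℝ)+1/2)*π) := by
          ring
        rw [h4]
        calc |_ - _| ≤ |4*g*Real.sqrt n - π/4 - ((k:ℝ)+1/2)*π| + |4*g*Real.sqrt m - π/4 - ((k:ℝ)+1/2)*π| :=
              abs_sub _ _
          _ ≤ π*ε := by linarith
      have hdiff2 : Real.sqrt n - Real.sqrt m ≤ π*ε/(4*g) := by
        rw [abs_mul, abs_of_pos (by linarith : (0:ℝ) < 4*g)] at hdiff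
        have h5 := le_abs_self (Real.sqrt n - Real.sqrt m)
        rw [le_div_iff₀ (by linarith : (0:ℝ) < 4*g)]
        nlinarith
      have hsq_n : Real.sqrt n ^ 2 = (n:ℝ) := Real.sq_sqrt (by positivity)
      have hsq_m : Real.sqrt m ^ 2 = (m:ℝ) := Real.sq_sqrt (by positivity)
      have hreal : (n:ℝ) - (m:ℝ) ≤ L := by
        have hexp : (n:ℝ) - (m:ℝ) = (Real.sqrt n - Real.sqrt m) * (Real.sqrt n + Real.sqrt m) := by
          linear_combination -hsq_n + hsq_m
        rw [hexp]
        have hsum : Real.sqrt n + Real.sqrt m ≤ 2 * Real.sqrt N := by linarith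
        have hd0 : 0 ≤ π*ε/(4*g) := by positivity
        calc (Real.sqrt n - Real.sqrt m) * (Real.sqrt n + Real.sqrt m)
            ≤ (π*ε/(4*g)) * (2 * Real.sqrt N) := by
              apply mul_le_mul hdiff2 hsum (by linarith) hd0
          _ = π/(2*g) * (ε * Real.sqrt N) := by field_simp; ring
          _ = L := by rw [hεs]
      have hcast : ((n - m : ℕ) : ℝ) ≤ L := by
        rw [Nat.cast_sub hmn]; linarith
      have := Nat.le_floor hcast
      omega
    calc (T.card : ℝ) ≤ ((Finset.Icc m (m + ⌊L⌋₊)).card : ℝ) := by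
          exact_mod_cast Finset.card_le_card hsub2
      _ = (⌊L⌋₊ : ℝ) + 1 := by
          rw [Nat.card_Icc]
          have : m + ⌊L⌋₊ + 1 - m = ⌊L⌋₊ + 1 := by omega
          rw [this]; push_cast; ring
      _ ≤ L + 1 := by have := Nat.floor_le hL0; linarith
  -- assemble
  have hsub : S ⊆ (Finset.Icc (-K0) K0).biUnion (fun k => S.filter (fun n => f n = k)) := by
    intro n hn
    exact Finset.mem_biUnion.2 ⟨f n, hfK n hn, Finset.mem_filter.2 ⟨hn, rfl⟩⟩
  have hcard1 : S.card ≤ ∑ k ∈ Finset.Icc (-K0) K0, (S.filter (fun n => f n = k)).card :=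
    (Finset.card_le_card hsub).trans Finset.card_biUnion_le
  have hKcard : ((Finset.Icc (-K0) K0).card : ℝ) ≤ (8*g/π + 7) * Real.sqrt N := by
    have h1 : (Finset.Icc (-K0) K0).card = (2*K0 + 1).toNat := by
      rw [Int.card_Icc]
      congr 1
      ring
    have h2 : ((Finset.Icc (-K0) K0).card : ℝ) = 2*(K0:ℝ) + 1 := by
      rw [h1, show (((2*K0+1).toNat : ℕ) : ℝ) = (((2*K0+1).toNat : ℤ) : ℝ) from
        (Int.cast_natCast _).symm, Int.toNat_of_nonneg (by omega)]
      push_cast; ring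
    rw [h2]
    have hceil : (⌈4*g*Real.sqrt N/π⌉ : ℝ) < 4*g*Real.sqrt N/π + 1 := Int.ceil_lt_add_one _
    have hK0r : (K0:ℝ) < 4*g*Real.sqrt N/π + 3 := by
      rw [hK0]; push_cast; linarith
    have hkey2 : 2*(4*g*Real.sqrt N/π + 3) + 1 ≤ (8*g/π + 7) * Real.sqrt N := by
      have e : (8*g/π + 7) * Real.sqrt N = 8*g*Real.sqrt N/π + 7*Real.sqrt N := by ring
      have e2 : 2*(4*g*Real.sqrt N/π + 3) + 1 = 8*g*Real.sqrt N/π + 7 := by ring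
      rw [e, e2]
      linarith [hsN1]
    linarith
  have hsum : ((S.card : ℝ)) ≤ ((Finset.Icc (-K0) K0).card : ℝ) * (π/(2*g) * X + 1) := by
    calc (S.card : ℝ) ≤ ((∑ k ∈ Finset.Icc (-K0) K0, (S.filter (fun n => f n = k)).card : ℕ) : ℝ) := by
          exact_mod_cast hcard1
      _ = ∑ k ∈ Finset.Icc (-K0) K0, ((S.filter (fun n => f n = k)).card : ℝ) := by push_cast; rfl
      _ ≤ (Finset.Icc (-K0) K0).card • (π/(2*g) * X + 1) :=
          Finset.sum_le_card_nsmul _ _ _ (fun k _ => hfib k)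
      _ = ((Finset.Icc (-K0) K0).card : ℝ) * (π/(2*g) * X + 1) := by rw [nsmul_eq_mul]
  have hXfin : Real.sqrt N * X = (N:ℝ) ^ ((3/4:ℝ) + δ) := by
    rw [hX, Real.sqrt_eq_rpow, ← Real.rpow_add hN0]
    congr 1; ring
  have hfinal : ((Finset.Icc (-K0) K0).card : ℝ) * (π/(2*g) * X + 1)
      ≤ (8*g/π + 7) * (π/(2*g) + 1) * ((N:ℝ) ^ ((3/4:ℝ) + δ)) := by
    have h1 : π/(2*g) * X + 1 ≤ (π/(2*g) + 1) * X := by nlinarith [hX1]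
    have h2 : (0:ℝ) ≤ π/(2*g) * X + 1 := by positivity
    calc ((Finset.Icc (-K0) K0).card : ℝ) * (π/(2*g) * X + 1)
        ≤ ((8*g/π + 7) * Real.sqrt N) * ((π/(2*g) + 1) * X) := by
          apply mul_le_mul hKcard h1 h2 (by positivity)
      _ = (8*g/π + 7) * (π/(2*g) + 1) * (Real.sqrt N * X) := by ring
      _ = _ := by rw [hXfin]
  calc (S.card : ℝ) ≤ _ := hsum
    _ ≤ _ := hfinal
end

section
/- Let C > 0, a > 0, γ ∈ ℝ, and let [α, β] ⊆ (−C, C). Then (1/N)·#{n ≤ N : C·cos(2π(a√n + γ)) ∈ [α, β]} → ∫_α^β dy/(π√(C² − y²)) as N → ∞. -/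
open scoped Classical
open Finset Filter Real
set_option maxHeartbeats 1000000


set_option maxHeartbeats 1000000


lemma card_filter_le (N : ℕ) (A B : ℝ) (hA : 0 ≤ A) (hAB : A ≤ B) :
    ((((Finset.Icc 1 N).filter fun n : ℕ => A ≤ (n:ℝ) ∧ (n:ℝ) ≤ B).card : ℝ)) ≤ B - A + 1 := by
  have hB : 0 ≤ B := hA.trans hAB
  have hsub : ((Finset.Icc 1 N).filter fun n : ℕ => A ≤ (n:ℝ) ∧ (n:ℝ) ≤ B) ⊆
      Finset.Icc ⌈A⌉₊ ⌊B⌋₊ := by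
    intro n hn
    simp only [Finset.mem_filter, Finset.mem_Icc] at hn ⊢
    exact ⟨Nat.ceil_le.2 hn.2.1, Nat.le_floor hn.2.2⟩
  have h1 := Finset.card_le_card hsub
  rw [Nat.card_Icc] at h1
  have h2 : ((⌊B⌋₊ + 1 - ⌈A⌉₊ : ℕ) : ℝ) ≤ B - A + 1 := by
    rcases le_or_gt ⌈A⌉₊ (⌊B⌋₊ + 1) with h | h
    · rw [Nat.cast_sub h]
      have := Nat.floor_le hB
      have := Nat.le_ceil A
      push_cast
      linarith
    · rw [Nat.sub_eq_zero_of_le h.le]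
      push_cast
      linarith
  calc (_ : ℝ) ≤ ((⌊B⌋₊ + 1 - ⌈A⌉₊ : ℕ) : ℝ) := by exact_mod_cast h1
    _ ≤ _ := h2

lemma card_filter_ge (N : ℕ) (A B : ℝ) (hA : 1 ≤ A) (hBN : B ≤ N) :
    B - A - 1 ≤ (((Finset.Icc 1 N).filter fun n : ℕ => A ≤ (n:ℝ) ∧ (n:ℝ) ≤ B).card : ℝ) := by
  rcases le_or_gt A B with hAB | hAB
  · have hB : (0:ℝ) ≤ B := by linarith
    have hsub : Finset.Icc ⌈A⌉₊ ⌊B⌋₊ ⊆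
        ((Finset.Icc 1 N).filter fun n : ℕ => A ≤ (n:ℝ) ∧ (n:ℝ) ≤ B) := by
      intro n hn
      simp only [Finset.mem_filter, Finset.mem_Icc] at hn ⊢
      have h1 : A ≤ (n:ℝ) := (Nat.le_ceil A).trans (by exact_mod_cast hn.1)
      have h2 : (n:ℝ) ≤ B := le_trans (by exact_mod_cast hn.2) (Nat.floor_le hB)
      refine ⟨⟨?_, ?_⟩, h1, h2⟩
      · have : (1:ℝ) ≤ n := le_trans hA h1
        exact_mod_cast this
      · have : (n:ℝ) ≤ N := h2.trans hBN
        exact_mod_cast this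
    have h1 := Finset.card_le_card hsub
    rw [Nat.card_Icc] at h1
    have hfl : B - 1 < (⌊B⌋₊ : ℝ) := Nat.sub_one_lt_floor B
    have hcl : (⌈A⌉₊ : ℝ) < A + 1 := Nat.ceil_lt_add_one (by linarith)
    rcases le_or_gt ⌈A⌉₊ (⌊B⌋₊ + 1) with h | h
    · have h2 : B - A - 1 ≤ ((⌊B⌋₊ + 1 - ⌈A⌉₊ : ℕ) : ℝ) := by
        rw [Nat.cast_sub h]; push_cast; linarith
      calc B - A - 1 ≤ _ := h2
        _ ≤ _ := by exact_mod_cast h1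
    · exfalso
      have h2 : (⌊B⌋₊ : ℝ) + 2 ≤ (⌈A⌉₊ : ℝ) := by exact_mod_cast h
      linarith
  · have : B - A - 1 < 0 := by linarith
    exact this.le.trans (Nat.cast_nonneg _)

lemma sqrt_mul_tendsto (a : ℝ) (ha : 0 < a) :
    Tendsto (fun N : ℕ => a * Real.sqrt N) atTop atTop := by
  rw [tendsto_atTop]
  intro M
  rw [eventually_atTop]
  refine ⟨⌈(M / a) ^ 2⌉₊, fun N hN => ?_⟩
  have h1 : (M / a) ^ 2 ≤ (N : ℝ) := le_trans (Nat.le_ceil _) (by exact_mod_cast hN)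
  have h2 : M / a ≤ Real.sqrt N := Real.le_sqrt_of_sq_le h1
  calc M = a * (M / a) := by field_simp
    _ ≤ a * Real.sqrt N := by nlinarith

lemma tendsto_err (c₁ c₀ : ℝ) :
    Tendsto (fun N : ℕ => (c₁ * Real.sqrt N + c₀) / N) atTop (nhds 0) := by
  have h1 : Tendsto (fun N : ℕ => Real.sqrt N) atTop atTop := by
    have := (sqrt_mul_tendsto 1 one_pos)
    simpa using this
  have h2 : Tendsto (fun N : ℕ => (Real.sqrt N)⁻¹) atTop (nhds 0) :=
    h1.inv_tendsto_atTop
  have h3 : Tendsto (fun N : ℕ => ((N : ℝ))⁻¹) atTop (nhds 0) :=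
    tendsto_inv_atTop_zero.comp tendsto_natCast_atTop_atTop
  have key : Tendsto (fun N : ℕ => c₁ * (Real.sqrt N)⁻¹ + c₀ * ((N:ℝ))⁻¹) atTop (nhds 0) := by
    have := (h2.const_mul c₁).add (h3.const_mul c₀)
    simpa using this
  apply key.congr'
  filter_upwards [eventually_ge_atTop 1] with N hN
  have hN0 : (0:ℝ) < N := by exact_mod_cast hN
  have hs : Real.sqrt N * Real.sqrt N = N := Real.mul_self_sqrt hN0.le
  have hs0 : (0:ℝ) < Real.sqrt N := Real.sqrt_pos.2 hN0
  field_simp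
  ring_nf
  rw [Real.sq_sqrt hN0.le]


lemma density_fract (a γ p q : ℝ) (ha : 0 < a) (hp : 0 < p) (hpq : p ≤ q) (hq : q < 1) :
    Tendsto (fun N : ℕ => (((Finset.Icc 1 N).filter fun n : ℕ =>
      Int.fract (a * Real.sqrt n + γ) ∈ Set.Icc p q).card : ℝ) / N) atTop (nhds (q - p)) := by
  have ha2 : (0:ℝ) < a ^ 2 := by positivity
  set x : ℕ → ℝ := fun n => a * Real.sqrt n + γ with hxdef
  set k₀ : ℕ := ⌈a + |γ| + 1⌉₊ with hk₀def
  have hk₀ : a + |γ| + 1 ≤ (k₀ : ℝ) := Nat.le_ceil _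
  have habs : γ ≤ |γ| := le_abs_self γ
  have habs' : -|γ| ≤ γ := neg_abs_le γ
  set c : ℝ := (p + q - 1) / 2 - γ with hcdef
  set φ : ℕ → ℝ := fun k => (q - p) * ((k : ℝ) + c) ^ 2 / a ^ 2 with hφdef
  set A : ℕ → ℝ := fun k => (((k : ℝ) + p - γ) / a) ^ 2 with hAdef
  set B : ℕ → ℝ := fun k => (((k : ℝ) + q - γ) / a) ^ 2 with hBdef
  set F : ℕ → ℕ → Finset ℕ :=
    fun k N => (Finset.Icc 1 N).filter fun n : ℕ => A k ≤ (n:ℝ) ∧ (n:ℝ) ≤ B k with hFdef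
  set J : ℕ := ⌈(((k₀:ℝ) + 1 - γ) / a) ^ 2⌉₊ with hJdef
  set K : ℕ → ℕ := fun N => ⌊a * Real.sqrt N + γ⌋₊ with hKdef
  set cnt : ℕ → Finset ℕ :=
    fun N => (Finset.Icc 1 N).filter fun n : ℕ => Int.fract (x n) ∈ Set.Icc p q with hcntdef
  -- key translation
  have key : ∀ k : ℕ, k₀ ≤ k → ∀ n : ℕ,
      (A k ≤ (n:ℝ) ∧ (n:ℝ) ≤ B k) ↔ ((k:ℝ) + p ≤ x n ∧ x n ≤ (k:ℝ) + q) := by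
    intro k hk n
    have hkk : (k₀:ℝ) ≤ (k:ℝ) := by exact_mod_cast hk
    have hkp : 0 ≤ ((k:ℝ) + p - γ) / a := by
      apply div_nonneg _ ha.le; linarith
    have hkq : 0 ≤ ((k:ℝ) + q - γ) / a := by
      apply div_nonneg _ ha.le; linarith
    have h1 : A k ≤ (n:ℝ) ↔ ((k:ℝ) + p - γ) / a ≤ Real.sqrt n :=
      (Real.le_sqrt hkp (Nat.cast_nonneg n)).symm
    have h2 : (n:ℝ) ≤ B k ↔ Real.sqrt n ≤ ((k:ℝ) + q - γ) / a :=
      (Real.sqrt_le_left hkq).symm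
    rw [h1, h2, div_le_iff₀ ha, le_div_iff₀ ha]
    simp only [hxdef]
    constructor
    · rintro ⟨u, v⟩; constructor <;> nlinarith
    · rintro ⟨u, v⟩; constructor <;> nlinarith
  have hAB : ∀ k : ℕ, k₀ ≤ k → A k ≤ B k := by
    intro k hk
    have hkk : (k₀:ℝ) ≤ (k:ℝ) := by exact_mod_cast hk
    have hkp : 0 ≤ ((k:ℝ) + p - γ) / a := by apply div_nonneg _ ha.le; linarith
    apply pow_le_pow_left₀ hkp
    gcongr
  have hA0 : ∀ k : ℕ, 0 ≤ A k := fun k => sq_nonneg _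
  -- telescoping
  have hstep : ∀ k : ℕ, B k - A k = φ (k + 1) - φ k := by
    intro k
    simp only [hφdef, hAdef, hBdef, hcdef]
    push_cast
    field_simp
    ring
  have tele : ∀ m L : ℕ, m ≤ L + 1 → ∑ k ∈ Finset.Icc m L, (B k - A k) = φ (L + 1) - φ m := by
    intro m L hm
    have h1 : Finset.Icc m L = Finset.Ico m (L + 1) := by rw [Finset.Ico_add_one_right_eq_Icc]
    rw [h1, Finset.sum_Ico_eq_sum_range]
    have h2 : ∀ i, B (m + i) - A (m + i) = φ (m + (i + 1)) - φ (m + i) := by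
      intro i; rw [hstep]; ring_nf
    simp only [h2]
    have h3 := Finset.sum_range_sub (fun i => φ (m + i)) (L + 1 - m)
    simp only [h3]
    rw [Nat.add_sub_cancel' hm]
    simp
  -- upper bound pieces
  have cnt_sub : ∀ N : ℕ, cnt N ⊆ (Finset.Icc 1 J) ∪ (Finset.Icc k₀ (K N)).biUnion (fun k => F k N) := by
    intro N n hn
    simp only [hcntdef, Finset.mem_filter, Finset.mem_Icc, Set.mem_Icc] at hn
    obtain ⟨⟨hn1, hnN⟩, hf1, hf2⟩ := hn
    have hfr : Int.fract (x n) = x n - ⌊x n⌋ := (Int.self_sub_floor (x n)).symm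
    have hsq : Real.sqrt n ≤ Real.sqrt N := Real.sqrt_le_sqrt (by exact_mod_cast hnN)
    have hxN : x n ≤ a * Real.sqrt N + γ := by
      simp only [hxdef]; nlinarith
    rcases lt_or_ge (⌊x n⌋) (k₀ : ℤ) with hm | hm
    · -- junk case
      apply Finset.mem_union_left
      have h1 : x n < k₀ := by
        have : (⌊x n⌋ : ℝ) + 1 ≤ (k₀ : ℝ) := by exact_mod_cast hm
        have := Int.fract_lt_one (x n)
        linarith [Int.floor_add_fract (x n)]
      have h2 : Real.sqrt n ≤ ((k₀:ℝ) + 1 - γ) / a := by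
        rw [le_div_iff₀ ha]
        simp only [hxdef] at h1
        nlinarith
      have h3 : (n : ℝ) ≤ (((k₀:ℝ) + 1 - γ) / a) ^ 2 := by
        have hs := Real.sqrt_nonneg (n:ℝ)
        have : Real.sqrt n * Real.sqrt n = (n:ℝ) := Real.mul_self_sqrt (Nat.cast_nonneg n)
        nlinarith
      have h4 : n ≤ J := by
        have h5 := Nat.ceil_le_ceil (R := ℝ) h3
        simpa using h5
      simp only [Finset.mem_Icc]; exact ⟨hn1, h4⟩
    · -- main case
      apply Finset.mem_union_right
      set k : ℕ := (⌊x n⌋).toNat with hkd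
      have hkfl : (k : ℤ) = ⌊x n⌋ := Int.toNat_of_nonneg (le_trans (by exact_mod_cast Nat.zero_le k₀) hm)
      have hkr : (k : ℝ) = (⌊x n⌋ : ℝ) := by exact_mod_cast hkfl
      have hk0 : k₀ ≤ k := by
        have : (k₀ : ℤ) ≤ (k : ℤ) := by rw [hkfl]; exact hm
        exact_mod_cast this
      have hx1 : (k:ℝ) + p ≤ x n := by
        rw [hkr]; linarith [Int.floor_add_fract (x n)]
      have hx2 : x n ≤ (k:ℝ) + q := by
        rw [hkr]; linarith [Int.floor_add_fract (x n)]
      have hkK : k ≤ K N := by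
        apply Nat.le_floor
        calc (k:ℝ) ≤ x n := by linarith
          _ ≤ _ := hxN
      rw [Finset.mem_biUnion]
      refine ⟨k, Finset.mem_Icc.2 ⟨hk0, hkK⟩, ?_⟩
      simp only [hFdef, Finset.mem_filter, Finset.mem_Icc]
      exact ⟨⟨hn1, hnN⟩, (key k hk0 n).2 ⟨hx1, hx2⟩⟩
  -- F card bounds
  have F_card_le : ∀ N k : ℕ, k₀ ≤ k → ((F k N).card : ℝ) ≤ B k - A k + 1 := by
    intro N k hk
    exact card_filter_le N (A k) (B k) (hA0 k) (hAB k hk)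
  have hdivmono : ∀ X Y : ℝ, X ≤ Y → (q - p) * X / a ^ 2 ≤ (q - p) * Y / a ^ 2 := by
    intro X Y h
    rw [div_le_div_iff_of_pos_right ha2]
    have hqp : 0 ≤ q - p := by linarith
    exact mul_le_mul_of_nonneg_left h hqp
  set d : ℝ := |γ + 1 + c| with hddef
  set e : ℝ := |1 - γ - c| with hedef
  set c₁ : ℝ := (q - p) * (2 * d) / a + a with hc₁def
  set c₀ : ℝ := (J : ℝ) + (q - p) * d ^ 2 / a ^ 2 + |φ k₀| + |γ| + 1 with hc₀def
  set c₁' : ℝ := (q - p) * (2 * e) / a + a with hc₁'def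
  set c₀' : ℝ := |φ k₀| + |γ| with hc₀'def
  have he0 : 0 ≤ e := abs_nonneg _
  have hev : ∀ᶠ N : ℕ in atTop, (k₀:ℝ) + 2 ≤ a * Real.sqrt N + γ ∧ e ≤ a * Real.sqrt N := by
    have h1 := (sqrt_mul_tendsto a ha).eventually_ge_atTop ((k₀:ℝ) + 2 - γ)
    have h2 := (sqrt_mul_tendsto a ha).eventually_ge_atTop e
    filter_upwards [h1, h2] with N h1 h2
    exact ⟨by linarith, h2⟩
  -- upper bound
  have upper : ∀ᶠ N : ℕ in atTop,
      ((cnt N).card : ℝ) ≤ (q - p) * N + c₁ * Real.sqrt N + c₀ := by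
    filter_upwards [hev] with N hN
    obtain ⟨hN1, hN2⟩ := hN
    have hsN : 0 ≤ Real.sqrt N := Real.sqrt_nonneg _
    have hKle : (K N : ℝ) ≤ a * Real.sqrt N + γ := Nat.floor_le (by linarith)
    have hKge : k₀ + 1 ≤ K N := Nat.le_floor (by push_cast; linarith)
    have h1 : (cnt N).card ≤ (Finset.Icc 1 J).card + ∑ k ∈ Finset.Icc k₀ (K N), (F k N).card := by
      refine le_trans (Finset.card_le_card (cnt_sub N)) ?_
      refine le_trans (Finset.card_union_le _ _) ?_
      gcongr
      exact Finset.card_biUnion_le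
    have h1' : ((cnt N).card : ℝ) ≤ (J:ℝ) + ∑ k ∈ Finset.Icc k₀ (K N), ((F k N).card : ℝ) := by
      have hJc : ((Finset.Icc 1 J).card : ℝ) ≤ (J : ℝ) := by
        rw [Nat.card_Icc]; push_cast [Nat.cast_sub (by omega : 1 ≤ J + 1)]; norm_num
      have h1r : ((cnt N).card : ℝ) ≤ ((Finset.Icc 1 J).card : ℝ) +
          ∑ k ∈ Finset.Icc k₀ (K N), ((F k N).card : ℝ) := by
        exact_mod_cast h1
      linarith
    have h2 : ∑ k ∈ Finset.Icc k₀ (K N), ((F k N).card : ℝ) ≤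
        ∑ k ∈ Finset.Icc k₀ (K N), (B k - A k + 1) := by
      apply Finset.sum_le_sum
      intro k hk
      exact F_card_le N k (Finset.mem_Icc.1 hk).1
    have h3 : ∑ k ∈ Finset.Icc k₀ (K N), (B k - A k + 1)
        = (φ (K N + 1) - φ k₀) + ((K N + 1 - k₀ : ℕ) : ℝ) := by
      rw [Finset.sum_add_distrib, tele k₀ (K N) (by omega), Finset.sum_const, Nat.card_Icc]
      simp [nsmul_eq_mul]
    have hcard : ((K N + 1 - k₀ : ℕ) : ℝ) ≤ a * Real.sqrt N + |γ| + 1 := by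
      have h6 : (K N + 1 - k₀ : ℕ) ≤ K N + 1 := Nat.sub_le _ _
      have h7 : ((K N + 1 - k₀ : ℕ) : ℝ) ≤ (K N : ℝ) + 1 := by exact_mod_cast h6
      linarith [le_abs_self γ]
    have hkge' : (k₀:ℝ) + 1 ≤ (K N : ℝ) := by exact_mod_cast hKge
    have hc2 : 0 ≤ (K N : ℝ) + 1 + c := by
      simp only [hcdef]
      linarith
    have hd1 : (K N : ℝ) + 1 + c ≤ a * Real.sqrt N + d := by
      have := le_abs_self (γ + 1 + c)
      linarith
    have hss : Real.sqrt N * Real.sqrt N = (N:ℝ) := Real.mul_self_sqrt (Nat.cast_nonneg N)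
    have hsq2 : ((K N : ℝ) + 1 + c) ^ 2 ≤ a ^ 2 * N + 2 * a * d * Real.sqrt N + d ^ 2 := by
      nlinarith
    have expand : ((q - p) * (a ^ 2 * N + 2 * a * d * Real.sqrt N + d ^ 2)) / a ^ 2
        = (q - p) * N + (q - p) * (2 * d) / a * Real.sqrt N + (q - p) * d ^ 2 / a ^ 2 := by
      field_simp
    have hφeq : φ (K N + 1) = (q - p) * ((K N : ℝ) + 1 + c) ^ 2 / a ^ 2 := by
      simp only [hφdef]; push_cast; ring
    have hφb : φ (K N + 1) ≤ (q - p) * N + (q - p) * (2 * d) / a * Real.sqrt N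
        + (q - p) * d ^ 2 / a ^ 2 := by
      rw [hφeq, ← expand]
      exact hdivmono _ _ hsq2
    have hφk : -φ k₀ ≤ |φ k₀| := neg_le_abs _
    simp only [hc₁def, hc₀def]
    linarith
  -- lower bound
  have lower : ∀ᶠ N : ℕ in atTop,
      (q - p) * N - c₁' * Real.sqrt N - c₀' ≤ ((cnt N).card : ℝ) := by
    filter_upwards [hev] with N hN
    obtain ⟨hN1, hN2⟩ := hN
    have hsN : 0 ≤ Real.sqrt N := Real.sqrt_nonneg _
    have hKle : (K N : ℝ) ≤ a * Real.sqrt N + γ := Nat.floor_le (by linarith)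
    have hKge : k₀ + 1 ≤ K N := Nat.le_floor (by push_cast; linarith)
    have hkge' : (k₀:ℝ) + 1 ≤ (K N : ℝ) := by exact_mod_cast hKge
    have hKgt : a * Real.sqrt N + γ - 1 ≤ (K N : ℝ) :=
      le_of_lt (Nat.sub_one_lt_floor (a * Real.sqrt N + γ))
    have hsub : (Finset.Icc k₀ (K N - 1)).biUnion (fun k => F k N) ⊆ cnt N := by
      intro n hn
      rw [Finset.mem_biUnion] at hn
      obtain ⟨k, hk, hnF⟩ := hn
      rw [Finset.mem_Icc] at hk
      simp only [hFdef, Finset.mem_filter] at hnF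
      obtain ⟨hnI, hnAB⟩ := hnF
      have hx12 := (key k hk.1 n).1 hnAB
      have hfl : ⌊x n⌋ = (k : ℤ) := by
        rw [Int.floor_eq_iff]
        push_cast
        constructor
        · linarith [hx12.1]
        · linarith [hx12.2]
      have hfr : Int.fract (x n) = x n - (k:ℝ) := by
        rw [← Int.self_sub_floor, hfl]
        norm_num
      simp only [hcntdef, Finset.mem_filter, Set.mem_Icc]
      refine ⟨hnI, ?_, ?_⟩
      · rw [hfr]; linarith [hx12.1]
      · rw [hfr]; linarith [hx12.2]
    have hdisj : ∀ k1 ∈ Finset.Icc k₀ (K N - 1), ∀ k2 ∈ Finset.Icc k₀ (K N - 1),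
        k1 ≠ k2 → Disjoint (F k1 N) (F k2 N) := by
      intro k1 hk1 k2 hk2 hne
      rw [Finset.mem_Icc] at hk1 hk2
      rw [Finset.disjoint_left]
      intro n hn1 hn2
      simp only [hFdef, Finset.mem_filter] at hn1 hn2
      have h1 := (key k1 hk1.1 n).1 hn1.2
      have h2 := (key k2 hk2.1 n).1 hn2.2
      apply hne
      have hlt1 : (k1:ℝ) < (k2:ℝ) + 1 := by linarith [h1.1, h2.2]
      have hlt2 : (k2:ℝ) < (k1:ℝ) + 1 := by linarith [h2.1, h1.2]
      have hl1 : k1 < k2 + 1 := by exact_mod_cast hlt1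
      have hl2 : k2 < k1 + 1 := by exact_mod_cast hlt2
      omega
    have hcard := Finset.card_biUnion hdisj
    have h1 : ∑ k ∈ Finset.Icc k₀ (K N - 1), ((F k N).card : ℝ) ≤ ((cnt N).card : ℝ) := by
      have h6 := Finset.card_le_card hsub
      rw [hcard] at h6
      exact_mod_cast h6
    have h2 : ∀ k ∈ Finset.Icc k₀ (K N - 1), B k - A k - 1 ≤ ((F k N).card : ℝ) := by
      intro k hk
      rw [Finset.mem_Icc] at hk
      have hk1 : (k₀:ℝ) ≤ (k:ℝ) := by exact_mod_cast hk.1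
      apply card_filter_ge
      · have ht : 1 ≤ ((k:ℝ) + p - γ) / a := by
          rw [le_div_iff₀ ha]; linarith
        simp only [hAdef]; nlinarith
      · have hkK : (k:ℝ) ≤ (K N : ℝ) - 1 := by
          have h7 : ((k:ℕ):ℝ) ≤ ((K N - 1 : ℕ):ℝ) := by exact_mod_cast hk.2
          rw [Nat.cast_sub (by omega : 1 ≤ K N)] at h7
          push_cast at h7
          linarith
        have ht : (k:ℝ) + q - γ ≤ a * Real.sqrt N := by linarith
        have ht0 : 0 ≤ (k:ℝ) + q - γ := by linarith
        have hss : Real.sqrt N * Real.sqrt N = (N:ℝ) := Real.mul_self_sqrt (Nat.cast_nonneg N)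
        simp only [hBdef]
        rw [div_pow, div_le_iff₀ ha2]
        nlinarith
    have h3 : ∑ k ∈ Finset.Icc k₀ (K N - 1), (B k - A k - 1) ≤
        ∑ k ∈ Finset.Icc k₀ (K N - 1), ((F k N).card : ℝ) := Finset.sum_le_sum h2
    have h4 : ∑ k ∈ Finset.Icc k₀ (K N - 1), (B k - A k - 1)
        = (φ (K N) - φ k₀) - ((K N - 1 + 1 - k₀ : ℕ) : ℝ) := by
      rw [Finset.sum_sub_distrib, tele k₀ (K N - 1) (by omega), Finset.sum_const, Nat.card_Icc]
      have h8 : K N - 1 + 1 = K N := by omega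
      rw [h8]
      simp [nsmul_eq_mul]
    have hcardIcc : ((K N - 1 + 1 - k₀ : ℕ) : ℝ) ≤ a * Real.sqrt N + |γ| := by
      have h6 : (K N - 1 + 1 - k₀ : ℕ) ≤ K N := by omega
      have h7 : ((K N - 1 + 1 - k₀ : ℕ):ℝ) ≤ (K N : ℝ) := by exact_mod_cast h6
      linarith [le_abs_self γ]
    have hss : Real.sqrt N ^ 2 = (N:ℝ) := Real.sq_sqrt (Nat.cast_nonneg N)
    have hx2 : (a * Real.sqrt N - e) ^ 2 = a ^ 2 * (N:ℝ) - 2 * a * e * Real.sqrt N + e ^ 2 := by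
      have h9 : (a * Real.sqrt N - e) ^ 2
          = a ^ 2 * (Real.sqrt N) ^ 2 - 2 * a * e * Real.sqrt N + e ^ 2 := by ring
      rw [h9, hss]
    have h5 : a * Real.sqrt N - e ≤ (K N : ℝ) + c := by
      have := le_abs_self (1 - γ - c)
      linarith
    have hKc : 0 ≤ a * Real.sqrt N - e := by linarith
    have hsq2 : (a * Real.sqrt N - e) ^ 2 ≤ ((K N:ℝ) + c) ^ 2 := by nlinarith
    have hφKN : φ (K N) = (q - p) * ((K N:ℝ) + c) ^ 2 / a ^ 2 := rfl
    have heq : (q - p) * (a ^ 2 * N - 2 * a * e * Real.sqrt N + e ^ 2) / a ^ 2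
        = (q - p) * N - (q - p) * (2 * e) / a * Real.sqrt N + (q - p) * e ^ 2 / a ^ 2 := by
      field_simp
    have hφlow : (q - p) * N - (q - p) * (2 * e) / a * Real.sqrt N ≤ φ (K N) := by
      have hm := hdivmono _ _ hsq2
      rw [hx2, heq] at hm
      have hpos : 0 ≤ (q - p) * e ^ 2 / a ^ 2 :=
        div_nonneg (mul_nonneg (by linarith) (sq_nonneg _)) ha2.le
      show _ ≤ (q - p) * ((K N:ℝ) + c) ^ 2 / a ^ 2
      linarith
    have hφk : -|φ k₀| ≤ -φ k₀ := neg_le_neg (le_abs_self _)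
    simp only [hc₁'def, hc₀'def]
    linarith
  -- squeeze
  have hULim : Tendsto (fun N : ℕ => ((q - p) * N + c₁ * Real.sqrt N + c₀) / N) atTop
      (nhds (q - p)) := by
    have h2 : Tendsto (fun N : ℕ => (q - p) + (c₁ * Real.sqrt N + c₀) / N) atTop
        (nhds ((q - p) + 0)) := tendsto_const_nhds.add (tendsto_err c₁ c₀)
    rw [add_zero] at h2
    apply h2.congr'
    filter_upwards [eventually_ge_atTop 1] with N hN
    have hN0 : (0:ℝ) < N := by exact_mod_cast hN
    field_simp
    ring
  have hLLim : Tendsto (fun N : ℕ => ((q - p) * N - c₁' * Real.sqrt N - c₀') / N) atTop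
      (nhds (q - p)) := by
    have h2 : Tendsto (fun N : ℕ => (q - p) + ((-c₁') * Real.sqrt N + (-c₀')) / N) atTop
        (nhds ((q - p) + 0)) := tendsto_const_nhds.add (tendsto_err (-c₁') (-c₀'))
    rw [add_zero] at h2
    apply h2.congr'
    filter_upwards [eventually_ge_atTop 1] with N hN
    have hN0 : (0:ℝ) < N := by exact_mod_cast hN
    field_simp
    ring
  have final : Tendsto (fun N : ℕ => ((cnt N).card : ℝ) / N) atTop (nhds (q - p)) := by
    apply tendsto_of_tendsto_of_tendsto_of_le_of_le' hLLim hULim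
    · filter_upwards [lower, eventually_ge_atTop 1] with N h hN
      have hN0 : (0:ℝ) < N := by exact_mod_cast hN
      exact (div_le_div_iff_of_pos_right hN0).2 h
    · filter_upwards [upper, eventually_ge_atTop 1] with N h hN
      have hN0 : (0:ℝ) < N := by exact_mod_cast hN
      exact (div_le_div_iff_of_pos_right hN0).2 h
  exact final

lemma cos_mem_iff (u v : ℝ) (hu : -1 < u) (huv : u ≤ v) (hv : v < 1) (y : ℝ) :
    Real.cos (2 * Real.pi * y) ∈ Set.Icc u v ↔
      (Int.fract y ∈ Set.Icc (Real.arccos v / (2 * Real.pi)) (Real.arccos u / (2 * Real.pi)) ∨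
       Int.fract y ∈ Set.Icc (1 - Real.arccos u / (2 * Real.pi))
         (1 - Real.arccos v / (2 * Real.pi))) := by
  have hπ : 0 < Real.pi := Real.pi_pos
  set t₁ : ℝ := Real.arccos v / (2 * Real.pi) with ht₁
  set t₂ : ℝ := Real.arccos u / (2 * Real.pi) with ht₂
  have hav : 0 < Real.arccos v := Real.arccos_pos.2 hv
  have hau : Real.arccos u < Real.pi :=
    lt_of_le_of_ne (Real.arccos_le_pi u) (fun h => absurd (Real.arccos_eq_pi.1 h) (by linarith))
  have hmon : Real.arccos v ≤ Real.arccos u := by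
    rw [Real.arccos_eq_pi_div_two_sub_arcsin, Real.arccos_eq_pi_div_two_sub_arcsin]
    have := Real.monotone_arcsin huv
    linarith
  have ht1pos : 0 < t₁ := by positivity
  have ht12 : t₁ ≤ t₂ := by
    apply div_le_div_of_nonneg_right hmon
    positivity
  have ht2half : t₂ < 1 / 2 := by
    rw [ht₂, div_lt_iff₀ (by positivity)]
    linarith
  -- reduce to fract
  have hfr : Real.cos (2 * Real.pi * y) = Real.cos (2 * Real.pi * Int.fract y) := by
    have h0 : 2 * Real.pi * y = 2 * Real.pi * Int.fract y + (⌊y⌋ : ℤ) * (2 * Real.pi) := by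
      rw [Int.fract]; ring
    rw [h0, Real.cos_add_int_mul_two_pi]
  rw [hfr]
  set w : ℝ := Int.fract y with hw
  have hw0 : 0 ≤ w := Int.fract_nonneg y
  have hw1 : w < 1 := Int.fract_lt_one y
  -- main helper for w in [0, 1/2]
  have main : ∀ z : ℝ, 0 ≤ z → z ≤ 1 / 2 →
      (Real.cos (2 * Real.pi * z) ∈ Set.Icc u v ↔ z ∈ Set.Icc t₁ t₂) := by
    intro z hz0 hz1
    have hz0' : 0 ≤ 2 * Real.pi * z := by positivity
    have hz1' : 2 * Real.pi * z ≤ Real.pi := by nlinarith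
    have hmem : 2 * Real.pi * z ∈ Set.Icc 0 Real.pi := ⟨hz0', hz1'⟩
    have hmemv : Real.arccos v ∈ Set.Icc 0 Real.pi :=
      ⟨Real.arccos_nonneg v, Real.arccos_le_pi v⟩
    have hmemu : Real.arccos u ∈ Set.Icc 0 Real.pi :=
      ⟨Real.arccos_nonneg u, Real.arccos_le_pi u⟩
    have hcv : Real.cos (Real.arccos v) = v := Real.cos_arccos (by linarith) hv.le
    have hcu : Real.cos (Real.arccos u) = u := Real.cos_arccos hu.le (by linarith)
    constructor
    · rintro ⟨h1, h2⟩
      constructor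
      · rw [ht₁, div_le_iff₀ (by positivity)]
        have h4 := (Real.strictAntiOn_cos.le_iff_ge hmem hmemv).1
        rw [hcv] at h4
        have h3 := h4 h2
        linarith [mul_comm (2 * Real.pi) z]
      · rw [ht₂, le_div_iff₀ (by positivity)]
        have h4 := (Real.strictAntiOn_cos.le_iff_ge hmemu hmem).1
        rw [hcu] at h4
        have h3 := h4 h1
        linarith [mul_comm (2 * Real.pi) z]
    · rintro ⟨h1, h2⟩
      have h1' : Real.arccos v ≤ 2 * Real.pi * z := by
        rw [ht₁, div_le_iff₀ (by positivity)] at h1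
        linarith [mul_comm (2 * Real.pi) z]
      have h2' : 2 * Real.pi * z ≤ Real.arccos u := by
        rw [ht₂, le_div_iff₀ (by positivity)] at h2
        linarith [mul_comm (2 * Real.pi) z]
      constructor
      · have h4 := (Real.strictAntiOn_cos.le_iff_ge hmemu hmem).2
        rw [hcu] at h4
        exact h4 h2'
      · have h4 := (Real.strictAntiOn_cos.le_iff_ge hmem hmemv).2
        rw [hcv] at h4
        exact h4 h1'
  rcases le_or_gt w (1 / 2) with hhalf | hhalf
  · rw [main w hw0 hhalf]
    constructor
    · exact Or.inl
    · rintro (h | h)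
      · exact h
      · exfalso
        obtain ⟨h1, _⟩ := h
        simp only [Set.mem_Icc] at *
        linarith
  · have hcos : Real.cos (2 * Real.pi * w) = Real.cos (2 * Real.pi * (1 - w)) := by
      have : 2 * Real.pi * (1 - w) = 2 * Real.pi - 2 * Real.pi * w := by ring
      rw [this, Real.cos_two_pi_sub]
    rw [hcos, main (1 - w) (by linarith) (by linarith)]
    simp only [Set.mem_Icc]
    constructor
    · rintro ⟨h1, h2⟩
      right
      constructor <;> linarith
    · rintro (⟨h1, h2⟩ | ⟨h1, h2⟩)
      · exfalso; linarith
      · constructor <;> linarith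

lemma integral_eval (C α β : ℝ) (hC : 0 < C) (hα : -C < α) (hαβ : α ≤ β) (hβ : β < C) :
    ∫ y in α..β, 1 / (Real.pi * Real.sqrt (C ^ 2 - y ^ 2))
      = Real.arcsin (β / C) / Real.pi - Real.arcsin (α / C) / Real.pi := by
  have hπ : 0 < Real.pi := Real.pi_pos
  have hpos : ∀ y : ℝ, y ∈ Set.uIcc α β → 0 < C ^ 2 - y ^ 2 := by
    intro y hy
    rw [Set.uIcc_of_le hαβ, Set.mem_Icc] at hy
    nlinarith [hy.1, hy.2]
  apply intervalIntegral.integral_eq_sub_of_hasDerivAt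
  · intro y hy
    have hy2 := hpos y hy
    rw [Set.uIcc_of_le hαβ, Set.mem_Icc] at hy
    have h1 : y / C ≠ -1 := by
      intro h
      have : y = -C := by field_simp at h; linarith
      nlinarith
    have h2 : y / C ≠ 1 := by
      intro h
      have : y = C := by field_simp at h; linarith
      nlinarith
    have hd1 : HasDerivAt (fun z : ℝ => z / C) (1 / C) y := by
      simpa using (hasDerivAt_id y).div_const C
    have hd2 : HasDerivAt (fun z : ℝ => Real.arcsin (z / C))
        (1 / Real.sqrt (1 - (y / C) ^ 2) * (1 / C)) y :=
      by have := (Real.hasDerivAt_arcsin h1 h2).comp y hd1; exact this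
    have hd3 : HasDerivAt (fun z : ℝ => Real.arcsin (z / C) / Real.pi)
        ((1 / Real.sqrt (1 - (y / C) ^ 2) * (1 / C)) / Real.pi) y := hd2.div_const Real.pi
    refine hd3.congr_deriv ?_
    have hsq : Real.sqrt (1 - (y / C) ^ 2) = Real.sqrt (C ^ 2 - y ^ 2) / C := by
      have he : 1 - (y / C) ^ 2 = (C ^ 2 - y ^ 2) / C ^ 2 := by field_simp
      rw [he, Real.sqrt_div (by positivity), Real.sqrt_sq hC.le]
    rw [hsq]
    have hs : 0 < Real.sqrt (C ^ 2 - y ^ 2) := Real.sqrt_pos.2 hy2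
    field_simp
  · apply ContinuousOn.intervalIntegrable
    apply ContinuousOn.div continuousOn_const
    · exact continuousOn_const.mul ((continuous_const.sub (continuous_pow 2)).continuousOn.sqrt)
    · intro y hy
      have := hpos y hy
      have hs : 0 < Real.sqrt (C ^ 2 - y ^ 2) := Real.sqrt_pos.2 this
      positivity



/-- Arcsine law for sampled cosines: for `C > 0`, `a > 0`, `γ ∈ ℝ` and `[α,β] ⊆ (−C, C)`,
`(1/N)#{n ≤ N : C cos(2π(a√n+γ)) ∈ [α,β]} → ∫_α^β dy/(π√(C²−y²))`. -/
theorem stmt11 (C a γ : ℝ) (hC : 0 < C) (ha : 0 < a) (α β : ℝ)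
    (hα : -C < α) (hαβ : α ≤ β) (hβ : β < C) :
    Filter.Tendsto (fun N : ℕ =>
        (((Finset.Icc 1 N).filter fun n : ℕ =>
          C * Real.cos (2 * Real.pi * (a * Real.sqrt n + γ)) ∈ Set.Icc α β).card : ℝ) / N)
      Filter.atTop (nhds (∫ y in α..β, 1 / (Real.pi * Real.sqrt (C ^ 2 - y ^ 2)))) := by
  have hπ : 0 < Real.pi := Real.pi_pos
  set u : ℝ := α / C with hu_def
  set v : ℝ := β / C with hv_def
  have hu : -1 < u := by rw [hu_def, lt_div_iff₀ hC]; linarith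
  have hv : v < 1 := by rw [hv_def, div_lt_iff₀ hC]; linarith
  have huv : u ≤ v := by rw [hu_def, hv_def]; exact (div_le_div_iff_of_pos_right hC).2 hαβ
  set t₁ : ℝ := Real.arccos v / (2 * Real.pi) with ht₁def
  set t₂ : ℝ := Real.arccos u / (2 * Real.pi) with ht₂def
  have hav : 0 < Real.arccos v := Real.arccos_pos.2 hv
  have hau : Real.arccos u < Real.pi :=
    lt_of_le_of_ne (Real.arccos_le_pi u) (fun h => absurd (Real.arccos_eq_pi.1 h) (by linarith))
  have hmon : Real.arccos v ≤ Real.arccos u := by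
    rw [Real.arccos_eq_pi_div_two_sub_arcsin, Real.arccos_eq_pi_div_two_sub_arcsin]
    have := Real.monotone_arcsin huv
    linarith
  have ht1pos : 0 < t₁ := by positivity
  have ht12 : t₁ ≤ t₂ := by
    apply div_le_div_of_nonneg_right hmon
    positivity
  have ht2half : t₂ < 1 / 2 := by
    rw [ht₂def, div_lt_iff₀ (by positivity)]
    linarith
  have hmemiff : ∀ n : ℕ,
      (C * Real.cos (2 * Real.pi * (a * Real.sqrt n + γ)) ∈ Set.Icc α β)
      ↔ (Int.fract (a * Real.sqrt n + γ) ∈ Set.Icc t₁ t₂ ∨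
         Int.fract (a * Real.sqrt n + γ) ∈ Set.Icc (1 - t₂) (1 - t₁)) := by
    intro n
    have h1 : C * Real.cos (2 * Real.pi * (a * Real.sqrt n + γ)) ∈ Set.Icc α β
        ↔ Real.cos (2 * Real.pi * (a * Real.sqrt n + γ)) ∈ Set.Icc u v := by
      simp only [Set.mem_Icc, hu_def, hv_def, div_le_iff₀ hC, le_div_iff₀ hC]
      constructor <;> rintro ⟨h2, h3⟩ <;> constructor <;>
        nlinarith [mul_comm C (Real.cos (2 * Real.pi * (a * Real.sqrt n + γ)))]
    rw [h1]
    exact cos_mem_iff u v hu huv hv _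
  have hdisj : ∀ N : ℕ, Disjoint
      ((Finset.Icc 1 N).filter fun n : ℕ =>
        Int.fract (a * Real.sqrt n + γ) ∈ Set.Icc t₁ t₂)
      ((Finset.Icc 1 N).filter fun n : ℕ =>
        Int.fract (a * Real.sqrt n + γ) ∈ Set.Icc (1 - t₂) (1 - t₁)) := by
    intro N
    rw [Finset.disjoint_left]
    intro n hn1 hn2
    simp only [Finset.mem_filter, Set.mem_Icc] at hn1 hn2
    linarith [hn1.2.2, hn2.2.1]
  have hsplit : ∀ N : ℕ, (((Finset.Icc 1 N).filter fun n : ℕ =>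
        C * Real.cos (2 * Real.pi * (a * Real.sqrt n + γ)) ∈ Set.Icc α β).card : ℝ)
      = (((Finset.Icc 1 N).filter fun n : ℕ =>
          Int.fract (a * Real.sqrt n + γ) ∈ Set.Icc t₁ t₂).card : ℝ)
      + (((Finset.Icc 1 N).filter fun n : ℕ =>
          Int.fract (a * Real.sqrt n + γ) ∈ Set.Icc (1 - t₂) (1 - t₁)).card : ℝ) := by
    intro N
    rw [Finset.filter_congr (fun n _ => hmemiff n), Finset.filter_or,
      Finset.card_union_of_disjoint (hdisj N)]
    push_cast
    ring
  have hd1 := density_fract a γ t₁ t₂ ha ht1pos ht12 (by linarith)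
  have hd2 := density_fract a γ (1 - t₂) (1 - t₁) ha (by linarith) (by linarith) (by linarith)
  have hsum := hd1.add hd2
  have hval : (t₂ - t₁) + ((1 - t₁) - (1 - t₂))
      = ∫ y in α..β, 1 / (Real.pi * Real.sqrt (C ^ 2 - y ^ 2)) := by
    rw [integral_eval C α β hC hα hαβ hβ]
    simp only [ht₁def, ht₂def, Real.arccos_eq_pi_div_two_sub_arcsin, ← hu_def, ← hv_def]
    field_simp
    ring
  rw [← hval]
  apply hsum.congr
  intro N
  rw [hsplit N, add_div]
end

section
/- For N → ∞, the number of n ≤ N for which Braak's local conclusion fails — i.e., n is 'bad' in the sense that |cos(4g√m − π/4)| ≤ m^{−1/4+δ} for some m ∈ {n−2, …, n+2} — is O(N^{3/4+δ}) for any fixed δ ∈ (0, 1/4) and g > 0. -/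
open scoped Classical
open Real Finset

lemma jordan_class {x ε : ℝ} (hε : 0 ≤ ε) (h : |Real.cos x| ≤ ε) :
    ∃ k : ℤ, |x - Real.pi / 2 - k * Real.pi| ≤ Real.pi / 2 * ε := by
  set k : ℤ := round ((x - Real.pi / 2) / Real.pi) with hk
  refine ⟨k, ?_⟩
  set r : ℝ := x - Real.pi / 2 - k * Real.pi with hr
  have hπ := Real.pi_pos
  have hr2 : |r| ≤ Real.pi / 2 := by
    have h1 : |(x - Real.pi / 2) / Real.pi - k| ≤ 1 / 2 := abs_sub_round _
    have : r = ((x - Real.pi / 2) / Real.pi - k) * Real.pi := by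
      field_simp [hr]; ring
    rw [this, abs_mul, abs_of_pos hπ]
    calc |(x - Real.pi / 2) / Real.pi - ↑k| * Real.pi ≤ 1 / 2 * Real.pi := by
          exact mul_le_mul_of_nonneg_right h1 hπ.le
      _ = Real.pi / 2 := by ring
  have hcos : |Real.cos x| = |Real.sin r| := by
    have : x = r + Real.pi / 2 + k * Real.pi := by rw [hr]; ring
    rw [this, Real.cos_add_int_mul_pi, abs_mul, Real.cos_add_pi_div_two, abs_neg]
    have : |((-1 : ℝ)) ^ k| = 1 := by
      rcases Int.even_or_odd k with he | ho
      · rw [he.neg_one_zpow]; simp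
      · rw [Odd.neg_one_zpow ho]; simp
    rw [this, one_mul]
  have hjordan : 2 / Real.pi * |r| ≤ |Real.sin r| := by
    rcases abs_cases r with ⟨h1, h2⟩ | ⟨h1, h2⟩
    · rw [h1]
      calc 2 / Real.pi * r ≤ Real.sin r := Real.mul_le_sin (by linarith [abs_nonneg r, h1]) (by rw [← h1]; exact hr2)
        _ ≤ |Real.sin r| := le_abs_self _
    · rw [h1]
      have : 2 / Real.pi * (-r) ≤ Real.sin (-r) :=
        Real.mul_le_sin (by linarith) (by rw [← h1]; exact hr2)
      rw [Real.sin_neg] at this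
      calc 2 / Real.pi * (-r) ≤ -Real.sin r := this
        _ ≤ |Real.sin r| := neg_le_abs _
  have : 2 / Real.pi * |r| ≤ ε := by
    calc 2 / Real.pi * |r| ≤ |Real.sin r| := hjordan
      _ = |Real.cos x| := hcos.symm
      _ ≤ ε := h
  calc |r| = Real.pi / 2 * (2 / Real.pi * |r|) := by field_simp
    _ ≤ Real.pi / 2 * ε := by
        exact mul_le_mul_of_nonneg_left this (by positivity)

lemma class_card {g ε : ℝ} (hg : 0 < g) (hε : 0 ≤ ε) (M : ℕ) (c : ℝ) :
    (((Finset.Ioc M (2*M)).filter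
        (fun m : ℕ => |4 * g * Real.sqrt (m:ℝ) - c| ≤ Real.pi / 2 * ε)).card : ℝ)
      ≤ Real.pi * ε * Real.sqrt (2*M) / g + 3 := by
  have hπ := Real.pi_pos
  set S := (Finset.Ioc M (2*M)).filter
      (fun m : ℕ => |4 * g * Real.sqrt (m:ℝ) - c| ≤ Real.pi / 2 * ε) with hS
  rcases S.eq_empty_or_nonempty with he | ⟨m0, hm0⟩
  · rw [he]; simp; positivity
  · set B : ℝ := Real.pi * ε * Real.sqrt (2*M) / (2*g) with hB
    have hB0 : 0 ≤ B := by positivity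
    set D : ℕ := ⌈B⌉₊ with hD
    have key : ∀ m ∈ S, |(m : ℝ) - (m0 : ℝ)| ≤ B := by
      intro m hm
      simp only [hS, Finset.mem_filter, Finset.mem_Ioc] at hm hm0
      obtain ⟨⟨hm1, hm2⟩, hm3⟩ := hm
      obtain ⟨⟨hn1, hn2⟩, hn3⟩ := hm0
      have hs1 : |Real.sqrt m - Real.sqrt m0| ≤ Real.pi * ε / (4*g) := by
        have h5 : |4 * g * (Real.sqrt m - Real.sqrt m0)| ≤ Real.pi * ε := by
          have e : 4 * g * (Real.sqrt m - Real.sqrt m0)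
              = (4 * g * Real.sqrt (m:ℝ) - c) - (4 * g * Real.sqrt (m0:ℝ) - c) := by ring
          rw [e]
          calc |(4 * g * Real.sqrt (m:ℝ) - c) - (4 * g * Real.sqrt (m0:ℝ) - c)|
              ≤ |4 * g * Real.sqrt (m:ℝ) - c| + |4 * g * Real.sqrt (m0:ℝ) - c| := abs_sub _ _
            _ ≤ Real.pi * ε := by linarith
        rw [abs_mul, abs_of_pos (by linarith : (0:ℝ) < 4*g)] at h5
        rw [le_div_iff₀ (by linarith : (0:ℝ) < 4*g)]
        linarith
      have hsum : Real.sqrt m + Real.sqrt m0 ≤ 2 * Real.sqrt (2*M) := by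
        have h1 : Real.sqrt m ≤ Real.sqrt (2*M) := by
          apply Real.sqrt_le_sqrt; exact_mod_cast hm2
        have h2 : Real.sqrt m0 ≤ Real.sqrt (2*M) := by
          apply Real.sqrt_le_sqrt; exact_mod_cast hn2
        push_cast at h1 h2 ⊢
        linarith
      have hprod : |(m : ℝ) - (m0 : ℝ)|
          = |Real.sqrt m - Real.sqrt m0| * (Real.sqrt m + Real.sqrt m0) := by
        rw [← abs_of_nonneg (by positivity : (0:ℝ) ≤ Real.sqrt m + Real.sqrt m0), ← abs_mul]
        congr 1
        have e1 : Real.sqrt (m:ℝ) * Real.sqrt (m:ℝ) = (m:ℝ) :=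
          Real.mul_self_sqrt (Nat.cast_nonneg m)
        have e2 : Real.sqrt (m0:ℝ) * Real.sqrt (m0:ℝ) = (m0:ℝ) :=
          Real.mul_self_sqrt (Nat.cast_nonneg m0)
        nlinarith [e1, e2]
      rw [hprod]
      calc |Real.sqrt m - Real.sqrt m0| * (Real.sqrt m + Real.sqrt m0)
          ≤ (Real.pi * ε / (4*g)) * (2 * Real.sqrt (2*M)) := by
            apply mul_le_mul hs1 hsum (by positivity) (by positivity)
        _ = B := by rw [hB]; ring
    have hsub : S ⊆ Finset.Icc (m0 - D) (m0 + D) := by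
      intro m hm
      have h := key m hm
      rw [abs_le] at h
      have hBD : B ≤ (D : ℝ) := Nat.le_ceil B
      rw [Finset.mem_Icc]
      constructor
      · rw [tsub_le_iff_right]
        have : (m0 : ℝ) ≤ (m : ℝ) + D := by linarith
        exact_mod_cast this
      · have : (m : ℝ) ≤ (m0 : ℝ) + D := by linarith
        exact_mod_cast this
    calc (S.card : ℝ) ≤ ((Finset.Icc (m0 - D) (m0 + D)).card : ℝ) := by
          exact_mod_cast Finset.card_le_card hsub
      _ ≤ 2 * D + 1 := by
          rw [Nat.card_Icc]
          have : (m0 + D + 1) - (m0 - D) ≤ 2 * D + 1 := by omega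
          exact_mod_cast this
      _ ≤ 2 * (B + 1) + 1 := by
          have := Nat.ceil_lt_add_one hB0
          have : (D : ℝ) ≤ B + 1 := by rw [hD]; linarith [Nat.ceil_lt_add_one hB0]
          linarith
      _ = Real.pi * ε * Real.sqrt (2*M) / g + 3 := by rw [hB]; field_simp; ring

set_option maxHeartbeats 1000000 in
lemma dyadic_bound {g δ : ℝ} (hg : 0 < g) (hδ : δ ∈ Set.Ioo (0:ℝ) (1/4)) (M : ℕ) (hM : 1 ≤ M) :
    (((Finset.Ioc M (2*M)).filter (fun m : ℕ =>
        |Real.cos (4 * g * Real.sqrt m - Real.pi / 4)| ≤ (m:ℝ) ^ (-(1/4:ℝ)+δ))).card : ℝ)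
      ≤ (23 + 6*g + 30/g) * (M:ℝ) ^ ((3/4:ℝ)+δ) := by
  obtain ⟨hδ0, hδ1⟩ := hδ
  have hπ := Real.pi_pos
  have hπ3 := Real.pi_gt_three
  have hπ4 := Real.pi_le_four
  have hM0 : (0:ℝ) < (M:ℝ) := by exact_mod_cast hM
  have hM1 : (1:ℝ) ≤ (M:ℝ) := by exact_mod_cast hM
  obtain ⟨ε, hεdef⟩ : ∃ e : ℝ, e = (M:ℝ) ^ (-(1/4:ℝ)+δ) := ⟨_, rfl⟩
  have hε0 : 0 ≤ ε := hεdef ▸ Real.rpow_nonneg hM0.le _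
  have hε1 : ε ≤ 1 := hεdef ▸ Real.rpow_le_one_of_one_le_of_nonpos hM1 (by linarith)
  obtain ⟨P, hPdef⟩ : ∃ p : ℝ, p = (M:ℝ) ^ ((3/4:ℝ)+δ) := ⟨_, rfl⟩
  have hP1 : 1 ≤ P := hPdef ▸ Real.one_le_rpow hM1 (by linarith)
  obtain ⟨sM, hsM⟩ : ∃ sm : ℝ, sm = Real.sqrt (2 * (M:ℝ)) := ⟨_, rfl⟩
  have hsM0 : 0 ≤ sM := hsM ▸ Real.sqrt_nonneg _
  have hsM1 : 1 ≤ sM := by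
    rw [hsM, show (1:ℝ) = Real.sqrt 1 from (Real.sqrt_one).symm]
    apply Real.sqrt_le_sqrt; linarith
  have hsMsq : sM * sM = 2 * (M:ℝ) := by
    rw [hsM]; exact Real.mul_self_sqrt (by linarith)
  have hsqrt2 : Real.sqrt 2 ≤ 1.5 := by
    nlinarith [Real.sq_sqrt (by norm_num : (0:ℝ) ≤ 2), Real.sqrt_nonneg 2]
  have hsM15 : sM ≤ 1.5 * Real.sqrt (M:ℝ) := by
    rw [hsM, Real.sqrt_mul (by norm_num : (0:ℝ) ≤ 2)]
    have := mul_le_mul_of_nonneg_right hsqrt2 (Real.sqrt_nonneg (M:ℝ))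
    linarith
  have hsqMP : Real.sqrt (M:ℝ) ≤ P := by
    rw [Real.sqrt_eq_rpow, hPdef]
    
    exact Real.rpow_le_rpow_of_exponent_le hM1 (by linarith)
  have hεsqMP : ε * Real.sqrt (M:ℝ) ≤ P := by
    rw [hεdef, Real.sqrt_eq_rpow, ← Real.rpow_add hM0, hPdef]
    
    exact Real.rpow_le_rpow_of_exponent_le hM1 (by linarith)
  have hMεP : (M:ℝ) * ε = P := by
    rw [hεdef, hPdef, show (3/4:ℝ)+δ = 1 + (-(1/4:ℝ)+δ) by ring,
      Real.rpow_add hM0 1 (-(1/4:ℝ)+δ), Real.rpow_one]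
  rw [← hPdef]
  have hab : (4*g*sM/Real.pi) * (Real.pi * ε * sM / g) = 8 * P := by
    rw [← hMεP]
    field_simp
    linear_combination (4*ε) * hsMsq
  have hgsM : g * sM ≤ 1.5 * (g * P) := by
    have h1 := mul_le_mul_of_nonneg_left hsM15 hg.le
    have h2 := mul_le_mul_of_nonneg_left hsqMP (by positivity : (0:ℝ) ≤ 1.5*g)
    linarith [h1, h2]
  have h3a : 3 * (4*g*sM/Real.pi) ≤ 6*g*P := by
    rw [show 3 * (4*g*sM/Real.pi) = 12*(g*sM)/Real.pi by ring, div_le_iff₀ hπ]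
    have hgP : (0:ℝ) ≤ g * P := mul_nonneg hg.le (by linarith)
    have h2 : (0:ℝ) ≤ (g * P) * (Real.pi - 3) := mul_nonneg hgP (by linarith)
    nlinarith [hgsM, h2]
  have hεsM : ε * sM ≤ 1.5 * (ε * Real.sqrt (M:ℝ)) := by
    have h1 := mul_le_mul_of_nonneg_left hsM15 hε0
    linarith [h1]
  have h5b : 5 * (Real.pi * ε * sM / g) ≤ (30/g) * P := by
    rw [show 5 * (Real.pi * ε * sM / g) = 5*Real.pi*(ε*sM)/g by ring,
      show (30/g) * P = 30*P/g by ring]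
    have hnum : 5*Real.pi*(ε*sM) ≤ 30*P := by
      have h0 : (0:ℝ) ≤ ε * sM := mul_nonneg hε0 hsM0
      have h2 : (0:ℝ) ≤ (ε * sM) * (4 - Real.pi) := mul_nonneg h0 (by linarith)
      nlinarith [hεsM, hεsqMP, h2, h0]
    exact div_le_div_of_nonneg_right hnum hg.le
  obtain ⟨klo, hklo', hklo''⟩ : ∃ k : ℤ, (k:ℝ) ≤ 4*g/Real.pi - 2 ∧ 4*g/Real.pi - 3 ≤ (k:ℝ) := by
    refine ⟨⌊4*g/Real.pi⌋ - 2, ?_, ?_⟩ <;> push_cast <;>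
      [linarith [Int.floor_le (4*g/Real.pi)]; linarith [Int.lt_floor_add_one (4*g/Real.pi)]]
  obtain ⟨khi, hkhi', hkhi''⟩ : ∃ k : ℤ, 4*g*sM/Real.pi ≤ (k:ℝ) ∧ (k:ℝ) ≤ 4*g*sM/Real.pi + 1 := by
    exact ⟨⌈4*g*sM/Real.pi⌉, Int.le_ceil _, by linarith [Int.ceil_lt_add_one (4*g*sM/Real.pi)]⟩
  have hsub : (Finset.Ioc M (2*M)).filter (fun m : ℕ =>
        |Real.cos (4 * g * Real.sqrt m - Real.pi / 4)| ≤ (m:ℝ) ^ (-(1/4:ℝ)+δ)) ⊆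
      (Finset.Icc klo khi).biUnion (fun k => (Finset.Ioc M (2*M)).filter
        (fun m : ℕ => |4 * g * Real.sqrt (m:ℝ) - ((k:ℝ) * Real.pi + 3*Real.pi/4)|
          ≤ Real.pi/2 * ε)) := by
    intro m hm
    rw [Finset.mem_filter, Finset.mem_Ioc] at hm
    obtain ⟨⟨hm1, hm2⟩, hm3⟩ := hm
    have hmM : (M:ℝ) ≤ (m:ℝ) := by exact_mod_cast hm1.le
    have hm2' : (m:ℝ) ≤ 2*(M:ℝ) := by exact_mod_cast hm2
    have hsm1 : 1 ≤ Real.sqrt (m:ℝ) := by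
      rw [show (1:ℝ) = Real.sqrt 1 from (Real.sqrt_one).symm]
      apply Real.sqrt_le_sqrt; linarith
    have hsm2 : Real.sqrt (m:ℝ) ≤ sM := by
      rw [hsM]; exact Real.sqrt_le_sqrt hm2'
    have hcos : |Real.cos (4 * g * Real.sqrt m - Real.pi / 4)| ≤ ε := by
      rw [hεdef]
      refine hm3.trans ?_
      exact Real.rpow_le_rpow_of_nonpos hM0 hmM (by linarith)
    obtain ⟨k, hk⟩ := jordan_class hε0 hcos
    have hk' : |4 * g * Real.sqrt (m:ℝ) - ((k:ℝ) * Real.pi + 3*Real.pi/4)| ≤ Real.pi/2 * ε := by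
      have e : 4 * g * Real.sqrt (m:ℝ) - ((k:ℝ) * Real.pi + 3*Real.pi/4)
          = (4 * g * Real.sqrt m - Real.pi / 4) - Real.pi / 2 - (k:ℝ) * Real.pi := by ring
      rw [e]; exact hk
    have habs := abs_le.mp hk'
    have hπε : Real.pi/2 * ε ≤ Real.pi/2 := by
      calc Real.pi/2 * ε ≤ Real.pi/2 * 1 := by
            exact mul_le_mul_of_nonneg_left hε1 (by positivity)
        _ = Real.pi/2 := mul_one _
    have hgsm : 4*g ≤ 4*g*Real.sqrt (m:ℝ) := by
      calc 4*g = 4*g*1 := (mul_one _).symm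
        _ ≤ 4*g*Real.sqrt (m:ℝ) := mul_le_mul_of_nonneg_left hsm1 (by positivity)
    have hgsm2 : 4*g*Real.sqrt (m:ℝ) ≤ 4*g*sM := mul_le_mul_of_nonneg_left hsm2 (by positivity)
    rw [Finset.mem_biUnion]
    refine ⟨k, ?_, ?_⟩
    · rw [Finset.mem_Icc]
      constructor
      · have h1 : 4*g/Real.pi ≤ (k:ℝ) + 5/4 := by
          rw [div_le_iff₀ hπ, show ((k:ℝ) + 5/4) * Real.pi = (k:ℝ)*Real.pi + 5/4*Real.pi by ring]
          linarith [habs.2]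
        have : (klo:ℝ) ≤ (k:ℝ) := by linarith
        exact_mod_cast this
      · have h2 : (k:ℝ) ≤ 4*g*sM/Real.pi := by
          rw [le_div_iff₀ hπ]
          linarith [habs.1]
        have : (k:ℝ) ≤ (khi:ℝ) := by linarith
        exact_mod_cast this
    · rw [Finset.mem_filter, Finset.mem_Ioc]
      exact ⟨⟨hm1, hm2⟩, hk'⟩
  have hcard1 : (((Finset.Icc klo khi).card : ℝ)) ≤ 4*g*sM/Real.pi + 5 := by
    have hgg : 4*g/Real.pi ≤ 4*g*sM/Real.pi := by
      rw [div_le_div_iff₀ hπ hπ]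
      have h1 := mul_le_mul_of_nonneg_left hsM1 (by positivity : (0:ℝ) ≤ 4*g)
      have h2 : (0:ℝ) ≤ (4*g*sM - 4*g) * Real.pi := mul_nonneg (by linarith) hπ.le
      linarith
    have hle : 0 ≤ khi + 1 - klo := by
      have : (klo:ℝ) ≤ (khi:ℝ) + 1 := by linarith
      have h' : klo ≤ khi + 1 := by exact_mod_cast this
      omega
    have htn : ((khi + 1 - klo).toNat : ℤ) = khi + 1 - klo := Int.toNat_of_nonneg hle
    have htn' : ((khi + 1 - klo).toNat : ℝ) = (khi:ℝ) + 1 - (klo:ℝ) := by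
      exact_mod_cast htn
    rw [Int.card_Icc, htn']
    have h40 : (0:ℝ) ≤ 4*g/Real.pi := by positivity
    linarith
  have hclass : ∀ k ∈ Finset.Icc klo khi,
      (((Finset.Ioc M (2*M)).filter (fun m : ℕ =>
        |4 * g * Real.sqrt (m:ℝ) - ((k:ℝ) * Real.pi + 3*Real.pi/4)| ≤ Real.pi/2 * ε)).card : ℝ)
      ≤ Real.pi * ε * sM / g + 3 := by
    intro k _
    rw [hsM]
    exact class_card hg hε0 M _
  calc (((Finset.Ioc M (2*M)).filter (fun m : ℕ =>
        |Real.cos (4 * g * Real.sqrt m - Real.pi / 4)| ≤ (m:ℝ) ^ (-(1/4:ℝ)+δ))).card : ℝ)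
      ≤ (((Finset.Icc klo khi).biUnion (fun k => (Finset.Ioc M (2*M)).filter
        (fun m : ℕ => |4 * g * Real.sqrt (m:ℝ) - ((k:ℝ) * Real.pi + 3*Real.pi/4)|
          ≤ Real.pi/2 * ε))).card : ℝ) := by
        exact_mod_cast Finset.card_le_card hsub
    _ ≤ ∑ k ∈ Finset.Icc klo khi, (((Finset.Ioc M (2*M)).filter
        (fun m : ℕ => |4 * g * Real.sqrt (m:ℝ) - ((k:ℝ) * Real.pi + 3*Real.pi/4)|
          ≤ Real.pi/2 * ε)).card : ℝ) := by
        exact_mod_cast Finset.card_biUnion_le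
    _ ≤ ((Finset.Icc klo khi).card : ℝ) * (Real.pi * ε * sM / g + 3) := by
        have h := Finset.sum_le_card_nsmul (Finset.Icc klo khi) _ (Real.pi * ε * sM / g + 3) hclass
        rw [nsmul_eq_mul] at h
        exact h
    _ ≤ (4*g*sM/Real.pi + 5) * (Real.pi * ε * sM / g + 3) := by
        apply mul_le_mul_of_nonneg_right hcard1 (by positivity)
    _ ≤ (23 + 6*g + 30/g) * P := by
        have hexp : (4*g*sM/Real.pi + 5) * (Real.pi * ε * sM / g + 3)
            = (4*g*sM/Real.pi) * (Real.pi * ε * sM / g) + 3 * (4*g*sM/Real.pi)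
              + 5 * (Real.pi * ε * sM / g) + 15 := by ring
        rw [hexp, hab]
        have h15 : (15:ℝ) ≤ 15 * P := by linarith
        have hrhs : (23 + 6*g + 30/g) * P = 8*P + 6*g*P + (30/g)*P + 15*P := by ring
        linarith

set_option maxHeartbeats 1000000 in
/-- The number of `n ≤ N` that are 'bad' in the sense that
`|cos(4g√m − π/4)| ≤ m^{−1/4+δ}` for some `m ∈ {n−2,…,n+2}` is `O(N^{3/4+δ})`. -/
theorem stmt18 (g δ : ℝ) (hg : 0 < g) (hδ : δ ∈ Set.Ioo (0 : ℝ) (1/4)) :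
    ∃ c : ℝ, 0 < c ∧ ∀ N : ℕ, 1 ≤ N →
      (((Finset.Icc 1 N).filter fun n : ℕ =>
          ∃ m ∈ Finset.Icc (n - 2) (n + 2),
            |Real.cos (4 * g * Real.sqrt m - Real.pi / 4)| ≤ (m : ℝ) ^ (-(1/4 : ℝ) + δ)).card : ℝ)
        ≤ c * (N : ℝ) ^ ((3/4 : ℝ) + δ) := by
  obtain ⟨hδ0, hδ1⟩ := hδ
  have hCg : (0:ℝ) < 23 + 6*g + 30/g := by
    have : (0:ℝ) < 30/g := div_pos (by norm_num) hg
    linarith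
  refine ⟨15 + 60*(23 + 6*g + 30/g), by linarith, ?_⟩
  intro N hN
  have hN1 : (1:ℝ) ≤ (N:ℝ) := by exact_mod_cast hN
  obtain ⟨s, hs⟩ : ∃ s : ℝ, s = (3/4:ℝ) + δ := ⟨_, rfl⟩
  rw [← hs]
  have hs34 : (3/4:ℝ) ≤ s := by rw [hs]; linarith
  have hs1 : s ≤ 1 := by rw [hs]; linarith
  have hs0 : (0:ℝ) ≤ s := by linarith
  obtain ⟨N', hN'⟩ : ∃ n : ℕ, n = N + 2 := ⟨_, rfl⟩
  obtain ⟨J, hJ⟩ : ∃ j : ℕ, j = Nat.log 2 N' := ⟨_, rfl⟩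
  obtain ⟨BadM, hBadM⟩ : ∃ B : Finset ℕ, B = (Finset.Icc 1 N').filter (fun m : ℕ =>
      |Real.cos (4 * g * Real.sqrt m - Real.pi / 4)| ≤ (m:ℝ) ^ (-(1/4:ℝ)+δ)) := ⟨_, rfl⟩
  -- Step 2 material (independent of the goal's filter)
  have hstep2 : BadM.card ≤ 1 + ∑ j ∈ Finset.range (J+1),
      ((Finset.Ioc (2^j) (2*2^j)).filter (fun m : ℕ =>
        |Real.cos (4 * g * Real.sqrt m - Real.pi / 4)| ≤ (m:ℝ) ^ (-(1/4:ℝ)+δ))).card := by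
    have hsub2 : BadM ⊆ insert 1 ((Finset.range (J+1)).biUnion (fun j =>
        (Finset.Ioc (2^j) (2*2^j)).filter (fun m : ℕ =>
          |Real.cos (4 * g * Real.sqrt m - Real.pi / 4)| ≤ (m:ℝ) ^ (-(1/4:ℝ)+δ)))) := by
      intro m hm
      rw [hBadM, Finset.mem_filter, Finset.mem_Icc] at hm
      obtain ⟨⟨hm1, hm2⟩, hbad⟩ := hm
      rcases eq_or_lt_of_le hm1 with h1 | h1
      · exact Finset.mem_insert.mpr (Or.inl h1.symm)
      · apply Finset.mem_insert_of_mem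
        rw [Finset.mem_biUnion]
        refine ⟨Nat.log 2 (m-1), ?_, ?_⟩
        · rw [Finset.mem_range, hJ]
          have := Nat.log_mono_right (show m - 1 ≤ N' by omega) (b := 2)
          omega
        · rw [Finset.mem_filter, Finset.mem_Ioc]
          have h2 : 2^(Nat.log 2 (m-1)) ≤ m - 1 := Nat.pow_log_le_self 2 (by omega)
          have h3 : m - 1 < 2^(Nat.log 2 (m-1) + 1) := Nat.lt_pow_succ_log_self (by norm_num) _
          have h4 : 2^(Nat.log 2 (m-1) + 1) = 2 * 2^(Nat.log 2 (m-1)) := by ring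
          exact ⟨⟨by omega, by omega⟩, hbad⟩
    calc BadM.card ≤ (insert 1 ((Finset.range (J+1)).biUnion (fun j =>
        (Finset.Ioc (2^j) (2*2^j)).filter (fun m : ℕ =>
          |Real.cos (4 * g * Real.sqrt m - Real.pi / 4)| ≤ (m:ℝ) ^ (-(1/4:ℝ)+δ))))).card :=
          Finset.card_le_card hsub2
      _ ≤ ((Finset.range (J+1)).biUnion (fun j =>
        (Finset.Ioc (2^j) (2*2^j)).filter (fun m : ℕ =>
          |Real.cos (4 * g * Real.sqrt m - Real.pi / 4)| ≤ (m:ℝ) ^ (-(1/4:ℝ)+δ)))).card + 1 :=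
          Finset.card_insert_le _ _
      _ ≤ 1 + ∑ j ∈ Finset.range (J+1), ((Finset.Ioc (2^j) (2*2^j)).filter (fun m : ℕ =>
          |Real.cos (4 * g * Real.sqrt m - Real.pi / 4)| ≤ (m:ℝ) ^ (-(1/4:ℝ)+δ))).card := by
          have := Finset.card_biUnion_le (s := Finset.range (J+1)) (t := fun j =>
            (Finset.Ioc (2^j) (2*2^j)).filter (fun m : ℕ =>
              |Real.cos (4 * g * Real.sqrt m - Real.pi / 4)| ≤ (m:ℝ) ^ (-(1/4:ℝ)+δ)))
          omega
  -- the geometric ratio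
  obtain ⟨r, hr⟩ : ∃ r : ℝ, r = (2:ℝ) ^ s := ⟨_, rfl⟩
  have h2_34 : (1.6:ℝ) ≤ (2:ℝ) ^ ((3/4:ℝ)) := by
    have hb : (0:ℝ) ≤ (2:ℝ) ^ ((3/4:ℝ)) := Real.rpow_nonneg (by norm_num) _
    have hpow : ((2:ℝ) ^ ((3/4:ℝ)))^(4:ℕ) = 8 := by
      rw [← Real.rpow_natCast ((2:ℝ) ^ ((3/4:ℝ))) 4, ← Real.rpow_mul (by norm_num)]
      norm_num
    apply le_of_pow_le_pow_left₀ (n := 4) (by norm_num) hb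
    rw [hpow]; norm_num
  have hr16 : (1.6:ℝ) ≤ r := by
    refine h2_34.trans ?_
    rw [hr]
    exact Real.rpow_le_rpow_of_exponent_le (by norm_num) hs34
  have hr2 : r ≤ 2 := by
    rw [hr]
    calc (2:ℝ) ^ s ≤ (2:ℝ) ^ (1:ℝ) := Real.rpow_le_rpow_of_exponent_le (by norm_num) hs1
      _ = 2 := Real.rpow_one 2
  have hrpow : ∀ j : ℕ, (((2:ℕ)^j : ℕ):ℝ) ^ s = r ^ j := by
    intro j
    push_cast
    rw [← Real.rpow_natCast (2:ℝ) j, ← Real.rpow_mul (by norm_num), mul_comm,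
      Real.rpow_mul (by norm_num), Real.rpow_natCast, hr]
  have hNs1 : (1:ℝ) ≤ (N:ℝ) ^ s := Real.one_le_rpow hN1 hs0
  have hN'N : ((N':ℕ):ℝ) ^ s ≤ 3 * (N:ℝ) ^ s := by
    have h1 : ((N':ℕ):ℝ) ≤ 3 * (N:ℝ) := by
      rw [hN']; push_cast; linarith
    calc ((N':ℕ):ℝ) ^ s ≤ (3 * (N:ℝ)) ^ s := by
          apply Real.rpow_le_rpow (by positivity) h1 hs0
      _ = (3:ℝ)^s * (N:ℝ)^s := Real.mul_rpow (by norm_num) (by positivity)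
      _ ≤ 3 * (N:ℝ)^s := by
          have h3 : (3:ℝ)^s ≤ (3:ℝ)^(1:ℝ) := Real.rpow_le_rpow_of_exponent_le (by norm_num) hs1
          rw [Real.rpow_one] at h3
          have h0 : (0:ℝ) ≤ (N:ℝ)^s := by positivity
          nlinarith
  have hgeom : ∑ j ∈ Finset.range (J+1), r ^ j ≤ 4 * ((N':ℕ):ℝ) ^ s := by
    have hrne : r ≠ 1 := by intro h; rw [h] at hr16; norm_num at hr16
    rw [geom_sum_eq hrne]
    have h2J : ((2:ℕ)^J : ℕ) ≤ N' := by
      rw [hJ]; exact Nat.pow_log_le_self 2 (by omega)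
    have hrJ : r ^ J ≤ ((N':ℕ):ℝ) ^ s := by
      rw [← hrpow J]
      apply Real.rpow_le_rpow (by positivity) (by exact_mod_cast h2J) hs0
    have hN's : (0:ℝ) < ((N':ℕ):ℝ) ^ s := by
      have h00 : (0:ℝ) < ((N':ℕ):ℝ) := by rw [hN']; push_cast; linarith
      positivity
    have hrJ1 : r ^ (J+1) ≤ 2 * ((N':ℕ):ℝ) ^ s := by
      rw [pow_succ]
      have h0 : (0:ℝ) ≤ r ^ J := by positivity
      nlinarith
    rw [div_le_iff₀ (by linarith : (0:ℝ) < r - 1)]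
    nlinarith [hN's, hrJ1]
  have hdyad : ∀ j ∈ Finset.range (J+1),
      (((Finset.Ioc ((2:ℕ)^j) (2*2^j)).filter (fun m : ℕ =>
        |Real.cos (4 * g * Real.sqrt m - Real.pi / 4)| ≤ (m:ℝ) ^ (-(1/4:ℝ)+δ))).card : ℝ)
      ≤ (23 + 6*g + 30/g) * r ^ j := by
    intro j _
    rw [← hrpow j]
    have h1 : (3/4:ℝ) + δ = s := hs.symm
    rw [← h1] at *
    exact dyadic_bound hg ⟨hδ0, hδ1⟩ (2^j) (Nat.one_le_pow j 2 (by norm_num))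
  have hmain : (BadM.card : ℝ) ≤ 1 + (23 + 6*g + 30/g) * (4 * ((N':ℕ):ℝ) ^ s) := by
    calc (BadM.card : ℝ) ≤ 1 + ∑ j ∈ Finset.range (J+1),
        (((Finset.Ioc ((2:ℕ)^j) (2*2^j)).filter (fun m : ℕ =>
          |Real.cos (4 * g * Real.sqrt m - Real.pi / 4)| ≤ (m:ℝ) ^ (-(1/4:ℝ)+δ))).card : ℝ) := by
          exact_mod_cast hstep2
      _ ≤ 1 + ∑ j ∈ Finset.range (J+1), (23 + 6*g + 30/g) * r ^ j := by
          exact add_le_add_right (Finset.sum_le_sum hdyad) 1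
      _ = 1 + (23 + 6*g + 30/g) * ∑ j ∈ Finset.range (J+1), r ^ j := by
          rw [← Finset.mul_sum]
      _ ≤ 1 + (23 + 6*g + 30/g) * (4 * ((N':ℕ):ℝ) ^ s) := by
          have := mul_le_mul_of_nonneg_left hgeom hCg.le
          linarith
  have hrest : 5 * ((BadM.card : ℕ) : ℝ) ≤ (15 + 60*(23 + 6*g + 30/g)) * (N:ℝ) ^ s := by
    calc 5 * ((BadM.card : ℕ) : ℝ)
        ≤ 5 * (1 + (23 + 6*g + 30/g) * (4 * ((N':ℕ):ℝ) ^ s)) := by linarith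
      _ ≤ 5 * (1 + (23 + 6*g + 30/g) * (4 * (3 * (N:ℝ) ^ s))) := by
          nlinarith [hN'N, hCg]
      _ ≤ (15 + 60*(23 + 6*g + 30/g)) * (N:ℝ) ^ s := by nlinarith [hNs1, hCg]
  have hcount : ∀ S : Finset ℕ, S ⊆ BadM.biUnion (fun m => Finset.Icc (m - 2) (m + 2)) →
      (S.card : ℝ) ≤ 5 * ((BadM.card : ℕ) : ℝ) := by
    intro S hS
    have h1 : S.card ≤ 5 * BadM.card := by
      refine le_trans (Finset.card_le_card hS) ?_
      calc (BadM.biUnion (fun m => Finset.Icc (m - 2) (m + 2))).card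
          ≤ ∑ m ∈ BadM, (Finset.Icc (m - 2) (m + 2)).card := Finset.card_biUnion_le
        _ ≤ ∑ m ∈ BadM, 5 := by
            apply Finset.sum_le_sum
            intro m _
            rw [Nat.card_Icc]
            omega
        _ = 5 * BadM.card := by rw [Finset.sum_const, smul_eq_mul, mul_comm]
    exact_mod_cast h1
  refine le_trans (hcount _ ?_) hrest
  intro n hn
  simp only [Finset.mem_filter, Finset.mem_Icc] at hn
  obtain ⟨⟨hn1, hn2⟩, m, hm, hbad⟩ := hn
  have hm0 : m ≠ 0 := by
    intro h0
    rw [h0] at hbad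
    simp only [Nat.cast_zero, Real.sqrt_zero, mul_zero, zero_sub] at hbad
    rw [Real.zero_rpow (by intro h; linarith : -(1/4:ℝ) + δ ≠ 0)] at hbad
    have hc : Real.cos (-(Real.pi/4)) = Real.sqrt 2 / 2 := by
      rw [Real.cos_neg, Real.cos_pi_div_four]
    rw [hc] at hbad
    have h2 : (0:ℝ) < Real.sqrt 2 / 2 := by positivity
    rw [abs_of_pos h2] at hbad
    linarith
  rw [Finset.mem_biUnion]
  refine ⟨m, ?_, ?_⟩
  · rw [hBadM, Finset.mem_filter, Finset.mem_Icc]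
    refine ⟨⟨by omega, by omega⟩, hbad⟩
  · rw [Finset.mem_Icc]; omega
end
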